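/- arXiv:1507.00881 — 5 statements merged into one kernel-verified Lean document; each statement's English description precedes it below -/
import Mathlib

section
/- In the generalized Petersen graph GP(4k,2) with k ≥ 3, for every i with 0 ≤ i ≤ 4k−1 and every l with 3 ≤ l ≤ 2k−2, the vertices u_i and u_{i+2l−1} are mutually maximally distant. -/
/-- A vertex `w` strongly resolves vertices `u` and `v` in graph `G`:
`u` lies on a shortest `v`–`w` path or `v` lies on a shortest `u`–`w` path,
equivalently via distances. -/
def StronglyResolves {V : Type*} (G : SimpleGraph V) (w u v : V) : Prop :=
  G.dist w u = G.dist w v + G.dist v u ∨ G.dist w v = G.dist w u + G.dist u v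

/-- `S` is a strong resolving set of `G`. -/
def IsStrongResolvingSet {V : Type*} (G : SimpleGraph V) (S : Set V) : Prop :=
  ∀ u v : V, u ≠ v → ∃ w ∈ S, StronglyResolves G w u v

/-- The strong metric dimension: minimum cardinality of a strong resolving set. -/
noncomputable def sdim {V : Type*} (G : SimpleGraph V) : ℕ :=
  sInf {m : ℕ | ∃ S : Set V, IsStrongResolvingSet G S ∧ S.ncard = m}

/-- Mutually maximally distant vertices. -/
def MutuallyMaximallyDistant {V : Type*} (G : SimpleGraph V) (u v : V) : Prop :=
  u ≠ v ∧ (∀ w : V, G.Adj u w → G.dist w v ≤ G.dist u v) ∧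
    (∀ w : V, G.Adj v w → G.dist u w ≤ G.dist u v)

/-- The generalized Petersen graph `GP n k`, with outer vertices `Sum.inl i` (the `uᵢ`)
and inner vertices `Sum.inr i` (the `vᵢ`), indices in `ZMod n`. -/
def GP (n k : ℕ) : SimpleGraph (ZMod n ⊕ ZMod n) where
  Adj x y := match x, y with
    | Sum.inl i, Sum.inl j => i ≠ j ∧ (j = i + 1 ∨ i = j + 1)
    | Sum.inl i, Sum.inr j => i = j
    | Sum.inr i, Sum.inl j => i = j
    | Sum.inr i, Sum.inr j => i ≠ j ∧ (j = i + (k : ZMod n) ∨ i = j + (k : ZMod n))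
  symm := ⟨by rintro (i|i) (j|j) h <;> simp_all <;> tauto⟩
  loopless := ⟨by rintro (i|i) h <;> simp_all⟩

open SimpleGraph Sum

private lemma GP_adj_ll {n m : ℕ} {i j : ZMod n} :
    (GP n m).Adj (inl i) (inl j) ↔ i ≠ j ∧ (j = i + 1 ∨ i = j + 1) := Iff.rfl
private lemma GP_adj_lr {n m : ℕ} {i j : ZMod n} :
    (GP n m).Adj (inl i) (inr j) ↔ i = j := Iff.rfl
private lemma GP_adj_rl {n m : ℕ} {i j : ZMod n} :
    (GP n m).Adj (inr i) (inl j) ↔ i = j := Iff.rfl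
private lemma GP_adj_rr {n m : ℕ} {i j : ZMod n} :
    (GP n m).Adj (inr i) (inr j) ↔ i ≠ j ∧ (j = i + (m : ZMod n) ∨ i = j + (m : ZMod n)) := Iff.rfl

private def posZ {n : ℕ} : ZMod n ⊕ ZMod n → ZMod n := Sum.elim id id
private def sdN {n : ℕ} : ZMod n ⊕ ZMod n → ℕ := fun x => if x.isLeft then 1 else 0

@[simp] private lemma posZ_inl {n : ℕ} (i : ZMod n) : posZ (inl i) = i := rfl
@[simp] private lemma posZ_inr {n : ℕ} (i : ZMod n) : posZ (inr i) = i := rfl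
@[simp] private lemma sdN_inl {n : ℕ} (i : ZMod n) : sdN (inl i) = 1 := rfl
@[simp] private lemma sdN_inr {n : ℕ} (i : ZMod n) : sdN (inr i) = 0 := rfl

private lemma walk_bound {n : ℕ} {x y : ZMod n ⊕ ZMod n} (p : (GP n 2).Walk x y) :
    ∃ (A B : ℤ) (s : ℕ),
      ((A + 2*B : ℤ) : ZMod n) = posZ y - posZ x ∧
      A.natAbs + B.natAbs + s ≤ p.length ∧
      (s + sdN x + sdN y) % 2 = 0 ∧
      (B ≠ 0 → sdN x + sdN y ≤ s) := by
  induction p with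
  | nil =>
    refine ⟨0, 0, 0, by simp, by simp, ?_, by simp⟩
    rename_i z
    rcases z with i | i <;> simp
  | @cons u v w h q ih =>
    obtain ⟨A, B, s, h1, h2, h3, h4⟩ := ih
    rw [Walk.length_cons]
    rcases u with i | i <;> rcases v with j | j
    · rw [GP_adj_ll] at h
      obtain ⟨hne, hj | hj⟩ := h
      · subst hj
        refine ⟨A + 1, B, s, ?_, ?_, ?_, ?_⟩
        · simp only [posZ_inl] at h1 ⊢
          push_cast at h1 ⊢
          linear_combination h1
        · have := Int.natAbs_add_le A 1
          simp only [Int.natAbs_one] at this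
          omega
        · simpa using h3
        · intro hB; simpa using h4 hB
      · subst hj
        refine ⟨A - 1, B, s, ?_, ?_, ?_, ?_⟩
        · simp only [posZ_inl] at h1 ⊢
          push_cast at h1 ⊢
          linear_combination h1
        · have := Int.natAbs_sub_le A 1
          simp only [Int.natAbs_one] at this
          omega
        · simpa using h3
        · intro hB; simpa using h4 hB
    · rw [GP_adj_lr] at h
      subst h
      refine ⟨A, B, s + 1, ?_, ?_, ?_, ?_⟩
      · simpa using h1
      · omega
      · simp only [sdN_inl, sdN_inr] at h3 ⊢
        omega
      · intro hB
        rcases w with y | y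
        · simp only [sdN_inl, sdN_inr] at h3 ⊢
          omega
        · simp only [sdN_inl, sdN_inr]
          omega
    · rw [GP_adj_rl] at h
      subst h
      refine ⟨A, B, s + 1, ?_, ?_, ?_, ?_⟩
      · simpa using h1
      · omega
      · simp only [sdN_inl, sdN_inr] at h3 ⊢
        omega
      · intro hB
        rcases w with y | y <;> simp only [sdN_inl, sdN_inr] <;> omega
    · rw [GP_adj_rr] at h
      obtain ⟨hne, hj | hj⟩ := h
      · subst hj
        refine ⟨A, B + 1, s, ?_, ?_, ?_, ?_⟩
        · simp only [posZ_inr] at h1 ⊢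
          push_cast at h1 ⊢
          linear_combination h1
        · have := Int.natAbs_add_le B 1
          simp only [Int.natAbs_one] at this
          omega
        · simpa using h3
        · intro hB
          rcases w with y | y
          · simp only [sdN_inl, sdN_inr] at h3 ⊢
            omega
          · simp only [sdN_inl, sdN_inr]
            omega
      · subst hj
        refine ⟨A, B - 1, s, ?_, ?_, ?_, ?_⟩
        · simp only [posZ_inr] at h1 ⊢
          push_cast at h1 ⊢
          linear_combination h1
        · have := Int.natAbs_sub_le B 1
          simp only [Int.natAbs_one] at this
          omega
        · simpa using h3
        · intro hB
          rcases w with y | y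
          · simp only [sdN_inl, sdN_inr] at h3 ⊢
            omega
          · simp only [sdN_inl, sdN_inr]
            omega

section Helpers
open SimpleGraph Sum
variable {k : ℕ}

private lemma adj_spoke (i : ZMod (4*k)) : (GP (4*k) 2).Adj (inl i) (inr i) :=
  GP_adj_lr.mpr rfl

private lemma adj_out (hk : 3 ≤ k) (i : ZMod (4*k)) :
    (GP (4*k) 2).Adj (inl i) (inl (i + 1)) := by
  rw [GP_adj_ll]
  refine ⟨fun hE => ?_, Or.inl rfl⟩
  have h1 : ((1:ℕ) : ZMod (4*k)) = 0 := by
    have := left_eq_add.mp hE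
    exact_mod_cast this
  haveI : NeZero (4*k) := ⟨by omega⟩
  rw [ZMod.natCast_eq_zero_iff] at h1
  have := Nat.le_of_dvd one_pos h1
  omega

private lemma adj_in (hk : 3 ≤ k) (i : ZMod (4*k)) :
    (GP (4*k) 2).Adj (inr i) (inr (i + ((2:ℕ) : ZMod (4*k)))) := by
  rw [GP_adj_rr]
  refine ⟨fun hE => ?_, Or.inl rfl⟩
  have h1 : ((2:ℕ) : ZMod (4*k)) = 0 := left_eq_add.mp hE
  haveI : NeZero (4*k) := ⟨by omega⟩
  rw [ZMod.natCast_eq_zero_iff] at h1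
  have := Nat.le_of_dvd (by norm_num) h1
  omega

private lemma reach_out (hk : 3 ≤ k) (c : ZMod (4*k)) (m : ℕ) :
    (GP (4*k) 2).Reachable (inl c) (inl (c + (m : ZMod (4*k)))) := by
  induction m with
  | zero => simpa using Reachable.refl (G := GP (4*k) 2) (inl c)
  | succ m ih =>
    have hco : ((m+1 : ℕ) : ZMod (4*k)) = (m : ZMod (4*k)) + 1 := by push_cast; ring
    rw [hco, ← add_assoc]
    exact ih.trans (adj_out hk (c + (m : ZMod (4*k)))).reachable

private lemma GP_conn (hk : 3 ≤ k) : (GP (4*k) 2).Connected := by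
  haveI : NeZero (4*k) := ⟨by omega⟩
  have hx : ∀ x : ZMod (4*k) ⊕ ZMod (4*k), (GP (4*k) 2).Reachable (inl 0) x := by
    rintro (i | i)
    · have := reach_out hk 0 i.val
      rwa [zero_add, ZMod.natCast_zmod_val] at this
    · have h1 := reach_out hk 0 i.val
      rw [zero_add, ZMod.natCast_zmod_val] at h1
      exact h1.trans (adj_spoke i).reachable
  haveI : Nonempty (ZMod (4*k) ⊕ ZMod (4*k)) := ⟨inl 0⟩
  exact ⟨fun x y => (hx x).symm.trans (hx y)⟩

private lemma adj_dist {x y : ZMod (4*k) ⊕ ZMod (4*k)} (h : (GP (4*k) 2).Adj x y) :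
    (GP (4*k) 2).dist x y ≤ 1 := by
  simpa using SimpleGraph.dist_le h.toWalk

private lemma dist_in (hk : 3 ≤ k) (c : ZMod (4*k)) (m : ℕ) :
    (GP (4*k) 2).dist (inr c) (inr (c + ((2*m : ℕ) : ZMod (4*k)))) ≤ m := by
  induction m with
  | zero => simp
  | succ m ih =>
    have hco : ((2*(m+1) : ℕ) : ZMod (4*k)) = ((2*m : ℕ) : ZMod (4*k)) + ((2:ℕ) : ZMod (4*k)) := by
      push_cast; ring
    rw [hco, ← add_assoc]
    have h2 := adj_dist (adj_in hk (c + ((2*m : ℕ) : ZMod (4*k))))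
    have htr := (GP_conn hk).dist_triangle (u := (inr c : ZMod (4*k) ⊕ ZMod (4*k)))
      (v := inr (c + ((2*m : ℕ) : ZMod (4*k))))
      (w := inr (c + ((2*m : ℕ) : ZMod (4*k)) + ((2:ℕ) : ZMod (4*k))))
    omega

private lemma dist_out (hk : 3 ≤ k) (c : ZMod (4*k)) (m : ℕ) :
    (GP (4*k) 2).dist (inl c) (inl (c + (m : ZMod (4*k)))) ≤ m := by
  induction m with
  | zero => simp
  | succ m ih =>
    have hco : ((m+1 : ℕ) : ZMod (4*k)) = (m : ZMod (4*k)) + 1 := by push_cast; ring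
    rw [hco, ← add_assoc]
    have h2 := adj_dist (adj_out hk (c + (m : ZMod (4*k))))
    have htr := (GP_conn hk).dist_triangle (u := (inl c : ZMod (4*k) ⊕ ZMod (4*k)))
      (v := inl (c + (m : ZMod (4*k)))) (w := inl (c + (m : ZMod (4*k)) + 1))
    omega
end Helpers

section Helpers2
open SimpleGraph Sum
variable {k : ℕ}

private lemma H1 (hk : 3 ≤ k) (c : ZMod (4*k)) (m : ℕ) :
    (GP (4*k) 2).dist (inl c) (inl (c + ((2*m : ℕ) : ZMod (4*k)))) ≤ m + 2 := by
  have t1 := adj_dist (adj_spoke c)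
  have t2 := dist_in hk c m
  have t3 : (GP (4*k) 2).dist (inr (c + ((2*m : ℕ) : ZMod (4*k)))) (inl (c + ((2*m : ℕ) : ZMod (4*k)))) ≤ 1 := by
    rw [SimpleGraph.dist_comm]; exact adj_dist (adj_spoke _)
  have tr1 := (GP_conn hk).dist_triangle (u := (inl c : ZMod (4*k) ⊕ ZMod (4*k)))
    (v := inr c) (w := inl (c + ((2*m : ℕ) : ZMod (4*k))))
  have tr2 := (GP_conn hk).dist_triangle (u := (inr c : ZMod (4*k) ⊕ ZMod (4*k)))
    (v := inr (c + ((2*m : ℕ) : ZMod (4*k)))) (w := inl (c + ((2*m : ℕ) : ZMod (4*k))))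
  omega

private lemma H5 (hk : 3 ≤ k) (c : ZMod (4*k)) (m : ℕ) :
    (GP (4*k) 2).dist (inl c) (inr (c + ((2*m : ℕ) : ZMod (4*k)) + 1)) ≤ m + 2 := by
  have t1 := adj_dist (adj_out hk c)
  have t2 := adj_dist (adj_spoke (c + 1))
  have t3 := dist_in hk (c + 1) m
  rw [show c + 1 + ((2*m : ℕ) : ZMod (4*k)) = c + ((2*m : ℕ) : ZMod (4*k)) + 1 from by ring] at t3
  have tr1 := (GP_conn hk).dist_triangle (u := (inl c : ZMod (4*k) ⊕ ZMod (4*k)))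
    (v := inl (c + 1)) (w := inr (c + ((2*m : ℕ) : ZMod (4*k)) + 1))
  have tr2 := (GP_conn hk).dist_triangle (u := (inl (c+1) : ZMod (4*k) ⊕ ZMod (4*k)))
    (v := inr (c + 1)) (w := inr (c + ((2*m : ℕ) : ZMod (4*k)) + 1))
  omega

private lemma H4 (hk : 3 ≤ k) (c : ZMod (4*k)) (m : ℕ) :
    (GP (4*k) 2).dist (inr c) (inl (c + ((2*m : ℕ) : ZMod (4*k)) + 1)) ≤ m + 2 := by
  have t1 := dist_in hk c m
  have t2 : (GP (4*k) 2).dist (inr (c + ((2*m : ℕ) : ZMod (4*k)))) (inl (c + ((2*m : ℕ) : ZMod (4*k)))) ≤ 1 := by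
    rw [SimpleGraph.dist_comm]; exact adj_dist (adj_spoke _)
  have t3 := adj_dist (adj_out hk (c + ((2*m : ℕ) : ZMod (4*k))))
  have tr1 := (GP_conn hk).dist_triangle (u := (inr c : ZMod (4*k) ⊕ ZMod (4*k)))
    (v := inr (c + ((2*m : ℕ) : ZMod (4*k)))) (w := inl (c + ((2*m : ℕ) : ZMod (4*k)) + 1))
  have tr2 := (GP_conn hk).dist_triangle (u := (inr (c + ((2*m : ℕ) : ZMod (4*k))) : ZMod (4*k) ⊕ ZMod (4*k)))
    (v := inl (c + ((2*m : ℕ) : ZMod (4*k)))) (w := inl (c + ((2*m : ℕ) : ZMod (4*k)) + 1))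
  omega

private lemma H1' (hk : 3 ≤ k) (c : ZMod (4*k)) (m : ℕ) :
    (GP (4*k) 2).dist (inl c) (inl (c - ((2*m : ℕ) : ZMod (4*k)))) ≤ m + 2 := by
  have t := H1 hk (c - ((2*m : ℕ) : ZMod (4*k))) m
  rw [show c - ((2*m : ℕ) : ZMod (4*k)) + ((2*m : ℕ) : ZMod (4*k)) = c from by ring] at t
  rw [SimpleGraph.dist_comm]; exact t

private lemma H5' (hk : 3 ≤ k) (c : ZMod (4*k)) (m : ℕ) :
    (GP (4*k) 2).dist (inl c) (inr (c - ((2*m : ℕ) : ZMod (4*k)) - 1)) ≤ m + 2 := by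
  have t := H4 hk (c - ((2*m : ℕ) : ZMod (4*k)) - 1) m
  rw [show c - ((2*m : ℕ) : ZMod (4*k)) - 1 + ((2*m : ℕ) : ZMod (4*k)) + 1 = c from by ring] at t
  rw [SimpleGraph.dist_comm]; exact t

private lemma H4' (hk : 3 ≤ k) (c : ZMod (4*k)) (m : ℕ) :
    (GP (4*k) 2).dist (inr c) (inl (c - ((2*m : ℕ) : ZMod (4*k)) - 1)) ≤ m + 2 := by
  have t := H5 hk (c - ((2*m : ℕ) : ZMod (4*k)) - 1) m
  rw [show c - ((2*m : ℕ) : ZMod (4*k)) - 1 + ((2*m : ℕ) : ZMod (4*k)) + 1 = c from by ring] at t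
  rw [SimpleGraph.dist_comm]; exact t

private lemma keyA (n : ℕ) (X c Y : ℕ) (h : X + c = Y) :
    ((X : ℕ) : ZMod n) + ((c : ℕ) : ZMod n) = ((Y : ℕ) : ZMod n) := by
  rw [← Nat.cast_add, h]

private lemma keyB3 (k : ℕ) (X Z c d : ℕ) (h : X + Z + c = 4*k + d) :
    ((X : ℕ) : ZMod (4*k)) + ((Z : ℕ) : ZMod (4*k)) + ((c : ℕ) : ZMod (4*k))
      = ((d : ℕ) : ZMod (4*k)) := by
  rw [← Nat.cast_add, ← Nat.cast_add, h, Nat.cast_add, ZMod.natCast_self, zero_add]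

private lemma dist_lb (hk : 3 ≤ k) {l : ℕ} (hl3 : 3 ≤ l) (hl2 : l ≤ 2*k-2) (a : ZMod (4*k)) :
    min (l+2) (2*k-l+3) ≤ (GP (4*k) 2).dist (inl a) (inl (a + ((2*l-1 : ℕ) : ZMod (4*k)))) := by
  obtain ⟨p, hp⟩ := (GP_conn hk).exists_walk_length_eq_dist (inl a)
    (inl (a + ((2*l-1 : ℕ) : ZMod (4*k))))
  obtain ⟨A, B, s, h1, h2, h3, h4⟩ := walk_bound p
  rw [hp] at h2
  simp only [posZ_inl] at h1
  rw [add_sub_cancel_left] at h1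
  have hz : ((A + 2*B - ((2*l-1 : ℕ) : ℤ) : ℤ) : ZMod (4*k)) = 0 := by
    push_cast
    push_cast at h1
    rw [h1]; ring
  rw [ZMod.intCast_zmod_eq_zero_iff_dvd] at hz
  obtain ⟨m, hm⟩ := hz
  have hC : ((2*l-1 : ℕ) : ℤ) = 2*(l:ℤ) - 1 := by
    have h' : (2*l-1 : ℕ) + 1 = 2*l := by omega
    have h'' := congrArg (fun t : ℕ => (t : ℤ)) h'
    push_cast at h''
    omega
  have h4k : ((4*k : ℕ) : ℤ) = 4*(k:ℤ) := by push_cast; ring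
  rw [hC, h4k] at hm
  have hA1 : A ≤ (A.natAbs : ℤ) := Int.le_natAbs
  have hA2 : -(A.natAbs : ℤ) ≤ A := by
    have := Int.le_natAbs (a := -A)
    rw [Int.natAbs_neg] at this
    omega
  have hB1 : B ≤ (B.natAbs : ℤ) := Int.le_natAbs
  have hB2 : -(B.natAbs : ℤ) ≤ B := by
    have := Int.le_natAbs (a := -B)
    rw [Int.natAbs_neg] at this
    omega
  have hdisj : (2*(l:ℤ)-1) ≤ A + 2*B ∨ A + 2*B ≤ (2*(l:ℤ)-1) - 4*(k:ℤ) := by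
    rcases le_or_gt 0 m with hm0 | hm0
    · left
      have hpos : 0 ≤ 4*(k:ℤ) * m := mul_nonneg (by positivity) hm0
      linarith
    · right
      have : 4*(k:ℤ) * m ≤ 4*(k:ℤ) * (-1) :=
        mul_le_mul_of_nonneg_left (by omega) (by positivity)
      linarith
  rcases eq_or_ne B 0 with hB | hB
  · subst hB
    simp only [Int.natAbs_zero] at h2
    omega
  · have hs2 : 2 ≤ s := by simpa using h4 hB
    have hm2 : A + 2*B - (2*(l:ℤ)-1) = 2*(2*(k:ℤ)*m) := by linarith [hm]
    omega
end Helpers2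


/-- In `GP (4k) 2` with `k ≥ 3`, for `0 ≤ i ≤ 4k−1` and `3 ≤ l ≤ 2k−2`, the vertices
`uᵢ` and `u_{i+2l−1}` are mutually maximally distant. -/
theorem stmt_10 (k : ℕ) (hk : 3 ≤ k) :
    ∀ i l : ℕ, i ≤ 4*k - 1 → 3 ≤ l → l ≤ 2*k - 2 →
      MutuallyMaximallyDistant (GP (4*k) 2) (Sum.inl ((i : ℕ) : ZMod (4*k)))
        (Sum.inl ((i + 2*l - 1 : ℕ) : ZMod (4*k))) := by
  intro i l hi hl3 hl2
  haveI : NeZero (4*k) := ⟨by omega⟩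
  have hb : ((i + 2*l - 1 : ℕ) : ZMod (4*k))
      = ((i : ℕ) : ZMod (4*k)) + ((2*l - 1 : ℕ) : ZMod (4*k)) := by
    rw [← Nat.cast_add]; congr 1; omega
  rw [hb]
  generalize ((i : ℕ) : ZMod (4*k)) = a
  have hD := dist_lb hk hl3 hl2 a
  refine ⟨?_, ?_, ?_⟩
  · intro hEq
    have h' : a = a + ((2*l-1 : ℕ) : ZMod (4*k)) := by injection hEq
    have h0 : ((2*l-1 : ℕ) : ZMod (4*k)) = 0 := left_eq_add.mp h'
    rw [ZMod.natCast_eq_zero_iff] at h0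
    have := Nat.le_of_dvd (by omega) h0
    omega
  · intro w hw
    rcases w with j | j
    · rw [GP_adj_ll] at hw
      obtain ⟨hne, hj | hj⟩ := hw
      · subst hj
        have e1 := H1 hk (a+1) (l-1)
        rw [show (a+1) + ((2*(l-1) : ℕ) : ZMod (4*k)) = a + ((2*l-1 : ℕ) : ZMod (4*k)) from by
          linear_combination keyA (4*k) (2*(l-1)) 1 (2*l-1) (by omega)] at e1
        have e2 := H1' hk (a+1) (2*k-l+1)
        rw [show (a+1) - ((2*(2*k-l+1) : ℕ) : ZMod (4*k)) = a + ((2*l-1 : ℕ) : ZMod (4*k)) from by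
          linear_combination - keyB3 k (2*(2*k-l+1)) (2*l-1) 0 1 (by omega)] at e2
        omega
      · subst hj
        have e1 := H1 hk j l
        rw [show j + ((2*l : ℕ) : ZMod (4*k)) = (j+1) + ((2*l-1 : ℕ) : ZMod (4*k)) from by
          linear_combination - keyA (4*k) (2*l-1) 1 (2*l) (by omega)] at e1
        have e2 := H1' hk j (2*k-l)
        rw [show j - ((2*(2*k-l) : ℕ) : ZMod (4*k)) = (j+1) + ((2*l-1 : ℕ) : ZMod (4*k)) from by
          linear_combination - keyB3 k (2*(2*k-l)) (2*l-1) 1 0 (by omega)] at e2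
        omega
    · rw [GP_adj_lr] at hw
      subst hw
      have e1 := H4 hk a (l-1)
      rw [show a + ((2*(l-1) : ℕ) : ZMod (4*k)) + 1 = a + ((2*l-1 : ℕ) : ZMod (4*k)) from by
        linear_combination keyA (4*k) (2*(l-1)) 1 (2*l-1) (by omega)] at e1
      have e2 := H4' hk a (2*k-l)
      rw [show a - ((2*(2*k-l) : ℕ) : ZMod (4*k)) - 1 = a + ((2*l-1 : ℕ) : ZMod (4*k)) from by
        linear_combination - keyB3 k (2*(2*k-l)) (2*l-1) 1 0 (by omega)] at e2
      omega
  · intro w hw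
    rcases w with j | j
    · rw [GP_adj_ll] at hw
      obtain ⟨hne, hj | hj⟩ := hw
      · subst hj
        have e1 := H1 hk a l
        rw [show a + ((2*l : ℕ) : ZMod (4*k)) = a + ((2*l-1 : ℕ) : ZMod (4*k)) + 1 from by
          linear_combination - keyA (4*k) (2*l-1) 1 (2*l) (by omega)] at e1
        have e2 := H1' hk a (2*k-l)
        rw [show a - ((2*(2*k-l) : ℕ) : ZMod (4*k)) = a + ((2*l-1 : ℕ) : ZMod (4*k)) + 1 from by
          linear_combination - keyB3 k (2*(2*k-l)) (2*l-1) 1 0 (by omega)] at e2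
        omega
      · have hj' : j = a + ((2*l-1 : ℕ) : ZMod (4*k)) - 1 := by linear_combination - hj
        subst hj'
        have e1 := H1 hk a (l-1)
        rw [show a + ((2*(l-1) : ℕ) : ZMod (4*k)) = a + ((2*l-1 : ℕ) : ZMod (4*k)) - 1 from by
          linear_combination keyA (4*k) (2*(l-1)) 1 (2*l-1) (by omega)] at e1
        have e2 := H1' hk a (2*k-l+1)
        rw [show a - ((2*(2*k-l+1) : ℕ) : ZMod (4*k)) = a + ((2*l-1 : ℕ) : ZMod (4*k)) - 1 from by
          linear_combination - keyB3 k (2*(2*k-l+1)) (2*l-1) 0 1 (by omega)] at e2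
        omega
    · rw [GP_adj_lr] at hw
      rw [← hw]
      have e1 := H5 hk a (l-1)
      rw [show a + ((2*(l-1) : ℕ) : ZMod (4*k)) + 1 = a + ((2*l-1 : ℕ) : ZMod (4*k)) from by
        linear_combination keyA (4*k) (2*(l-1)) 1 (2*l-1) (by omega)] at e1
      have e2 := H5' hk a (2*k-l)
      rw [show a - ((2*(2*k-l) : ℕ) : ZMod (4*k)) - 1 = a + ((2*l-1 : ℕ) : ZMod (4*k)) from by
        linear_combination - keyB3 k (2*(2*k-l)) (2*l-1) 1 0 (by omega)] at e2
      omega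
end

section
/- For every k ≥ 10, any strong resolving set S of the generalized Petersen graph GP(4k,2) contains at least 2k of the vertices v_0, …, v_{4k−1}. -/
/-! ### Auxiliary lemmas -/

set_option linter.unusedSectionVars false

lemma GPaux.mod_split {a c n : ℕ} (ha : a < n) (hc : c < n) :
    (a + c) % n = if a + c < n then a + c else a + c - n := by
  split_ifs with h
  · exact Nat.mod_eq_of_lt h
  · rw [Nat.mod_eq_sub_mod (by omega)]; exact Nat.mod_eq_of_lt (by omega)

lemma GPaux.zval_add {n : ℕ} [NeZero n] (i : ZMod n) (c : ℕ) (hc : c < n) :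
    (i + (c : ZMod n)).val = if i.val + c < n then i.val + c else i.val + c - n := by
  rw [ZMod.val_add, ZMod.val_cast_of_lt hc, GPaux.mod_split i.val_lt hc]

/-- 1-Lipschitz potential function, equal to the distance from `v₀`. -/
def GPaux.phi (k : ℕ) : ZMod (4*k) ⊕ ZMod (4*k) → ℕ
  | Sum.inl i => if (min i.val (4*k - i.val)) % 2 = 0 then (min i.val (4*k - i.val)) / 2 + 1
      else (min i.val (4*k - i.val) + 3) / 2
  | Sum.inr i => if (min i.val (4*k - i.val)) % 2 = 0 then (min i.val (4*k - i.val)) / 2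
      else (min i.val (4*k - i.val) + 5) / 2

namespace GPaux

variable {k : ℕ} (hk : 10 ≤ k)
include hk

lemma phi_lip {x y : ZMod (4*k) ⊕ ZMod (4*k)}
    (h : (GP (4*k) 2).Adj x y) : phi k x ≤ phi k y + 1 := by
  haveI : NeZero (4*k) := ⟨by omega⟩
  obtain x | x := x <;> obtain y | y := y
  · obtain ⟨hne, h | h⟩ := h
    · have hv : y.val = if x.val + 1 < 4*k then x.val + 1 else x.val + 1 - 4*k := by
        rw [h, ← zval_add x 1 (by omega)]; norm_num
      have h1 := x.val_lt; have h2 := y.val_lt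
      simp only [phi]; split_ifs at hv ⊢ <;> omega
    · have hv : x.val = if y.val + 1 < 4*k then y.val + 1 else y.val + 1 - 4*k := by
        rw [h, ← zval_add y 1 (by omega)]; norm_num
      have h1 := x.val_lt; have h2 := y.val_lt
      simp only [phi]; split_ifs at hv ⊢ <;> omega
  · have hxy : x = y := h
    subst hxy
    have h1 := x.val_lt
    simp only [phi]; split_ifs <;> omega
  · have hxy : x = y := h
    subst hxy
    have h1 := x.val_lt
    simp only [phi]; split_ifs <;> omega
  · obtain ⟨hne, h | h⟩ := h
    · have hv : y.val = if x.val + 2 < 4*k then x.val + 2 else x.val + 2 - 4*k := by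
        rw [h, zval_add x 2 (by omega)]
      have h1 := x.val_lt; have h2 := y.val_lt
      simp only [phi]; split_ifs at hv ⊢ <;> omega
    · have hv : x.val = if y.val + 2 < 4*k then y.val + 2 else y.val + 2 - 4*k := by
        rw [h, zval_add y 2 (by omega)]
      have h1 := x.val_lt; have h2 := y.val_lt
      simp only [phi]; split_ifs at hv ⊢ <;> omega

/-- outer vertex with natural index -/
abbrev uu (k : ℕ) (m : ℕ) : ZMod (4*k) ⊕ ZMod (4*k) := Sum.inl (m : ZMod (4*k))
/-- inner vertex with natural index -/
abbrev vv (k : ℕ) (m : ℕ) : ZMod (4*k) ⊕ ZMod (4*k) := Sum.inr (m : ZMod (4*k))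

lemma adj_uu (m : ℕ) : (GP (4*k) 2).Adj (uu k m) (uu k (m+1)) := by
  refine ⟨?_, Or.inl (by push_cast; ring)⟩
  intro h
  haveI : NeZero (4*k) := ⟨by omega⟩
  have h1 : (1 : ZMod (4*k)) = 0 := by
    have := congrArg (fun z => z - (m : ZMod (4*k))) h
    simpa using this.symm
  rw [show (1 : ZMod (4*k)) = ((1:ℕ) : ZMod (4*k)) by norm_num] at h1
  have := congrArg ZMod.val h1
  rw [ZMod.val_cast_of_lt (show 1 < 4*k by omega), ZMod.val_zero] at this
  omega

lemma adj_uv (m : ℕ) : (GP (4*k) 2).Adj (uu k m) (vv k m) := rfl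

lemma adj_vv (m : ℕ) : (GP (4*k) 2).Adj (vv k m) (vv k (m+2)) := by
  refine ⟨?_, Or.inl (by push_cast; ring)⟩
  intro h
  haveI : NeZero (4*k) := ⟨by omega⟩
  have h1 : ((2:ℕ) : ZMod (4*k)) = 0 := by
    have := congrArg (fun z => z - (m : ZMod (4*k))) h
    push_cast at this ⊢
    simpa [add_comm] using this.symm
  have := congrArg ZMod.val h1
  rw [ZMod.val_cast_of_lt (show 2 < 4*k by omega), ZMod.val_zero] at this
  omega

lemma vv_eq {a b : ℕ} (h : a % (4*k) = b % (4*k)) : vv k a = vv k b :=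
  congrArg Sum.inr ((ZMod.natCast_eq_natCast_iff' a b (4*k)).mpr h)

lemma uu_eq {a b : ℕ} (h : a % (4*k) = b % (4*k)) : uu k a = uu k b :=
  congrArg Sum.inl ((ZMod.natCast_eq_natCast_iff' a b (4*k)).mpr h)

lemma gp_conn : (GP (4*k) 2).Connected := by
  haveI : NeZero (4*k) := ⟨by omega⟩
  rw [SimpleGraph.connected_iff]
  refine ⟨?_, ⟨Sum.inl 0⟩⟩
  have key : ∀ m : ℕ, (GP (4*k) 2).Reachable (uu k 0) (uu k m) := by
    intro m
    induction m with
    | zero => exact SimpleGraph.Reachable.refl _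
    | succ m ih => exact ih.trans (adj_uu hk m).reachable
  have all : ∀ x : ZMod (4*k) ⊕ ZMod (4*k), (GP (4*k) 2).Reachable (uu k 0) x := by
    intro x
    obtain i | i := x
    · have : (Sum.inl i : ZMod (4*k) ⊕ ZMod (4*k)) = uu k i.val := by
        simp [uu, ZMod.natCast_val, ZMod.cast_id]
      rw [this]; exact key i.val
    · have : (Sum.inr i : ZMod (4*k) ⊕ ZMod (4*k)) = vv k i.val := by
        simp [vv, ZMod.natCast_val, ZMod.cast_id]
      rw [this]
      exact (key i.val).trans (adj_uv hk i.val).reachable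
  intro x y
  exact (all x).symm.trans (all y)

lemma dist_adj {x y : ZMod (4*k) ⊕ ZMod (4*k)} (h : (GP (4*k) 2).Adj x y) :
    (GP (4*k) 2).dist x y ≤ 1 := by
  have := SimpleGraph.dist_le (SimpleGraph.Walk.cons h SimpleGraph.Walk.nil)
  simpa using this

lemma dist_vv_run (a m : ℕ) :
    (GP (4*k) 2).dist (vv k a) (vv k (a + 2*m)) ≤ m := by
  induction m with
  | zero => simp [SimpleGraph.dist_self]
  | succ m ih =>
    have tri := (gp_conn hk).dist_triangle (u := vv k a) (v := vv k (a + 2*m))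
      (w := vv k (a + 2*(m+1)))
    have step : (GP (4*k) 2).dist (vv k (a + 2*m)) (vv k (a + 2*(m+1))) ≤ 1 := by
      have h2 : a + 2*(m+1) = (a + 2*m) + 2 := by ring
      rw [h2]
      exact dist_adj hk (adj_vv hk (a + 2*m))
    omega

/-! ### Lower bound via the potential -/

lemma phi_walk {x y : ZMod (4*k) ⊕ ZMod (4*k)} (w : (GP (4*k) 2).Walk x y) :
    phi k y ≤ phi k x + w.length := by
  induction w with
  | nil => simp
  | cons h p ih =>
    have h1 := phi_lip hk h.symm
    simp only [SimpleGraph.Walk.length_cons]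
    omega

lemma phi_le_dist (x : ZMod (4*k) ⊕ ZMod (4*k)) :
    phi k x ≤ (GP (4*k) 2).dist (vv k 0) x := by
  obtain ⟨p, hp⟩ := (gp_conn hk).exists_walk_length_eq_dist (vv k 0) x
  have h1 := phi_walk hk p
  have h0 : phi k (vv k 0) = 0 := by
    haveI : NeZero (4*k) := ⟨by omega⟩
    simp [phi, vv]
  omega

lemma dist_uv_lower : k + 2 ≤ (GP (4*k) 2).dist (vv k 0) (vv k (2*k+1)) := by
  have h1 := phi_le_dist hk (vv k (2*k+1))
  have h2 : phi k (vv k (2*k+1)) = k + 2 := by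
    simp only [phi, vv]
    rw [ZMod.val_cast_of_lt (show 2*k+1 < 4*k by omega)]
    split_ifs <;> omega
  omega

/-! ### Upper bounds on neighbour distances -/

lemma d_0_2k2 : (GP (4*k) 2).dist (vv k 0) (vv k (2*k+2)) ≤ k-1 := by
  have h := dist_vv_run hk (2*k+2) (k-1)
  rw [show (2*k+2) + 2*(k-1) = 4*k by omega,
    vv_eq hk (show (4*k) % (4*k) = 0 % (4*k) by simp)] at h
  rwa [SimpleGraph.dist_comm] at h

lemma d_0_u2k1 : (GP (4*k) 2).dist (vv k 0) (uu k (2*k+1)) ≤ k+1 := by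
  have t1 := (gp_conn hk).dist_triangle (u := vv k 0) (v := vv k (2*k+2)) (w := uu k (2*k+2))
  have t2 := (gp_conn hk).dist_triangle (u := vv k 0) (v := uu k (2*k+2)) (w := uu k (2*k+1))
  have h1 := d_0_2k2 hk
  have h2 : (GP (4*k) 2).dist (vv k (2*k+2)) (uu k (2*k+2)) ≤ 1 :=
    dist_adj hk (adj_uv hk (2*k+2)).symm
  have h3 : (GP (4*k) 2).dist (uu k (2*k+2)) (uu k (2*k+1)) ≤ 1 := by
    rw [SimpleGraph.dist_comm]; exact dist_adj hk (adj_uu hk (2*k+1))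
  omega

lemma d_0_2k3 : (GP (4*k) 2).dist (vv k 0) (vv k (2*k+3)) ≤ k+2 := by
  have t1 := (gp_conn hk).dist_triangle (u := vv k 0) (v := vv k (2*k+2)) (w := uu k (2*k+2))
  have t2 := (gp_conn hk).dist_triangle (u := vv k 0) (v := uu k (2*k+2)) (w := uu k (2*k+3))
  have t3 := (gp_conn hk).dist_triangle (u := vv k 0) (v := uu k (2*k+3)) (w := vv k (2*k+3))
  have h1 := d_0_2k2 hk
  have h2 : (GP (4*k) 2).dist (vv k (2*k+2)) (uu k (2*k+2)) ≤ 1 :=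
    dist_adj hk (adj_uv hk (2*k+2)).symm
  have h3 : (GP (4*k) 2).dist (uu k (2*k+2)) (uu k (2*k+3)) ≤ 1 := dist_adj hk (adj_uu hk (2*k+2))
  have h4 : (GP (4*k) 2).dist (uu k (2*k+3)) (vv k (2*k+3)) ≤ 1 := dist_adj hk (adj_uv hk (2*k+3))
  omega

lemma d_0_2km1 : (GP (4*k) 2).dist (vv k 0) (vv k (2*k-1)) ≤ k+2 := by
  have t1 := (gp_conn hk).dist_triangle (u := vv k 0) (v := vv k (2*k-2)) (w := uu k (2*k-2))
  have t2 := (gp_conn hk).dist_triangle (u := vv k 0) (v := uu k (2*k-2)) (w := uu k (2*k-1))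
  have t3 := (gp_conn hk).dist_triangle (u := vv k 0) (v := uu k (2*k-1)) (w := vv k (2*k-1))
  have h1 : (GP (4*k) 2).dist (vv k 0) (vv k (2*k-2)) ≤ k-1 := by
    have h := dist_vv_run hk 0 (k-1)
    rwa [show 0 + 2*(k-1) = 2*k-2 by omega] at h
  have h2 : (GP (4*k) 2).dist (vv k (2*k-2)) (uu k (2*k-2)) ≤ 1 :=
    dist_adj hk (adj_uv hk (2*k-2)).symm
  have h3 : (GP (4*k) 2).dist (uu k (2*k-2)) (uu k (2*k-1)) ≤ 1 := by
    have := dist_adj hk (adj_uu hk (2*k-2))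
    rwa [show 2*k-2+1 = 2*k-1 by omega] at this
  have h4 : (GP (4*k) 2).dist (uu k (2*k-1)) (vv k (2*k-1)) ≤ 1 := dist_adj hk (adj_uv hk (2*k-1))
  omega

lemma d_u0_v : (GP (4*k) 2).dist (uu k 0) (vv k (2*k+1)) ≤ k+1 := by
  have t1 := (gp_conn hk).dist_triangle (u := uu k 0) (v := uu k (4*k-1)) (w := vv k (4*k-1))
  have t2 := (gp_conn hk).dist_triangle (u := uu k 0) (v := vv k (4*k-1)) (w := vv k (2*k+1))
  have h1 : (GP (4*k) 2).dist (uu k 0) (uu k (4*k-1)) ≤ 1 := by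
    rw [SimpleGraph.dist_comm]
    have := dist_adj hk (adj_uu hk (4*k-1))
    rwa [show 4*k-1+1 = 4*k by omega,
      uu_eq hk (show (4*k) % (4*k) = 0 % (4*k) by simp)] at this
  have h2 : (GP (4*k) 2).dist (uu k (4*k-1)) (vv k (4*k-1)) ≤ 1 := dist_adj hk (adj_uv hk (4*k-1))
  have h3 : (GP (4*k) 2).dist (vv k (4*k-1)) (vv k (2*k+1)) ≤ k-1 := by
    have h := dist_vv_run hk (2*k+1) (k-1)
    rw [show (2*k+1) + 2*(k-1) = 4*k-1 by omega] at h
    rwa [SimpleGraph.dist_comm] at h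
  omega

lemma d_v2_v : (GP (4*k) 2).dist (vv k 2) (vv k (2*k+1)) ≤ k+2 := by
  have t1 := (gp_conn hk).dist_triangle (u := vv k 2) (v := uu k 2) (w := uu k 3)
  have t2 := (gp_conn hk).dist_triangle (u := vv k 2) (v := uu k 3) (w := vv k 3)
  have t3 := (gp_conn hk).dist_triangle (u := vv k 2) (v := vv k 3) (w := vv k (2*k+1))
  have h1 : (GP (4*k) 2).dist (vv k 2) (uu k 2) ≤ 1 := dist_adj hk (adj_uv hk 2).symm
  have h2 : (GP (4*k) 2).dist (uu k 2) (uu k 3) ≤ 1 := dist_adj hk (adj_uu hk 2)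
  have h3 : (GP (4*k) 2).dist (uu k 3) (vv k 3) ≤ 1 := dist_adj hk (adj_uv hk 3)
  have h4 : (GP (4*k) 2).dist (vv k 3) (vv k (2*k+1)) ≤ k-1 := by
    have h := dist_vv_run hk 3 (k-1)
    rwa [show 3 + 2*(k-1) = 2*k+1 by omega] at h
  omega

lemma d_vm2_v : (GP (4*k) 2).dist (vv k (4*k-2)) (vv k (2*k+1)) ≤ k+2 := by
  have t1 := (gp_conn hk).dist_triangle (u := vv k (4*k-2)) (v := uu k (4*k-2)) (w := uu k (4*k-1))
  have t2 := (gp_conn hk).dist_triangle (u := vv k (4*k-2)) (v := uu k (4*k-1)) (w := vv k (4*k-1))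
  have t3 := (gp_conn hk).dist_triangle (u := vv k (4*k-2)) (v := vv k (4*k-1)) (w := vv k (2*k+1))
  have h1 : (GP (4*k) 2).dist (vv k (4*k-2)) (uu k (4*k-2)) ≤ 1 :=
    dist_adj hk (adj_uv hk (4*k-2)).symm
  have h2 : (GP (4*k) 2).dist (uu k (4*k-2)) (uu k (4*k-1)) ≤ 1 := by
    have := dist_adj hk (adj_uu hk (4*k-2))
    rwa [show 4*k-2+1 = 4*k-1 by omega] at this
  have h3 : (GP (4*k) 2).dist (uu k (4*k-1)) (vv k (4*k-1)) ≤ 1 := dist_adj hk (adj_uv hk (4*k-1))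
  have h4 : (GP (4*k) 2).dist (vv k (4*k-1)) (vv k (2*k+1)) ≤ k-1 := by
    have h := dist_vv_run hk (2*k+1) (k-1)
    rw [show (2*k+1) + 2*(k-1) = 4*k-1 by omega] at h
    rwa [SimpleGraph.dist_comm] at h
  omega

/-! ### The base MMD pair -/

lemma mmd_base : MutuallyMaximallyDistant (GP (4*k) 2) (vv k 0) (vv k (2*k+1)) := by
  haveI : NeZero (4*k) := ⟨by omega⟩
  have hdist := dist_uv_lower hk
  refine ⟨?_, ?_, ?_⟩
  · intro h
    have h1 := Sum.inr.inj h
    have := congrArg ZMod.val h1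
    rw [ZMod.val_cast_of_lt (show 0 < 4*k by omega),
      ZMod.val_cast_of_lt (show 2*k+1 < 4*k by omega)] at this
    omega
  · -- neighbours of v₀
    intro w hw
    obtain j | j := w
    · have hj : ((0:ℕ) : ZMod (4*k)) = j := hw
      rw [← hj]
      exact le_trans (d_u0_v hk) (by omega)
    · obtain ⟨hne, h | h⟩ := hw
      · have hj : j = ((2:ℕ) : ZMod (4*k)) := by rw [h]; push_cast; ring
        rw [hj]
        exact le_trans (d_v2_v hk) (by omega)
      · have hj : j = ((4*k-2:ℕ) : ZMod (4*k)) := by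
          have h2 : ((4*k-2:ℕ) : ZMod (4*k)) + ((2:ℕ) : ZMod (4*k)) = ((0:ℕ) : ZMod (4*k)) := by
            rw [← Nat.cast_add, show 4*k-2+2 = 4*k by omega, Nat.cast_zero, ZMod.natCast_self]
          exact (add_right_cancel (h2.trans h)).symm
        rw [hj]
        exact le_trans (d_vm2_v hk) (by omega)
  · -- neighbours of v_{2k+1}
    intro w hw
    obtain j | j := w
    · have hj : ((2*k+1:ℕ) : ZMod (4*k)) = j := hw
      rw [← hj]
      exact le_trans (d_0_u2k1 hk) (by omega)
    · obtain ⟨hne, h | h⟩ := hw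
      · have hj : j = ((2*k+3:ℕ) : ZMod (4*k)) := by rw [h]; push_cast; ring
        rw [hj]
        exact le_trans (d_0_2k3 hk) (by omega)
      · have hj : j = ((2*k-1:ℕ) : ZMod (4*k)) := by
          have h2 : ((2*k-1:ℕ) : ZMod (4*k)) + ((2:ℕ) : ZMod (4*k)) = ((2*k+1:ℕ) : ZMod (4*k)) := by
            rw [← Nat.cast_add, show 2*k-1+2 = 2*k+1 by omega]
          exact (add_right_cancel (h2.trans h)).symm
        rw [hj]
        exact le_trans (d_0_2km1 hk) (by omega)

end GPaux

/-! ### Rotations -/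

def GPaux.rotHom {k : ℕ} (a : ZMod (4*k)) : GP (4*k) 2 →g GP (4*k) 2 where
  toFun := Sum.map (· + a) (· + a)
  map_rel' := by
    intro x y h
    obtain i|i := x <;> obtain j|j := y
    · obtain ⟨hne, hh | hh⟩ := h
      · exact ⟨by simpa using hne, Or.inl (by rw [hh]; ring)⟩
      · exact ⟨by simpa using hne, Or.inr (by rw [hh]; ring)⟩
    · exact congrArg (· + a) h
    · exact congrArg (· + a) h
    · obtain ⟨hne, hh | hh⟩ := h
      · exact ⟨by simpa using hne, Or.inl (by rw [hh]; ring)⟩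
      · exact ⟨by simpa using hne, Or.inr (by rw [hh]; ring)⟩

namespace GPaux

@[simp] lemma rotHom_inl {k : ℕ} (a i : ZMod (4*k)) :
    rotHom a (Sum.inl i) = Sum.inl (i + a) := rfl

@[simp] lemma rotHom_inr {k : ℕ} (a i : ZMod (4*k)) :
    rotHom a (Sum.inr i) = Sum.inr (i + a) := rfl

lemma rot_cancel {k : ℕ} (a : ZMod (4*k)) (x : ZMod (4*k) ⊕ ZMod (4*k)) :
    rotHom (-a) (rotHom a x) = x := by
  obtain i|i := x <;> simp

lemma rot_cancel' {k : ℕ} (a : ZMod (4*k)) (x : ZMod (4*k) ⊕ ZMod (4*k)) :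
    rotHom a (rotHom (-a) x) = x := by
  obtain i|i := x <;> simp

variable {k : ℕ} (hk : 10 ≤ k)
include hk

lemma dist_shift_le (a : ZMod (4*k)) (x y : ZMod (4*k) ⊕ ZMod (4*k)) :
    (GP (4*k) 2).dist (rotHom a x) (rotHom a y) ≤ (GP (4*k) 2).dist x y := by
  obtain ⟨p, hp⟩ := (gp_conn hk).exists_walk_length_eq_dist x y
  calc (GP (4*k) 2).dist (rotHom a x) (rotHom a y) ≤ (p.map (rotHom a)).length :=
        SimpleGraph.dist_le _
    _ = p.length := by simp
    _ = (GP (4*k) 2).dist x y := hp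

lemma dist_shift (a : ZMod (4*k)) (x y : ZMod (4*k) ⊕ ZMod (4*k)) :
    (GP (4*k) 2).dist (rotHom a x) (rotHom a y) = (GP (4*k) 2).dist x y := by
  refine le_antisymm (dist_shift_le hk a x y) ?_
  have h := dist_shift_le hk (-a) (rotHom a x) (rotHom a y)
  rwa [rot_cancel, rot_cancel] at h

lemma mmd_all (a : ZMod (4*k)) :
    MutuallyMaximallyDistant (GP (4*k) 2) (Sum.inr a)
      (Sum.inr (a + ((2*k+1:ℕ) : ZMod (4*k)))) := by
  haveI : NeZero (4*k) := ⟨by omega⟩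
  obtain ⟨hne, h1, h2⟩ := mmd_base hk
  have e0 : rotHom a (vv k 0) = Sum.inr a := by simp [vv]
  have ec : rotHom a (vv k (2*k+1)) = Sum.inr (a + ((2*k+1:ℕ) : ZMod (4*k))) := by
    simp [vv, add_comm]
  refine ⟨?_, ?_, ?_⟩
  · intro h
    have h3 := Sum.inr.inj h
    have h4 : ((2*k+1:ℕ) : ZMod (4*k)) = 0 := by
      have := (left_eq_add).mp h3
      exact this
    have := congrArg ZMod.val h4
    rw [ZMod.val_cast_of_lt (show 2*k+1 < 4*k by omega), ZMod.val_zero] at this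
    omega
  · intro w hw
    rw [← e0] at hw
    have hadj : (GP (4*k) 2).Adj (vv k 0) (rotHom (-a) w) := by
      have := (rotHom (-a)).map_adj hw
      rwa [rot_cancel] at this
    have hle := h1 (rotHom (-a) w) hadj
    calc (GP (4*k) 2).dist w (Sum.inr (a + ((2*k+1:ℕ) : ZMod (4*k))))
        = (GP (4*k) 2).dist (rotHom a (rotHom (-a) w)) (rotHom a (vv k (2*k+1))) := by
          rw [rot_cancel', ec]
      _ = (GP (4*k) 2).dist (rotHom (-a) w) (vv k (2*k+1)) := dist_shift hk a _ _
      _ ≤ (GP (4*k) 2).dist (vv k 0) (vv k (2*k+1)) := hle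
      _ = (GP (4*k) 2).dist (rotHom a (vv k 0)) (rotHom a (vv k (2*k+1))) :=
          (dist_shift hk a _ _).symm
      _ = (GP (4*k) 2).dist (Sum.inr a) (Sum.inr (a + ((2*k+1:ℕ) : ZMod (4*k)))) := by
          rw [e0, ec]
  · intro w hw
    rw [← ec] at hw
    have hadj : (GP (4*k) 2).Adj (vv k (2*k+1)) (rotHom (-a) w) := by
      have := (rotHom (-a)).map_adj hw
      rwa [rot_cancel] at this
    have hle := h2 (rotHom (-a) w) hadj
    calc (GP (4*k) 2).dist (Sum.inr a) w
        = (GP (4*k) 2).dist (rotHom a (vv k 0)) (rotHom a (rotHom (-a) w)) := by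
          rw [rot_cancel', e0]
      _ = (GP (4*k) 2).dist (vv k 0) (rotHom (-a) w) := dist_shift hk a _ _
      _ ≤ (GP (4*k) 2).dist (vv k 0) (vv k (2*k+1)) := hle
      _ = (GP (4*k) 2).dist (rotHom a (vv k 0)) (rotHom a (vv k (2*k+1))) :=
          (dist_shift hk a _ _).symm
      _ = (GP (4*k) 2).dist (Sum.inr a) (Sum.inr (a + ((2*k+1:ℕ) : ZMod (4*k)))) := by
          rw [e0, ec]

end GPaux

/-! ### MMD pairs and strong resolving sets -/

lemma GPaux.resolve_mmd {V : Type*} {G : SimpleGraph V} (hc : G.Connected)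
    {u v w : V} (h : MutuallyMaximallyDistant G u v) (hw : StronglyResolves G w u v) :
    w = u ∨ w = v := by
  obtain ⟨hne, h1, h2⟩ := h
  by_cases hwu : w = u
  · exact Or.inl hwu
  by_cases hwv : w = v
  · exact Or.inr hwv
  exfalso
  rcases hw with hcase | hcase
  · have hvw : v ≠ w := fun h => hwv h.symm
    obtain ⟨p, hp⟩ := hc.exists_walk_length_eq_dist v w
    cases p with
    | nil => exact hvw rfl
    | @cons _ x _ hadj q =>
      have hq : G.dist x w ≤ q.length := SimpleGraph.dist_le q
      have hlen : q.length + 1 = G.dist v w := by simpa using hp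
      have htri : G.dist u w ≤ G.dist u x + G.dist x w := hc.dist_triangle
      have hx := h2 x hadj
      have c1 : G.dist w u = G.dist u w := SimpleGraph.dist_comm
      have c2 : G.dist w v = G.dist v w := SimpleGraph.dist_comm
      have c3 : G.dist v u = G.dist u v := SimpleGraph.dist_comm
      omega
  · have huw : u ≠ w := fun h => hwu h.symm
    obtain ⟨p, hp⟩ := hc.exists_walk_length_eq_dist u w
    cases p with
    | nil => exact huw rfl
    | @cons _ x _ hadj q =>
      have hq : G.dist x w ≤ q.length := SimpleGraph.dist_le q
      have hlen : q.length + 1 = G.dist u w := by simpa using hp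
      have htri : G.dist v w ≤ G.dist v x + G.dist x w := hc.dist_triangle
      have hx := h1 x hadj
      have c1 : G.dist w u = G.dist u w := SimpleGraph.dist_comm
      have c2 : G.dist w v = G.dist v w := SimpleGraph.dist_comm
      have c3 : G.dist v x = G.dist x v := SimpleGraph.dist_comm
      omega


/-- For `k ≥ 10`, any strong resolving set of `GP (4k) 2` contains at least `2k`
of the inner vertices `v₀, …, v_{4k−1}`. -/
theorem stmt_11 (k : ℕ) (hk : 10 ≤ k) (S : Set (ZMod (4*k) ⊕ ZMod (4*k)))
    (hS : IsStrongResolvingSet (GP (4*k) 2) S) :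
    2*k ≤ (S ∩ Set.range (Sum.inr : ZMod (4*k) → ZMod (4*k) ⊕ ZMod (4*k))).ncard := by
  classical
  haveI : NeZero (4*k) := ⟨by omega⟩
  have hconn := GPaux.gp_conn hk
  set c : ZMod (4*k) := ((2*k+1 : ℕ) : ZMod (4*k)) with hc
  have key : ∀ i : ZMod (4*k), ∃ j : ZMod (4*k), Sum.inr j ∈ S ∧ (j = i ∨ j = i + c) := by
    intro i
    have hmmd := GPaux.mmd_all hk i
    obtain ⟨w, hwS, hres⟩ := hS _ _ hmmd.1
    rcases GPaux.resolve_mmd hconn hmmd hres with h | h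
    · exact ⟨i, h ▸ hwS, Or.inl rfl⟩
    · exact ⟨i + c, h ▸ hwS, Or.inr rfl⟩
  choose f hfS hf using key
  set T : Finset (ZMod (4*k)) := Finset.univ.filter (fun j => Sum.inr j ∈ S) with hT
  have hmaps : ∀ i ∈ (Finset.univ : Finset (ZMod (4*k))), f i ∈ T := by
    intro i _; simp only [hT, Finset.mem_filter, Finset.mem_univ, true_and]; exact hfS i
  have hcard : (Finset.univ : Finset (ZMod (4*k))).card ≤ 2 * T.card := by
    apply Finset.card_le_mul_card_image_of_maps_to hmaps
    intro b _
    have hsub : Finset.univ.filter (fun i => f i = b) ⊆ {b, b - c} := by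
      intro i hi
      simp only [Finset.mem_filter, Finset.mem_univ, true_and] at hi
      simp only [Finset.mem_insert, Finset.mem_singleton]
      rcases hf i with h | h
      · left; rw [← hi, h]
      · right; rw [← hi, h]; ring
    calc (Finset.univ.filter (fun i => f i = b)).card ≤ ({b, b - c} : Finset _).card :=
          Finset.card_le_card hsub
      _ ≤ 2 := by
          refine (Finset.card_insert_le _ _).trans ?_
          simp
  have huniv : (Finset.univ : Finset (ZMod (4*k))).card = 4*k := by
    simp [ZMod.card]
  have him : S ∩ Set.range Sum.inr
      = Sum.inr '' {j : ZMod (4*k) | Sum.inr j ∈ S} := by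
    ext x
    constructor
    · rintro ⟨hxS, j, rfl⟩; exact ⟨j, hxS, rfl⟩
    · rintro ⟨j, hj, rfl⟩; exact ⟨hj, j, rfl⟩
  rw [him, Set.ncard_image_of_injective _ Sum.inr_injective]
  have hn : {j : ZMod (4*k) | Sum.inr j ∈ S}.ncard = T.card := by
    rw [Set.ncard_eq_toFinset_card', hT]
    congr 1
    ext j
    simp
  omega
end

section
/- For every k ≥ 10, any strong resolving set of the generalized Petersen graph GP(4k,2) has cardinality at least 5k. -/
namespace GPAux
open SimpleGraph

/-- Graph isomorphisms preserve distance. -/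
lemma iso_dist_eq {V W : Type*} {G : SimpleGraph V} {G' : SimpleGraph W} (φ : G ≃g G')
    (u v : V) : G'.dist (φ u) (φ v) = G.dist u v := by
  by_cases h : G.Reachable u v
  · apply le_antisymm
    · obtain ⟨p, hp⟩ := h.exists_walk_length_eq_dist
      calc G'.dist (φ u) (φ v) ≤ (p.map φ.toHom).length := SimpleGraph.dist_le _
        _ = p.length := Walk.length_map _ _
        _ = G.dist u v := hp
    · obtain ⟨p, hp⟩ := (h.map φ.toHom).exists_walk_length_eq_dist
      have h2 : ((p.map φ.symm.toHom).copy (by simp) (by simp) : G.Walk u v).length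
          = p.length := by rw [Walk.length_copy, Walk.length_map]
      calc G.dist u v ≤ _ := SimpleGraph.dist_le ((p.map φ.symm.toHom).copy (by simp) (by simp))
        _ = p.length := h2
        _ = _ := hp
  · rw [SimpleGraph.dist_eq_zero_of_not_reachable h,
      SimpleGraph.dist_eq_zero_of_not_reachable]
    intro h'
    exact h (by simpa using h'.map φ.symm.toHom)

/-- A vertex strongly resolving a mutually maximally distant pair must be one of the pair. -/
lemma resolver_eq_of_mmd {V : Type*} {G : SimpleGraph V} (hc : G.Connected)
    {u v w : V} (hmmd : MutuallyMaximallyDistant G u v)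
    (hres : StronglyResolves G w u v) : w = u ∨ w = v := by
  obtain ⟨hne, hu, hv⟩ := hmmd
  have hduv : 0 < G.dist u v := hc.pos_dist_of_ne hne
  rcases hres with h | h
  · -- v between w and u; claim w = v
    right
    by_contra hwv
    have hdwv : 0 < G.dist w v := hc.pos_dist_of_ne hwv
    obtain ⟨p, hp⟩ := (hc.preconnected v w).exists_walk_length_eq_dist
    have hplen : 0 < p.length := by
      rw [hp, SimpleGraph.dist_comm]; exact hdwv
    cases p with
    | nil => simp at hplen
    | cons hadj q =>
      rename_i x
      have hq : G.dist x w ≤ G.dist v w - 1 := by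
        have := SimpleGraph.dist_le q
        simp [Walk.length_cons] at hp
        omega
      have hxv : G.dist u x ≤ G.dist u v := hv x hadj
      have htri : G.dist w u ≤ G.dist w x + G.dist x u := hc.dist_triangle
      have h1 : G.dist w x = G.dist x w := SimpleGraph.dist_comm ..
      have h2 : G.dist x u = G.dist u x := SimpleGraph.dist_comm ..
      have h3 : G.dist v u = G.dist u v := SimpleGraph.dist_comm ..
      have h4 : G.dist v w = G.dist w v := SimpleGraph.dist_comm ..
      omega
  · left
    by_contra hwu
    have hdwu : 0 < G.dist w u := hc.pos_dist_of_ne hwu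
    obtain ⟨p, hp⟩ := (hc.preconnected u w).exists_walk_length_eq_dist
    have hplen : 0 < p.length := by
      rw [hp, SimpleGraph.dist_comm]; exact hdwu
    cases p with
    | nil => simp at hplen
    | cons hadj q =>
      rename_i x
      have hq : G.dist x w ≤ G.dist u w - 1 := by
        have := SimpleGraph.dist_le q
        simp [Walk.length_cons] at hp
        omega
      have hxv : G.dist x v ≤ G.dist u v := hu x hadj
      have htri : G.dist w v ≤ G.dist w x + G.dist x v := hc.dist_triangle
      have h1 : G.dist w x = G.dist x w := SimpleGraph.dist_comm ..
      have h4 : G.dist u w = G.dist w u := SimpleGraph.dist_comm ..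
      omega

end GPAux

namespace GPAux
open SimpleGraph

variable {n kk : ℕ}

lemma gp_adj_inl_inl {i j : ZMod n} :
    (GP n kk).Adj (Sum.inl i) (Sum.inl j) ↔ i ≠ j ∧ (j = i + 1 ∨ i = j + 1) := Iff.rfl

lemma gp_adj_inl_inr {i j : ZMod n} :
    (GP n kk).Adj (Sum.inl i) (Sum.inr j) ↔ i = j := Iff.rfl

lemma gp_adj_inr_inl {i j : ZMod n} :
    (GP n kk).Adj (Sum.inr i) (Sum.inl j) ↔ i = j := Iff.rfl

lemma gp_adj_inr_inr {i j : ZMod n} :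
    (GP n kk).Adj (Sum.inr i) (Sum.inr j) ↔
      i ≠ j ∧ (j = i + (kk : ZMod n) ∨ i = j + (kk : ZMod n)) := Iff.rfl

/-- The rotation automorphism of `GP n kk`. -/
def shiftIso (n kk : ℕ) (c : ZMod n) : GP n kk ≃g GP n kk where
  toEquiv := Equiv.sumCongr (Equiv.addRight c) (Equiv.addRight c)
  map_rel_iff' := by
    rintro (i|i) (j|j) <;>
      simp only [Equiv.sumCongr_apply, Sum.map_inl, Sum.map_inr, Equiv.coe_addRight,
        gp_adj_inl_inl, gp_adj_inl_inr, gp_adj_inr_inl, gp_adj_inr_inr]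
    · constructor
      · rintro ⟨hne, h2 | h2⟩
        · exact ⟨fun h => hne (by rw [h]), Or.inl (by first | linear_combination h2 | linear_combination -h2)⟩
        · exact ⟨fun h => hne (by rw [h]), Or.inr (by first | linear_combination h2 | linear_combination -h2)⟩
      · rintro ⟨hne, h2 | h2⟩
        · exact ⟨fun h => hne (add_right_cancel h), Or.inl (by first | linear_combination h2 | linear_combination -h2)⟩
        · exact ⟨fun h => hne (add_right_cancel h), Or.inr (by first | linear_combination h2 | linear_combination -h2)⟩
    · constructor <;> intro h <;> first | linear_combination h | linear_combination -h
    · constructor <;> intro h <;> first | linear_combination h | linear_combination -h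
    · constructor
      · rintro ⟨hne, h2 | h2⟩
        · exact ⟨fun h => hne (by rw [h]), Or.inl (by first | linear_combination h2 | linear_combination -h2)⟩
        · exact ⟨fun h => hne (by rw [h]), Or.inr (by first | linear_combination h2 | linear_combination -h2)⟩
      · rintro ⟨hne, h2 | h2⟩
        · exact ⟨fun h => hne (add_right_cancel h), Or.inl (by first | linear_combination h2 | linear_combination -h2)⟩
        · exact ⟨fun h => hne (add_right_cancel h), Or.inr (by first | linear_combination h2 | linear_combination -h2)⟩

/-- The reflection automorphism of `GP n kk`. -/
def negIso (n kk : ℕ) : GP n kk ≃g GP n kk where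
  toEquiv := Equiv.sumCongr (Equiv.neg _) (Equiv.neg _)
  map_rel_iff' := by
    rintro (i|i) (j|j) <;>
      simp only [Equiv.sumCongr_apply, Sum.map_inl, Sum.map_inr, Equiv.neg_apply,
        gp_adj_inl_inl, gp_adj_inl_inr, gp_adj_inr_inl, gp_adj_inr_inr]
    · constructor
      · rintro ⟨hne, h2 | h2⟩
        · exact ⟨fun h => hne (by rw [h]), Or.inr (by first | linear_combination h2 | linear_combination -h2)⟩
        · exact ⟨fun h => hne (by rw [h]), Or.inl (by first | linear_combination h2 | linear_combination -h2)⟩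
      · rintro ⟨hne, h2 | h2⟩
        · exact ⟨fun h => hne (neg_injective h), Or.inr (by first | linear_combination h2 | linear_combination -h2)⟩
        · exact ⟨fun h => hne (neg_injective h), Or.inl (by first | linear_combination h2 | linear_combination -h2)⟩
    · constructor <;> intro h <;> first | linear_combination h | linear_combination -h
    · constructor <;> intro h <;> first | linear_combination h | linear_combination -h
    · constructor
      · rintro ⟨hne, h2 | h2⟩
        · exact ⟨fun h => hne (by rw [h]), Or.inr (by first | linear_combination h2 | linear_combination -h2)⟩
        · exact ⟨fun h => hne (by rw [h]), Or.inl (by first | linear_combination h2 | linear_combination -h2)⟩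
      · rintro ⟨hne, h2 | h2⟩
        · exact ⟨fun h => hne (neg_injective h), Or.inr (by first | linear_combination h2 | linear_combination -h2)⟩
        · exact ⟨fun h => hne (neg_injective h), Or.inl (by first | linear_combination h2 | linear_combination -h2)⟩

variable (h1 : (1 : ZMod n) ≠ 0)

/-- Walk along the outer cycle, `t` steps forward. -/
def wOuter (i : ZMod n) : (t : ℕ) → (GP n kk).Walk (Sum.inl i) (Sum.inl (i + (t : ZMod n)))
  | 0 => Walk.nil.copy rfl (by norm_num)
  | t+1 => ((wOuter i t).concat
      (gp_adj_inl_inl.mpr ⟨fun h => h1 (by linear_combination -h), Or.inl rfl⟩)).copy rfl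
      (by push_cast; ring_nf)

@[simp] lemma wOuter_length (i : ZMod n) (t : ℕ) : (wOuter (kk := kk) h1 i t).length = t := by
  induction t with
  | zero => simp [wOuter, Walk.length_copy]
  | succ t ih => simp [wOuter, Walk.length_copy, Walk.length_concat, ih]

variable (h2 : (kk : ZMod n) ≠ 0)

/-- Walk along the inner vertices, `t` steps forward. -/
def wInner (i : ZMod n) :
    (t : ℕ) → (GP n kk).Walk (Sum.inr i) (Sum.inr (i + (t * kk : ℕ)))
  | 0 => Walk.nil.copy rfl (by norm_num)
  | t+1 => ((wInner i t).concat
      (gp_adj_inr_inr.mpr ⟨fun h => h2 (by linear_combination -h), Or.inl rfl⟩)).copy rfl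
      (by push_cast; ring_nf)

@[simp] lemma wInner_length (i : ZMod n) (t : ℕ) : (wInner h2 i t).length = t := by
  induction t with
  | zero => simp [wInner, Walk.length_copy]
  | succ t ih => simp [wInner, Walk.length_copy, Walk.length_concat, ih]

/-- The spoke walk. -/
def wSpoke (i : ZMod n) : (GP n kk).Walk (Sum.inl i) (Sum.inr i) :=
  Walk.cons (gp_adj_inl_inr.mpr rfl) Walk.nil

@[simp] lemma wSpoke_length (i : ZMod n) : (wSpoke (n := n) (kk := kk) i).length = 1 := rfl

include h1 in
lemma gp_connected [NeZero n] : (GP n kk).Connected := by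
  rw [connected_iff_exists_forall_reachable]
  refine ⟨Sum.inl 0, ?_⟩
  have hout : ∀ i : ZMod n, (GP n kk).Reachable (Sum.inl 0) (Sum.inl i) := fun i =>
    ⟨(wOuter h1 0 i.val).copy rfl (by rw [zero_add, ZMod.natCast_val, ZMod.cast_id])⟩
  rintro (i | i)
  · exact hout i
  · exact (hout i).trans (Adj.reachable (gp_adj_inl_inr.mpr rfl))

end GPAux

namespace GPAux
open SimpleGraph

/-! ### Distance potentials -/

def duu (t : ℕ) : ℕ := if t < 4 then t else t / 2 + 2 + t % 2
def duv (t : ℕ) : ℕ := t / 2 + 1 + t % 2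
def dvv (t : ℕ) : ℕ := if t % 2 = 0 then t / 2 else t / 2 + 3

lemma duu_step {a b : ℕ} (h : b = a + 1 ∨ a = b + 1) : duu a ≤ duu b + 1 := by
  unfold duu; split_ifs <;> omega

lemma duv_step {a b : ℕ} (h : b = a + 1 ∨ a = b + 1) : duv a ≤ duv b + 1 := by
  unfold duv; omega

lemma duu_duv (t : ℕ) : duu t ≤ duv t + 1 ∧ duv t ≤ duu t + 1 := by
  unfold duu duv; split_ifs <;> omega

lemma duv_dvv (t : ℕ) : duv t ≤ dvv t + 1 ∧ dvv t ≤ duv t + 1 := by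
  unfold duv dvv; split_ifs <;> omega

lemma duv_step2 {a b : ℕ} (h : b = a ∨ b = a + 2 ∨ a = b + 2) : duv a ≤ duv b + 1 := by
  unfold duv; omega

lemma dvv_step2 {a b : ℕ} (h : b = a ∨ b = a + 2 ∨ a = b + 2) : dvv a ≤ dvv b + 1 := by
  unfold dvv; split_ifs <;> omega

variable {N : ℕ}

/-- Circular distance from `0`. -/
def cval (N : ℕ) (i : ZMod N) : ℕ := min i.val (N - i.val)

lemma val_add_one [NeZero N] (hN : 1 < N) (i : ZMod N) :
    (i + 1).val = (i.val + 1) % N := by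
  have h := ZMod.val_add i 1
  have h1 : (1 : ZMod N).val = 1 := by
    rw [show (1 : ZMod N) = ((1 : ℕ) : ZMod N) by push_cast; rfl, ZMod.val_natCast,
      Nat.mod_eq_of_lt hN]
  rw [h1] at h; exact h

lemma val_add_two [NeZero N] (hN : 2 < N) (i : ZMod N) :
    (i + ((2 : ℕ) : ZMod N)).val = (i.val + 2) % N := by
  have h := ZMod.val_add i ((2 : ℕ) : ZMod N)
  rw [ZMod.val_natCast, Nat.mod_eq_of_lt hN] at h; exact h

lemma cval_step1 [NeZero N] (he : 2 ∣ N) (hN : 1 < N) (i : ZMod N) :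
    cval N (i + 1) = cval N i + 1 ∨ cval N i = cval N (i + 1) + 1 := by
  have hv := val_add_one hN i
  have hlt : i.val < N := ZMod.val_lt i
  have hlt2 : (i + 1).val < N := ZMod.val_lt _
  unfold cval
  rcases Nat.lt_or_ge (i.val + 1) N with h | h
  · rw [Nat.mod_eq_of_lt h] at hv; omega
  · have : i.val + 1 = N := by omega
    rw [this, Nat.mod_self] at hv; omega

lemma cval_step2 [NeZero N] (he : 2 ∣ N) (hN : 2 < N) (i : ZMod N) :
    cval N (i + ((2:ℕ) : ZMod N)) = cval N i ∨
    cval N (i + ((2:ℕ) : ZMod N)) = cval N i + 2 ∨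
    cval N i = cval N (i + ((2:ℕ) : ZMod N)) + 2 := by
  have hv := val_add_two hN i
  have hlt : i.val < N := ZMod.val_lt i
  have hlt2 : (i + ((2:ℕ) : ZMod N)).val < N := ZMod.val_lt _
  unfold cval
  rcases Nat.lt_or_ge (i.val + 2) N with h | h
  · rw [Nat.mod_eq_of_lt h] at hv; omega
  · rcases Nat.eq_or_lt_of_le h with h' | h'
    · rw [← h', Nat.mod_self] at hv; omega
    · have h2 : i.val + 2 = N + 1 := by omega
      have : (i.val + 2) % N = 1 := by
        rw [h2, Nat.add_mod_left]
        exact Nat.mod_eq_of_lt (by omega)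
      rw [this] at hv; omega

/-- Potential centred at `u₀`. -/
def FU (N : ℕ) : ZMod N ⊕ ZMod N → ℕ
  | Sum.inl i => duu (cval N i)
  | Sum.inr i => duv (cval N i)

/-- Potential centred at `v₀`. -/
def FV (N : ℕ) : ZMod N ⊕ ZMod N → ℕ
  | Sum.inl i => duv (cval N i)
  | Sum.inr i => dvv (cval N i)

lemma lipFU [NeZero N] (he : 2 ∣ N) (hN : 2 < N) :
    ∀ x y, (GP N 2).Adj x y → FU N x ≤ FU N y + 1 := by
  rintro (i | i) (j | j) hadj
  · rcases gp_adj_inl_inl.mp hadj with ⟨-, h | h⟩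
    · subst h; exact duu_step (cval_step1 he (by omega) i)
    · subst h; exact duu_step ((cval_step1 he (by omega) j).symm)
  · have h : i = j := gp_adj_inl_inr.mp hadj
    subst h; exact (duu_duv _).1
  · have h : i = j := gp_adj_inr_inl.mp hadj
    subst h; exact (duu_duv _).2
  · rcases gp_adj_inr_inr.mp hadj with ⟨-, h | h⟩
    · subst h
      rcases cval_step2 he hN i with h | h | h <;> exact duv_step2 (by omega)
    · subst h
      rcases cval_step2 he hN j with h | h | h <;> exact duv_step2 (by omega)

lemma lipFV [NeZero N] (he : 2 ∣ N) (hN : 2 < N) :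
    ∀ x y, (GP N 2).Adj x y → FV N x ≤ FV N y + 1 := by
  rintro (i | i) (j | j) hadj
  · rcases gp_adj_inl_inl.mp hadj with ⟨-, h | h⟩
    · subst h; exact duv_step (cval_step1 he (by omega) i)
    · subst h; exact duv_step ((cval_step1 he (by omega) j).symm)
  · have h : i = j := gp_adj_inl_inr.mp hadj
    subst h; exact (duv_dvv _).1
  · have h : i = j := gp_adj_inr_inl.mp hadj
    subst h; exact (duv_dvv _).2
  · rcases gp_adj_inr_inr.mp hadj with ⟨-, h | h⟩
    · subst h
      rcases cval_step2 he hN i with h | h | h <;> exact dvv_step2 (by omega)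
    · subst h
      rcases cval_step2 he hN j with h | h | h <;> exact dvv_step2 (by omega)

lemma walk_potential {V : Type*} {G : SimpleGraph V} {f : V → ℕ}
    (hf : ∀ x y, G.Adj x y → f x ≤ f y + 1) :
    ∀ {x y : V} (p : G.Walk x y), f x ≤ f y + p.length := by
  intro x y p
  induction p with
  | nil => simp
  | cons hadj q ih =>
    rename_i a b
    have h1 := hf _ _ hadj
    rw [Walk.length_cons]
    omega


lemma dist_lb_FU [NeZero N] (he : 2 ∣ N) (hN : 2 < N) (hc : (GP N 2).Connected)
    (x : ZMod N ⊕ ZMod N) : FU N x ≤ (GP N 2).dist (Sum.inl 0) x := by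
  obtain ⟨p, hp⟩ := (hc.preconnected (Sum.inl 0) x).exists_walk_length_eq_dist
  have hw := walk_potential (lipFU he hN) p.reverse
  have hF0 : FU N (Sum.inl (0 : ZMod N)) = 0 := by
    simp [FU, cval, ZMod.val_zero, duu]
  rw [Walk.length_reverse] at hw
  omega

lemma dist_lb_FV [NeZero N] (he : 2 ∣ N) (hN : 2 < N) (hc : (GP N 2).Connected)
    (x : ZMod N ⊕ ZMod N) : FV N x ≤ (GP N 2).dist (Sum.inr 0) x := by
  obtain ⟨p, hp⟩ := (hc.preconnected (Sum.inr 0) x).exists_walk_length_eq_dist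
  have hw := walk_potential (lipFV he hN) p.reverse
  have hF0 : FV N (Sum.inr (0 : ZMod N)) = 0 := by
    simp [FV, cval, ZMod.val_zero, dvv]
  rw [Walk.length_reverse] at hw
  omega

lemma dist_le_outer (h1 : (1 : ZMod N) ≠ 0) (i : ZMod N) (t : ℕ) :
    (GP N 2).dist (Sum.inl i) (Sum.inl (i + (t : ZMod N))) ≤ t := by
  simpa using SimpleGraph.dist_le (wOuter (kk := 2) h1 i t)

lemma dist_le_inner (h2 : ((2:ℕ) : ZMod N) ≠ 0) (i : ZMod N) (t : ℕ) :
    (GP N 2).dist (Sum.inr i) (Sum.inr (i + ((t * 2 : ℕ) : ZMod N))) ≤ t := by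
  simpa using SimpleGraph.dist_le (wInner h2 i t)

lemma dist_le_spoke (i : ZMod N) : (GP N 2).dist (Sum.inl i) (Sum.inr i) ≤ 1 := by
  simpa using SimpleGraph.dist_le (wSpoke (kk := 2) i)

/-! ### Half MMD -/

def halfMMD {V : Type*} (G : SimpleGraph V) (u v : V) : Prop :=
  ∀ w : V, G.Adj u w → G.dist w v ≤ G.dist u v

lemma mmd_iff {V : Type*} {G : SimpleGraph V} {u v : V} :
    MutuallyMaximallyDistant G u v ↔ u ≠ v ∧ halfMMD G u v ∧ halfMMD G v u := by
  constructor
  · rintro ⟨h1, h2, h3⟩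
    refine ⟨h1, h2, fun w hw => ?_⟩
    have := h3 w hw
    have c1 : G.dist w u = G.dist u w := SimpleGraph.dist_comm ..
    have c2 : G.dist v u = G.dist u v := SimpleGraph.dist_comm ..
    omega
  · rintro ⟨h1, h2, h3⟩
    refine ⟨h1, h2, fun w hw => ?_⟩
    have := h3 w hw
    have c1 : G.dist w u = G.dist u w := SimpleGraph.dist_comm ..
    have c2 : G.dist v u = G.dist u v := SimpleGraph.dist_comm ..
    omega

lemma halfMMD_iso {V W : Type*} {G : SimpleGraph V} {G' : SimpleGraph W} (φ : G ≃g G')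
    {u v : V} (h : halfMMD G u v) : halfMMD G' (φ u) (φ v) := by
  intro w hw
  have hadj : G.Adj u (φ.symm w) := by
    have := φ.symm.toHom.map_adj hw
    simpa using this
  have h2 := h _ hadj
  have e1 : G'.dist w (φ v) = G.dist (φ.symm w) v := by
    conv_lhs => rw [← φ.apply_symm_apply w]
    rw [iso_dist_eq φ]
  rw [e1, iso_dist_eq φ u v]
  exact h2

lemma mmd_iso {V W : Type*} {G : SimpleGraph V} {G' : SimpleGraph W} (φ : G ≃g G')
    {u v : V} (h : MutuallyMaximallyDistant G u v) :
    MutuallyMaximallyDistant G' (φ u) (φ v) := by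
  rw [mmd_iff] at h ⊢
  exact ⟨fun h' => h.1 (φ.toEquiv.injective h'), halfMMD_iso φ h.2.1, halfMMD_iso φ h.2.2⟩

def tauIso (N kk : ℕ) (c : ZMod N) : GP N kk ≃g GP N kk :=
  (negIso N kk).trans (shiftIso N kk c)

@[simp] lemma tauIso_inl {kk : ℕ} (c i : ZMod N) :
    tauIso N kk c (Sum.inl i) = Sum.inl (-i + c) := rfl

@[simp] lemma tauIso_inr {kk : ℕ} (c i : ZMod N) :
    tauIso N kk c (Sum.inr i) = Sum.inr (-i + c) := rfl

@[simp] lemma shiftIso_inl {kk : ℕ} (c i : ZMod N) :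
    shiftIso N kk c (Sum.inl i) = Sum.inl (i + c) := rfl

@[simp] lemma shiftIso_inr {kk : ℕ} (c i : ZMod N) :
    shiftIso N kk c (Sum.inr i) = Sum.inr (i + c) := rfl

lemma cast_ne_cast {a b : ℕ} (ha : a < N) (hb : b < N) (hne : a ≠ b) :
    ((a : ZMod N)) ≠ (b : ZMod N) := fun h =>
  hne (by rw [← ZMod.val_cast_of_lt ha, ← ZMod.val_cast_of_lt hb, h])

lemma one_ne_zero' [NeZero N] (hN : 1 < N) : (1 : ZMod N) ≠ 0 := by
  have := cast_ne_cast (N := N) (a := 1) (b := 0) (by omega) (by omega) (by omega)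
  simpa using this

lemma two_ne_zero' [NeZero N] (hN : 2 < N) : ((2:ℕ) : ZMod N) ≠ 0 := by
  have := cast_ne_cast (N := N) (a := 2) (b := 0) (by omega) (by omega) (by omega)
  simpa using this

lemma dist2 {V : Type*} {G : SimpleGraph V} (hc : G.Connected) {x y z : V} {a b : ℕ}
    (h1 : G.dist x y ≤ a) (h2 : G.dist y z ≤ b) : G.dist x z ≤ a + b := by
  have t1 : G.dist x z ≤ G.dist x y + G.dist y z := hc.dist_triangle
  omega

lemma dist3 {V : Type*} {G : SimpleGraph V} (hc : G.Connected) {x y z w : V} {a b c : ℕ}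
    (h1 : G.dist x y ≤ a) (h2 : G.dist y z ≤ b) (h3 : G.dist z w ≤ c) :
    G.dist x w ≤ a + b + c := by
  have t1 : G.dist x w ≤ G.dist x y + G.dist y w := hc.dist_triangle
  have t2 : G.dist y w ≤ G.dist y z + G.dist z w := hc.dist_triangle
  omega

lemma dist4 {V : Type*} {G : SimpleGraph V} (hc : G.Connected) {x y z w v : V} {a b c d : ℕ}
    (h1 : G.dist x y ≤ a) (h2 : G.dist y z ≤ b) (h3 : G.dist z w ≤ c)
    (h4 : G.dist w v ≤ d) : G.dist x v ≤ a + b + c + d := by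
  have t1 : G.dist x v ≤ G.dist x y + G.dist y v := hc.dist_triangle
  have t2 : G.dist y v ≤ G.dist y z + G.dist z v := hc.dist_triangle
  have t3 : G.dist z v ≤ G.dist z w + G.dist w v := hc.dist_triangle
  omega

lemma dle_outer (h1 : (1 : ZMod N) ≠ 0) {i j : ZMod N} (t : ℕ) (he : j = i + (t : ZMod N)) :
    (GP N 2).dist (Sum.inl i) (Sum.inl j) ≤ t := he ▸ dist_le_outer h1 i t

lemma dle_outer_rev (h1 : (1 : ZMod N) ≠ 0) {i j : ZMod N} (t : ℕ)
    (he : i = j + (t : ZMod N)) : (GP N 2).dist (Sum.inl i) (Sum.inl j) ≤ t := by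
  rw [SimpleGraph.dist_comm]; exact dle_outer h1 t he

lemma dle_inner (h2 : ((2:ℕ) : ZMod N) ≠ 0) {i j : ZMod N} (t : ℕ)
    (he : j = i + ((t * 2 : ℕ) : ZMod N)) :
    (GP N 2).dist (Sum.inr i) (Sum.inr j) ≤ t := he ▸ dist_le_inner h2 i t

lemma dle_inner_rev (h2 : ((2:ℕ) : ZMod N) ≠ 0) {i j : ZMod N} (t : ℕ)
    (he : i = j + ((t * 2 : ℕ) : ZMod N)) :
    (GP N 2).dist (Sum.inr i) (Sum.inr j) ≤ t := by
  rw [SimpleGraph.dist_comm]; exact dle_inner h2 t he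

lemma dle_spoke (i : ZMod N) : (GP N 2).dist (Sum.inl i) (Sum.inr i) ≤ 1 := dist_le_spoke i

lemma dle_spoke_rev (i : ZMod N) : (GP N 2).dist (Sum.inr i) (Sum.inl i) ≤ 1 := by
  rw [SimpleGraph.dist_comm]; exact dist_le_spoke i

/-! ### The concrete MMD pairs -/

lemma mmdU2 (k m : ℕ) [NeZero (4*k)] (hk : 10 ≤ k) (hm : m + 3 ≤ k) :
    MutuallyMaximallyDistant (GP (4*k) 2) (Sum.inl 0)
      (Sum.inl ((2*m+5 : ℕ) : ZMod (4*k))) := by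
  have he : 2 ∣ 4*k := ⟨2*k, by ring⟩
  have hN : 2 < 4*k := by omega
  have h1 : (1 : ZMod (4*k)) ≠ 0 := one_ne_zero' (by omega)
  have h2 : ((2:ℕ) : ZMod (4*k)) ≠ 0 := two_ne_zero' hN
  have hc : (GP (4*k) 2).Connected := gp_connected h1
  set c : ZMod (4*k) := ((2*m+5 : ℕ) : ZMod (4*k)) with hc_def
  have hval : c.val = 2*m+5 := ZMod.val_cast_of_lt (by omega)
  have lb : m + 5 ≤ (GP (4*k) 2).dist (Sum.inl 0) (Sum.inl c) := by
    have hlb := dist_lb_FU he hN hc (Sum.inl c)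
    have hfu : FU (4*k) (Sum.inl c) = m + 5 := by
      show duu (cval (4*k) c) = m + 5
      unfold cval
      rw [hval]
      unfold duu
      split_ifs <;> omega
    omega
  have hcne : c ≠ 0 := by
    have := cast_ne_cast (N := 4*k) (a := 2*m+5) (b := 0) (by omega) (by omega) (by omega)
    rwa [Nat.cast_zero] at this
  have half1 : halfMMD (GP (4*k) 2) (Sum.inl 0) (Sum.inl c) := by
    intro w hw
    have key : (GP (4*k) 2).dist w (Sum.inl c) ≤ m + 5 := by
      match w with
      | Sum.inl jj =>
        rcases gp_adj_inl_inl.mp hw with ⟨-, hj | hj⟩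
        · rw [hj, zero_add]
          have := dist3 hc (dle_spoke (1 : ZMod (4*k)))
            (dle_inner h2 (m+2) (show c = 1 + (((m+2)*2 : ℕ) : ZMod (4*k)) by
              rw [hc_def]; push_cast; ring))
            (dle_spoke_rev c)
          omega
        · have hj' : jj = -1 := by linear_combination -hj
          rw [hj']
          have := dist3 hc (dle_spoke (-1 : ZMod (4*k)))
            (dle_inner h2 (m+3) (show c = -1 + (((m+3)*2 : ℕ) : ZMod (4*k)) by
              rw [hc_def]; push_cast; ring))
            (dle_spoke_rev c)
          omega
      | Sum.inr jj =>
        have hj : (0 : ZMod (4*k)) = jj := gp_adj_inl_inr.mp hw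
        rw [← hj]
        have := dist3 hc
          (dle_inner h2 (m+2) (show ((2*m+4 : ℕ) : ZMod (4*k)) = 0 + (((m+2)*2 : ℕ) : ZMod (4*k)) by
            push_cast; ring))
          (dle_spoke_rev ((2*m+4 : ℕ) : ZMod (4*k)))
          (dle_outer h1 1 (show c = ((2*m+4 : ℕ) : ZMod (4*k)) + ((1:ℕ) : ZMod (4*k)) by
            rw [hc_def]; push_cast; ring))
        omega
    omega
  have half2 : halfMMD (GP (4*k) 2) (Sum.inl c) (Sum.inl 0) := by
    have hτ := halfMMD_iso (tauIso (4*k) 2 c) half1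
    simp only [tauIso_inl, neg_zero, zero_add, neg_add_cancel] at hτ
    exact hτ
  exact mmd_iff.mpr ⟨fun h => hcne (Sum.inl.inj h).symm, half1, half2⟩

lemma mmdU1 (k : ℕ) [NeZero (4*k)] (hk : 10 ≤ k) :
    MutuallyMaximallyDistant (GP (4*k) 2) (Sum.inl 0)
      (Sum.inl ((2*k : ℕ) : ZMod (4*k))) := by
  obtain ⟨K, hK⟩ := Nat.exists_eq_add_of_le hk
  subst hK
  have he : 2 ∣ 4*(10+K) := ⟨2*(10+K), by ring⟩
  have hN : 2 < 4*(10+K) := by omega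
  have h1 : (1 : ZMod (4*(10+K))) ≠ 0 := one_ne_zero' (by omega)
  have h2 : ((2:ℕ) : ZMod (4*(10+K))) ≠ 0 := two_ne_zero' hN
  have hc : (GP (4*(10+K)) 2).Connected := gp_connected h1
  have hz : ((4*(10+K) : ℕ) : ZMod (4*(10+K))) = 0 := ZMod.natCast_self _
  set c : ZMod (4*(10+K)) := ((2*(10+K) : ℕ) : ZMod (4*(10+K))) with hc_def
  have hval : c.val = 20+2*K := by
    rw [hc_def, show 2*(10+K) = 20+2*K by ring]
    exact ZMod.val_cast_of_lt (by omega)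
  have lb : K + 12 ≤ (GP (4*(10+K)) 2).dist (Sum.inl 0) (Sum.inl c) := by
    have hlb := dist_lb_FU he hN hc (Sum.inl c)
    have hfu : FU (4*(10+K)) (Sum.inl c) = K + 12 := by
      show duu (cval (4*(10+K)) c) = K + 12
      unfold cval
      rw [hval]
      unfold duu
      split_ifs <;> omega
    omega
  have hcne : c ≠ 0 := by
    rw [hc_def]
    have := cast_ne_cast (N := 4*(10+K)) (a := 2*(10+K)) (b := 0) (by omega) (by omega)
      (by omega)
    rwa [Nat.cast_zero] at this
  have half1 : halfMMD (GP (4*(10+K)) 2) (Sum.inl 0) (Sum.inl c) := by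
    intro w hw
    have key : (GP (4*(10+K)) 2).dist w (Sum.inl c) ≤ K + 12 := by
      match w with
      | Sum.inl jj =>
        rcases gp_adj_inl_inl.mp hw with ⟨-, hj | hj⟩
        · rw [hj, zero_add]
          have := dist4 hc (dle_spoke (1 : ZMod (4*(10+K))))
            (dle_inner h2 (9+K)
              (show ((19+2*K : ℕ) : ZMod (4*(10+K))) = 1 + (((9+K)*2 : ℕ) : ZMod (4*(10+K))) by
                push_cast; ring))
            (dle_spoke_rev ((19+2*K : ℕ) : ZMod (4*(10+K))))
            (dle_outer h1 1
              (show c = ((19+2*K : ℕ) : ZMod (4*(10+K))) + ((1:ℕ) : ZMod (4*(10+K))) by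
                rw [hc_def]; push_cast; ring))
          omega
        · have hj' : jj = -1 := by linear_combination -hj
          rw [hj']
          have := dist4 hc (dle_spoke (-1 : ZMod (4*(10+K))))
            (dle_inner_rev h2 (9+K)
              (show (-1 : ZMod (4*(10+K)))
                  = ((21+2*K : ℕ) : ZMod (4*(10+K))) + (((9+K)*2 : ℕ) : ZMod (4*(10+K))) by
                push_cast
                push_cast at hz
                linear_combination -hz))
            (dle_spoke_rev ((21+2*K : ℕ) : ZMod (4*(10+K))))
            (dle_outer_rev h1 1
              (show ((21+2*K : ℕ) : ZMod (4*(10+K))) = c + ((1:ℕ) : ZMod (4*(10+K))) by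
                rw [hc_def]; push_cast; ring))
          omega
      | Sum.inr jj =>
        have hj : (0 : ZMod (4*(10+K))) = jj := gp_adj_inl_inr.mp hw
        rw [← hj]
        have := dist2 hc
          (dle_inner h2 (10+K)
            (show c = 0 + (((10+K)*2 : ℕ) : ZMod (4*(10+K))) by rw [hc_def]; push_cast; ring))
          (dle_spoke_rev c)
        omega
    omega
  have half2 : halfMMD (GP (4*(10+K)) 2) (Sum.inl c) (Sum.inl 0) := by
    have hτ := halfMMD_iso (tauIso (4*(10+K)) 2 c) half1
    simp only [tauIso_inl, neg_zero, zero_add, neg_add_cancel] at hτ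
    exact hτ
  exact mmd_iff.mpr ⟨fun h => hcne (Sum.inl.inj h).symm, half1, half2⟩

lemma mmdV (k : ℕ) [NeZero (4*k)] (hk : 10 ≤ k) :
    MutuallyMaximallyDistant (GP (4*k) 2) (Sum.inr 0)
      (Sum.inr ((2*k-1 : ℕ) : ZMod (4*k))) := by
  obtain ⟨K, hK⟩ := Nat.exists_eq_add_of_le hk
  subst hK
  have he : 2 ∣ 4*(10+K) := ⟨2*(10+K), by ring⟩
  have hN : 2 < 4*(10+K) := by omega
  have h1 : (1 : ZMod (4*(10+K))) ≠ 0 := one_ne_zero' (by omega)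
  have h2 : ((2:ℕ) : ZMod (4*(10+K))) ≠ 0 := two_ne_zero' hN
  have hc : (GP (4*(10+K)) 2).Connected := gp_connected h1
  have hz : ((4*(10+K) : ℕ) : ZMod (4*(10+K))) = 0 := ZMod.natCast_self _
  have hcoef : 2*(10+K)-1 = 19+2*K := by omega
  rw [hcoef]
  set c : ZMod (4*(10+K)) := ((19+2*K : ℕ) : ZMod (4*(10+K))) with hc_def
  have hval : c.val = 19+2*K := ZMod.val_cast_of_lt (by omega)
  have lb : K + 12 ≤ (GP (4*(10+K)) 2).dist (Sum.inr 0) (Sum.inr c) := by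
    have hlb := dist_lb_FV he hN hc (Sum.inr c)
    have hfv : FV (4*(10+K)) (Sum.inr c) = K + 12 := by
      show dvv (cval (4*(10+K)) c) = K + 12
      unfold cval
      rw [hval]
      unfold dvv
      split_ifs <;> omega
    omega
  have hcne : c ≠ 0 := by
    rw [hc_def]
    have := cast_ne_cast (N := 4*(10+K)) (a := 19+2*K) (b := 0) (by omega) (by omega) (by omega)
    rwa [Nat.cast_zero] at this
  have half1 : halfMMD (GP (4*(10+K)) 2) (Sum.inr 0) (Sum.inr c) := by
    intro w hw
    have key : (GP (4*(10+K)) 2).dist w (Sum.inr c) ≤ K + 12 := by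
      match w with
      | Sum.inl jj =>
        have hj : (0 : ZMod (4*(10+K))) = jj := gp_adj_inr_inl.mp hw
        rw [← hj]
        have := dist3 hc
          (dle_outer h1 1 (show ((1:ℕ) : ZMod (4*(10+K))) = 0 + ((1:ℕ) : ZMod (4*(10+K))) by
            rw [zero_add]))
          (dle_spoke ((1:ℕ) : ZMod (4*(10+K))))
          (dle_inner h2 (9+K)
            (show c = ((1:ℕ) : ZMod (4*(10+K))) + (((9+K)*2 : ℕ) : ZMod (4*(10+K))) by
              rw [hc_def]; push_cast; ring))
        omega
      | Sum.inr jj =>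
        rcases gp_adj_inr_inr.mp hw with ⟨-, hj | hj⟩
        · rw [hj, zero_add]
          have := dist4 hc (dle_spoke_rev ((2:ℕ) : ZMod (4*(10+K))))
            (dle_outer h1 1
              (show ((3:ℕ) : ZMod (4*(10+K))) = ((2:ℕ) : ZMod (4*(10+K))) + ((1:ℕ) : ZMod (4*(10+K))) by
                push_cast; ring))
            (dle_spoke ((3:ℕ) : ZMod (4*(10+K))))
            (dle_inner h2 (8+K)
              (show c = ((3:ℕ) : ZMod (4*(10+K))) + (((8+K)*2 : ℕ) : ZMod (4*(10+K))) by
                rw [hc_def]; push_cast; ring))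
          omega
        · have hj' : jj = -((2:ℕ) : ZMod (4*(10+K))) := by linear_combination -hj
          rw [hj']
          have := dist4 hc (dle_spoke_rev (-((2:ℕ) : ZMod (4*(10+K)))))
            (dle_outer_rev h1 1
              (show -((2:ℕ) : ZMod (4*(10+K)))
                  = -((3:ℕ) : ZMod (4*(10+K))) + ((1:ℕ) : ZMod (4*(10+K))) by push_cast; ring))
            (dle_spoke (-((3:ℕ) : ZMod (4*(10+K)))))
            (dle_inner_rev h2 (9+K)
              (show -((3:ℕ) : ZMod (4*(10+K))) = c + (((9+K)*2 : ℕ) : ZMod (4*(10+K))) by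
                rw [hc_def]; push_cast; push_cast at hz; linear_combination -hz))
          omega
    omega
  have half2 : halfMMD (GP (4*(10+K)) 2) (Sum.inr c) (Sum.inr 0) := by
    have hτ := halfMMD_iso (tauIso (4*(10+K)) 2 c) half1
    simp only [tauIso_inr, neg_zero, zero_add, neg_add_cancel] at hτ
    exact hτ
  exact mmd_iff.mpr ⟨fun h => hcne (Sum.inr.inj h).symm, half1, half2⟩

lemma mmdU2' (k m : ℕ) [NeZero (4*k)] (hk : 10 ≤ k) (hm : m + 3 ≤ k) (b : ZMod (4*k)) :
    MutuallyMaximallyDistant (GP (4*k) 2) (Sum.inl b)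
      (Sum.inl (b + ((2*m+5 : ℕ) : ZMod (4*k)))) := by
  have := mmd_iso (shiftIso (4*k) 2 b) (mmdU2 k m hk hm)
  simp only [shiftIso_inl, zero_add] at this
  rwa [add_comm] at this

lemma mmdU1' (k : ℕ) [NeZero (4*k)] (hk : 10 ≤ k) (b : ZMod (4*k)) :
    MutuallyMaximallyDistant (GP (4*k) 2) (Sum.inl b)
      (Sum.inl (b + ((2*k : ℕ) : ZMod (4*k)))) := by
  have := mmd_iso (shiftIso (4*k) 2 b) (mmdU1 k hk)
  simp only [shiftIso_inl, zero_add] at this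
  rwa [add_comm] at this

lemma mmdV' (k : ℕ) [NeZero (4*k)] (hk : 10 ≤ k) (b : ZMod (4*k)) :
    MutuallyMaximallyDistant (GP (4*k) 2) (Sum.inr b)
      (Sum.inr (b + ((2*k-1 : ℕ) : ZMod (4*k)))) := by
  have := mmd_iso (shiftIso (4*k) 2 b) (mmdV k hk)
  simp only [shiftIso_inr, zero_add] at this
  rwa [add_comm] at this

lemma card_le_four {α : Type*} [DecidableEq α] (a b c d : α) :
    ({a, b, c, d} : Finset α).card ≤ 4 := by
  have h1 := Finset.card_insert_le a {b, c, d}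
  have h2 := Finset.card_insert_le b ({c, d} : Finset α)
  have h3 := Finset.card_insert_le c ({d} : Finset α)
  have h4 : ({d} : Finset α).card = 1 := Finset.card_singleton d
  omega

lemma val_sub_parity {N : ℕ} [NeZero N] (he : 2 ∣ N) (a b : ZMod N) :
    ((a - b).val + b.val) % 2 = a.val % 2 := by
  have h := ZMod.val_add (a - b) b
  rw [sub_add_cancel] at h
  obtain ⟨c2, hc2⟩ : 2 ∣ N * (((a - b).val + b.val) / N) := he.mul_right _
  have h3 := Nat.mod_add_div ((a - b).val + b.val) N
  rw [hc2, ← h] at h3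
  omega

end GPAux

open GPAux SimpleGraph in
/-- For `k ≥ 10`, any strong resolving set of `GP (4k) 2` has at least `5k` elements. -/
theorem stmt_12 (k : ℕ) (hk : 10 ≤ k) (S : Set (ZMod (4*k) ⊕ ZMod (4*k)))
    (hS : IsStrongResolvingSet (GP (4*k) 2) S) : 5*k ≤ S.ncard := by
  haveI : NeZero (4*k) := ⟨by omega⟩
  classical
  obtain ⟨K, hK⟩ := Nat.exists_eq_add_of_le hk
  subst hK
  have h1 : (1 : ZMod (4*(10+K))) ≠ 0 := one_ne_zero' (by omega)
  have hconn : (GP (4*(10+K)) 2).Connected := gp_connected h1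
  have hz : ((4*(10+K) : ℕ) : ZMod (4*(10+K))) = 0 := ZMod.natCast_self _
  have hit : ∀ x y, MutuallyMaximallyDistant (GP (4*(10+K)) 2) x y → x ∈ S ∨ y ∈ S := by
    intro x y h
    obtain ⟨w, hwS, hres⟩ := hS x y h.1
    rcases resolver_eq_of_mmd hconn h hres with rfl | rfl
    · exact Or.inl hwS
    · exact Or.inr hwS
  have cast_val : ∀ a : ZMod (4*(10+K)), ((a.val : ℕ) : ZMod (4*(10+K))) = a := fun a => by
    rw [ZMod.natCast_val, ZMod.cast_id]
  -- ### Inner bound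
  set d : ℕ := 19+2*K with hd_def
  have hd_eq : (2*(10+K) - 1 : ℕ) = d := by omega
  have hdd : ∀ s s' : ℕ, s < 4*(10+K) → s' < 4*(10+K) →
      ((d*s : ℕ) : ZMod (4*(10+K))) = ((d*s' : ℕ) : ZMod (4*(10+K))) → s = s' := by
    intro s s' hs hs' h
    have hsq : ((d : ℕ) : ZMod (4*(10+K))) * ((d : ℕ) : ZMod (4*(10+K))) = 1 := by
      have hnat : d * d = (9+K)*(4*(10+K)) + 1 := by rw [hd_def]; ring
      calc ((d:ℕ) : ZMod (4*(10+K))) * ((d:ℕ) : ZMod (4*(10+K)))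
          = ((d*d : ℕ) : ZMod (4*(10+K))) := by push_cast; ring
        _ = (((9+K)*(4*(10+K)) + 1 : ℕ) : ZMod (4*(10+K))) := by rw [hnat]
        _ = 1 := by
            push_cast
            push_cast at hz
            linear_combination (9+(K : ZMod (4*(10+K))))*hz
    have h2 : ((s : ℕ) : ZMod (4*(10+K))) = ((s' : ℕ) : ZMod (4*(10+K))) := by
      have h3 := congrArg (fun x => ((d:ℕ) : ZMod (4*(10+K))) * x) h
      push_cast at h3 ⊢
      push_cast at hsq
      linear_combination h3 + (((s':ℕ) : ZMod (4*(10+K))) - ((s:ℕ) : ZMod (4*(10+K))))*hsq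
    have h4 := congrArg ZMod.val h2
    rwa [ZMod.val_cast_of_lt hs, ZMod.val_cast_of_lt hs'] at h4
  have hpair : ∀ t : ℕ, Sum.inr ((d*(2*t) : ℕ) : ZMod (4*(10+K))) ∈ S ∨
      Sum.inr ((d*(2*t+1) : ℕ) : ZMod (4*(10+K))) ∈ S := by
    intro t
    have hm := mmdV' (10+K) (by omega) ((d*(2*t) : ℕ) : ZMod (4*(10+K)))
    rw [hd_eq] at hm
    have he2 : ((d*(2*t):ℕ) : ZMod (4*(10+K))) + ((d:ℕ) : ZMod (4*(10+K)))
        = ((d*(2*t+1) : ℕ) : ZMod (4*(10+K))) := by push_cast; ring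
    rw [he2] at hm
    exact hit _ _ hm
  set SI : Finset (ZMod (4*(10+K))) := Finset.univ.filter (fun a => Sum.inr a ∈ S) with hSI_def
  set f : ℕ → ZMod (4*(10+K)) := fun t =>
    if Sum.inr ((d*(2*t) : ℕ) : ZMod (4*(10+K))) ∈ S then ((d*(2*t):ℕ) : ZMod (4*(10+K)))
    else ((d*(2*t+1):ℕ) : ZMod (4*(10+K))) with hf_def
  have hfmem : ∀ t ∈ Finset.range (2*(10+K)), f t ∈ SI := by
    intro t _
    rw [hf_def]
    dsimp only
    split_ifs with h
    · exact Finset.mem_filter.mpr ⟨Finset.mem_univ _, h⟩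
    · rcases hpair t with h' | h'
      · exact absurd h' h
      · exact Finset.mem_filter.mpr ⟨Finset.mem_univ _, h'⟩
  have hfinj : Set.InjOn f (Finset.range (2*(10+K))) := by
    intro t ht t' ht' hf
    rw [Finset.coe_range, Set.mem_Iio] at ht ht'
    rw [hf_def] at hf
    dsimp only at hf
    split_ifs at hf with h h' h' <;>
    · have := hdd _ _ (by omega) (by omega) hf
      omega
  have hSI_card : 2*(10+K) ≤ SI.card := by
    have := Finset.card_le_card_of_injOn f hfmem hfinj
    simpa using this
  -- ### Outer bound
  set SU : Finset (ZMod (4*(10+K))) := Finset.univ.filter (fun a => Sum.inl a ∈ S) with hSU_def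
  set A : Finset (ZMod (4*(10+K))) := Finset.univ.filter (fun a => ¬ Sum.inl a ∈ S) with hA_def
  have hSU_A : SU.card + A.card = 4*(10+K) := by
    rw [hSU_def, hA_def]
    rw [Finset.card_filter_add_card_filter_not, Finset.card_univ, ZMod.card]
  have hAmem : ∀ a : ZMod (4*(10+K)), a ∈ A ↔ ¬ Sum.inl a ∈ S := by
    intro a; rw [hA_def, Finset.mem_filter]; simp
  have keyA1 : ∀ a : ZMod (4*(10+K)), a ∈ A →
      a + ((2*(10+K) : ℕ) : ZMod (4*(10+K))) ∈ A → False := by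
    intro a ha hb
    rcases hit _ _ (mmdU1' (10+K) (by omega) a) with h | h
    · exact (hAmem a).mp ha h
    · exact (hAmem _).mp hb h
  have keyA2 : ∀ a b : ZMod (4*(10+K)), a ∈ A → b ∈ A → ∀ m : ℕ, m + 3 ≤ 10+K →
      (b - a).val = 2*m+5 → False := by
    intro a b ha hb m hm hval
    have hmm := mmdU2' (10+K) m (by omega) hm a
    have hab : a + ((2*m+5 : ℕ) : ZMod (4*(10+K))) = b := by
      rw [← hval, cast_val]; ring
    rw [hab] at hmm
    rcases hit _ _ hmm with h | h
    · exact (hAmem a).mp ha h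
    · exact (hAmem b).mp hb h
  have keyA3 : ∀ a b : ZMod (4*(10+K)), a ∈ A → b ∈ A → (b - a).val % 2 = 1 →
      b ∈ ({a+1, a+3, a-1, a-3} : Finset (ZMod (4*(10+K)))) := by
    intro a b ha hb hodd
    have htlt : (b-a).val < 4*(10+K) := ZMod.val_lt _
    have hb_eq : b = a + (((b-a).val : ℕ) : ZMod (4*(10+K))) := by rw [cast_val]; ring
    rcases show (b-a).val = 1 ∨ (b-a).val = 3 ∨ (5 ≤ (b-a).val ∧ (b-a).val ≤ 19+2*K)
        ∨ (21+2*K ≤ (b-a).val ∧ (b-a).val ≤ 35+4*K)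
        ∨ (b-a).val = 37+4*K ∨ (b-a).val = 39+4*K from by omega with h|h|h|h|h|h
    · rw [hb_eq, h]; simp
    · rw [hb_eq, h]
      have : ((3:ℕ) : ZMod (4*(10+K))) = 3 := by push_cast; ring
      rw [this]; simp
    · exact absurd (keyA2 a b ha hb (((b-a).val - 5)/2) (by omega) (by omega)) (by simp)
    · exfalso
      have hne : b - a ≠ 0 := by
        intro h0
        rw [h0] at hodd
        simp [ZMod.val_zero] at hodd
      have hs : (a - b).val = 4*(10+K) - (b-a).val := by
        have hab : a - b = -(b - a) := by ring
        rw [hab, ZMod.neg_val, if_neg hne]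
      exact keyA2 b a hb ha ((4*(10+K) - (b-a).val - 5)/2) (by omega) (by rw [hs]; omega)
    · rw [hb_eq, h]
      have : ((37+4*K : ℕ) : ZMod (4*(10+K))) = -3 := by
        push_cast
        push_cast at hz
        linear_combination hz
      rw [this]
      simp [sub_eq_add_neg]
    · rw [hb_eq, h]
      have : ((39+4*K : ℕ) : ZMod (4*(10+K))) = -1 := by
        push_cast
        push_cast at hz
        linear_combination hz
      rw [this]
      simp [sub_eq_add_neg]
  have he2 : 2 ∣ 4*(10+K) := ⟨2*(10+K), by ring⟩
  -- pure-parity bound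
  have hpure : (∀ a ∈ A, ∀ b ∈ A, a.val % 2 = b.val % 2) → A.card ≤ 10+K := by
    intro hall
    have hinj : Set.InjOn (fun a : ZMod (4*(10+K)) => (a.val % (2*(10+K))) / 2) A := by
      intro x hx y hy hxy
      by_contra hne
      dsimp only at hxy
      have hpar := hall x hx y hy
      have hmx : x.val % (2*(10+K)) % 2 = x.val % 2 := Nat.mod_mod_of_dvd _ ⟨10+K, rfl⟩
      have hmy : y.val % (2*(10+K)) % 2 = y.val % 2 := Nat.mod_mod_of_dvd _ ⟨10+K, rfl⟩
      have hxv : x.val < 4*(10+K) := ZMod.val_lt _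
      have hyv : y.val < 4*(10+K) := ZMod.val_lt _
      have heq : x.val % (2*(10+K)) = y.val % (2*(10+K)) := by omega
      have hcases : x.val = y.val ∨ y.val = x.val + 2*(10+K) ∨ x.val = y.val + 2*(10+K) := by
        have hdx := Nat.div_add_mod x.val (2*(10+K))
        have hdy := Nat.div_add_mod y.val (2*(10+K))
        have hqx : x.val / (2*(10+K)) < 2 := Nat.div_lt_of_lt_mul (by omega)
        have hqy : y.val / (2*(10+K)) < 2 := Nat.div_lt_of_lt_mul (by omega)
        generalize x.val / (2*(10+K)) = qx at hdx hqx
        generalize y.val / (2*(10+K)) = qy at hdy hqy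
        generalize x.val % (2*(10+K)) = rx at hdx heq
        generalize y.val % (2*(10+K)) = ry at hdy heq
        interval_cases qx <;> interval_cases qy <;> omega
      rcases hcases with h | h | h
      · exact hne (by rw [← cast_val x, ← cast_val y, h])
      · refine keyA1 x hx ?_
        have : y = x + ((2*(10+K) : ℕ) : ZMod (4*(10+K))) := by
          rw [← cast_val x, ← cast_val y, h]; push_cast; ring
        rwa [← this]
      · refine keyA1 y hy ?_
        have : x = y + ((2*(10+K) : ℕ) : ZMod (4*(10+K))) := by
          rw [← cast_val x, ← cast_val y, h]; push_cast; ring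
        rwa [← this]
    have hmaps : ∀ a ∈ A, (a.val % (2*(10+K))) / 2 ∈ Finset.range (10+K) := by
      intro a _
      have : a.val % (2*(10+K)) < 2*(10+K) := Nat.mod_lt _ (by omega)
      exact Finset.mem_range.mpr (by omega)
    have := Finset.card_le_card_of_injOn _ hmaps hinj
    simpa using this
  have hA_card : A.card ≤ 10+K := by
    by_cases hAo : ∃ o ∈ A, o.val % 2 = 1
    · by_cases hAe : ∃ e ∈ A, e.val % 2 = 0
      · obtain ⟨o, hoA, hop⟩ := hAo
        obtain ⟨e, heA, hep⟩ := hAe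
        have hsub_e : A.filter (fun a => a.val % 2 = 0) ⊆ ({o+1, o+3, o-1, o-3} :
            Finset (ZMod (4*(10+K)))) := by
          intro x hx
          obtain ⟨hxA, hxp⟩ := Finset.mem_filter.mp hx
          refine keyA3 o x hoA hxA ?_
          have := val_sub_parity he2 x o
          omega
        have hsub_o : A.filter (fun a => a.val % 2 = 1) ⊆ ({e+1, e+3, e-1, e-3} :
            Finset (ZMod (4*(10+K)))) := by
          intro x hx
          obtain ⟨hxA, hxp⟩ := Finset.mem_filter.mp hx
          refine keyA3 e x heA hxA ?_
          have := val_sub_parity he2 x e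
          omega
        have h1c := (Finset.card_le_card hsub_e).trans (card_le_four ..)
        have h2c := (Finset.card_le_card hsub_o).trans (card_le_four ..)
        have hsplit := Finset.card_filter_add_card_filter_not
          (s := A) (p := fun a => a.val % 2 = 0)
        have hfo : A.filter (fun a => ¬ a.val % 2 = 0) = A.filter (fun a => a.val % 2 = 1) := by
          apply Finset.filter_congr
          intro a _
          constructor
          · intro h; simpa using Nat.mod_two_eq_zero_or_one a.val |>.resolve_left (by simpa using h)
          · intro h; omega
        rw [hfo] at hsplit
        omega
      · push_neg at hAe
        refine hpure ?_
        intro a ha b hb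
        have h1 := hAe a ha
        have h2 := hAe b hb
        omega
    · push_neg at hAo
      refine hpure ?_
      intro a ha b hb
      have h1 := hAo a ha
      have h2 := hAo b hb
      omega
  -- ### Assemble
  have himg : (SU.image Sum.inl ∪ SI.image Sum.inr) ⊆ S.toFinset := by
    intro x hx
    rcases Finset.mem_union.mp hx with hx | hx
    · obtain ⟨a, haSU, rfl⟩ := Finset.mem_image.mp hx
      exact Set.mem_toFinset.mpr ((Finset.mem_filter.mp haSU).2)
    · obtain ⟨a, haSI, rfl⟩ := Finset.mem_image.mp hx
      exact Set.mem_toFinset.mpr ((Finset.mem_filter.mp haSI).2)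
  have hdisj : Disjoint (SU.image Sum.inl) (SI.image Sum.inr) := by
    rw [Finset.disjoint_left]
    intro x hx hx'
    obtain ⟨a, _, rfl⟩ := Finset.mem_image.mp hx
    obtain ⟨b, _, hb⟩ := Finset.mem_image.mp hx'
    simp at hb
  have hcard_union : (SU.image Sum.inl ∪ SI.image Sum.inr).card = SU.card + SI.card := by
    rw [Finset.card_union_of_disjoint hdisj, Finset.card_image_of_injective _ Sum.inl_injective,
      Finset.card_image_of_injective _ Sum.inr_injective]
  have hfin : SU.card + SI.card ≤ S.toFinset.card := by
    rw [← hcard_union]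
    exact Finset.card_le_card himg
  have hncard : S.ncard = S.toFinset.card := Set.ncard_eq_toFinset_card' S
  omega
end

section
/- For every k ≥ 5, the strong metric dimension of the generalized Petersen graph GP(4k,2) equals 5k. -/
namespace GPAux

/-- outer-outer distance profile -/
def F1 (m : ℕ) : ℕ := min m (m/2 + 2 + m % 2)
/-- outer-inner -/
def Fuv (m : ℕ) : ℕ := m/2 + 1 + m % 2
/-- inner-inner -/
def Fvv (m : ℕ) : ℕ := m/2 + 3 * (m % 2)

/-- circular distance of a difference -/
def md (n : ℕ) (d : ZMod n) : ℕ := min d.val (n - d.val)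

/-- conjectured distance function on GP(n,2) -/
def fd (n : ℕ) : ZMod n ⊕ ZMod n → ZMod n ⊕ ZMod n → ℕ
  | .inl i, .inl j => F1 (md n (j - i))
  | .inl i, .inr j => Fuv (md n (j - i))
  | .inr i, .inl j => Fuv (md n (j - i))
  | .inr i, .inr j => Fvv (md n (j - i))

variable {k : ℕ}

lemma adj_ll {i j : ZMod (4*k)} :
    (GP (4*k) 2).Adj (.inl i) (.inl j) ↔ i ≠ j ∧ (j = i + 1 ∨ i = j + 1) := Iff.rfl
lemma adj_lr {i j : ZMod (4*k)} : (GP (4*k) 2).Adj (.inl i) (.inr j) ↔ i = j := Iff.rfl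
lemma adj_rl {i j : ZMod (4*k)} : (GP (4*k) 2).Adj (.inr i) (.inl j) ↔ i = j := Iff.rfl
lemma adj_rr {i j : ZMod (4*k)} :
    (GP (4*k) 2).Adj (.inr i) (.inr j) ↔
      i ≠ j ∧ (j = i + ((2:ℕ) : ZMod (4*k)) ∨ i = j + ((2:ℕ) : ZMod (4*k))) := Iff.rfl

lemma valAdd (hk : 5 ≤ k) (d : ZMod (4*k)) (c : ℕ) (hc : c < 4*k) :
    ((d + (c:ℕ)).val = d.val + c ∨ (d + (c:ℕ)).val + 4*k = d.val + c) ∧ (d + (c:ℕ)).val < 4*k := by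
  haveI : NeZero (4*k) := ⟨by omega⟩
  have h1 := ZMod.val_lt d
  have h2 : (d + (c:ℕ)).val = (d.val + c) % (4*k) := by
    rw [ZMod.val_add, ZMod.val_natCast, Nat.mod_eq_of_lt hc]
  constructor
  · rcases Nat.lt_or_ge (d.val + c) (4*k) with h | h
    · left; rw [h2, Nat.mod_eq_of_lt h]
    · right; rw [h2, Nat.mod_eq_sub_mod h, Nat.mod_eq_of_lt (by omega)]; omega
  · rw [h2]; exact Nat.mod_lt _ (by omega)

lemma valSub (hk : 5 ≤ k) (d : ZMod (4*k)) (c : ℕ) (hc : c < 4*k) :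
    ((d - (c:ℕ)).val + c = d.val ∨ (d - (c:ℕ)).val + c = d.val + 4*k) ∧ (d - (c:ℕ)).val < 4*k := by
  have h := valAdd hk (d - (c:ℕ)) c hc
  rw [sub_add_cancel] at h
  haveI : NeZero (4*k) := ⟨by omega⟩
  refine ⟨?_, ZMod.val_lt _⟩
  rcases h.1 with h' | h'
  · left; omega
  · right; omega

lemma one_lt : 5 ≤ k → 1 < 4*k := by omega

lemma cast_one (hk : 5 ≤ k) : (1 : ZMod (4*k)) = ((1:ℕ) : ZMod (4*k)) := by push_cast; rfl

lemma md_step1 (hk : 5 ≤ k) (d : ZMod (4*k)) :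
    md (4*k) (d + ((1:ℕ) : ZMod (4*k))) = md (4*k) d + 1 ∨
      md (4*k) d = md (4*k) (d + ((1:ℕ) : ZMod (4*k))) + 1 := by
  haveI : NeZero (4*k) := ⟨by omega⟩
  obtain ⟨h, hlt⟩ := valAdd hk d 1 (by omega)
  have h1 := ZMod.val_lt d
  simp only [md]
  omega

lemma md_adj1 (hk : 5 ≤ k) (d e : ZMod (4*k))
    (h : e = d + ((1:ℕ) : ZMod (4*k)) ∨ d = e + ((1:ℕ) : ZMod (4*k))) :
    md (4*k) e = md (4*k) d + 1 ∨ md (4*k) d = md (4*k) e + 1 := by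
  rcases h with h | h
  · rw [h]; exact md_step1 hk d
  · rw [h]; rcases md_step1 hk e with h' | h' <;> omega

lemma md_step2 (hk : 5 ≤ k) (d : ZMod (4*k)) :
    md (4*k) (d + ((2:ℕ) : ZMod (4*k))) = md (4*k) d + 2 ∨
      md (4*k) d = md (4*k) (d + ((2:ℕ) : ZMod (4*k))) + 2 ∨
      md (4*k) d = md (4*k) (d + ((2:ℕ) : ZMod (4*k))) := by
  haveI : NeZero (4*k) := ⟨by omega⟩
  obtain ⟨h, hlt⟩ := valAdd hk d 2 (by omega)
  have h1 := ZMod.val_lt d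
  simp only [md]
  omega

lemma md_adj2 (hk : 5 ≤ k) (d e : ZMod (4*k))
    (h : e = d + ((2:ℕ) : ZMod (4*k)) ∨ d = e + ((2:ℕ) : ZMod (4*k))) :
    md (4*k) e = md (4*k) d + 2 ∨ md (4*k) d = md (4*k) e + 2 ∨ md (4*k) d = md (4*k) e := by
  rcases h with h | h
  · rw [h]; rcases md_step2 hk d with h' | h' | h' <;> omega
  · rw [h]; rcases md_step2 hk e with h' | h' | h' <;> omega


lemma F1_lip {m m' : ℕ} (h : m' = m + 1 ∨ m = m' + 1) : F1 m ≤ F1 m' + 1 := by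
  simp only [F1]; omega
lemma Fuv_lip1 {m m' : ℕ} (h : m' = m + 1 ∨ m = m' + 1) : Fuv m ≤ Fuv m' + 1 := by
  simp only [Fuv]; omega
lemma Fuv_lip2 {m m' : ℕ} (h : m' = m + 2 ∨ m = m' + 2 ∨ m = m') : Fuv m ≤ Fuv m' + 1 := by
  simp only [Fuv]; omega
lemma Fvv_lip2 {m m' : ℕ} (h : m' = m + 2 ∨ m = m' + 2 ∨ m = m') : Fvv m ≤ Fvv m' + 1 := by
  simp only [Fvv]; omega
lemma F1_Fuv (m : ℕ) : F1 m ≤ Fuv m + 1 := by simp only [F1, Fuv]; omega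
lemma Fuv_F1 (m : ℕ) : Fuv m ≤ F1 m + 1 := by simp only [F1, Fuv]; omega
lemma Fuv_Fvv (m : ℕ) : Fuv m ≤ Fvv m + 1 := by simp only [Fuv, Fvv]; omega
lemma Fvv_Fuv (m : ℕ) : Fvv m ≤ Fuv m + 1 := by simp only [Fuv, Fvv]; omega

lemma fd_lip (hk : 5 ≤ k) (x y z : ZMod (4*k) ⊕ ZMod (4*k)) (h : (GP (4*k) 2).Adj y z) :
    fd (4*k) x y ≤ fd (4*k) x z + 1 := by
  haveI : NeZero (4*k) := ⟨by omega⟩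
  obtain (p | p) := x <;> obtain (a | a) := y <;> obtain (b | b) := z
  · obtain ⟨hne, hb | hb⟩ := adj_ll.mp h <;>
      [ (have he : b - p = (a - p) + ((1:ℕ) : ZMod (4*k)) ∨
            a - p = (b - p) + ((1:ℕ) : ZMod (4*k)) := Or.inl (by rw [hb]; push_cast; ring));
        (have he : b - p = (a - p) + ((1:ℕ) : ZMod (4*k)) ∨
            a - p = (b - p) + ((1:ℕ) : ZMod (4*k)) := Or.inr (by rw [hb]; push_cast; ring))] <;>
      (simp only [fd]; exact F1_lip (md_adj1 hk (a-p) (b-p) he))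
  · have hb := adj_lr.mp h; subst hb
    simp only [fd]; first | exact F1_Fuv _ | exact Fuv_F1 _
  · have hb := adj_rl.mp h; subst hb
    simp only [fd]; first | exact F1_Fuv _ | exact Fuv_F1 _
  · obtain ⟨hne, hb | hb⟩ := adj_rr.mp h <;>
      [ (have he : b - p = (a - p) + ((2:ℕ) : ZMod (4*k)) ∨
            a - p = (b - p) + ((2:ℕ) : ZMod (4*k)) := Or.inl (by rw [hb]; ring));
        (have he : b - p = (a - p) + ((2:ℕ) : ZMod (4*k)) ∨
            a - p = (b - p) + ((2:ℕ) : ZMod (4*k)) := Or.inr (by rw [hb]; ring))] <;>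
      (simp only [fd]; exact Fuv_lip2 (md_adj2 hk (a-p) (b-p) he))
  · obtain ⟨hne, hb | hb⟩ := adj_ll.mp h <;>
      [ (have he : b - p = (a - p) + ((1:ℕ) : ZMod (4*k)) ∨
            a - p = (b - p) + ((1:ℕ) : ZMod (4*k)) := Or.inl (by rw [hb]; push_cast; ring));
        (have he : b - p = (a - p) + ((1:ℕ) : ZMod (4*k)) ∨
            a - p = (b - p) + ((1:ℕ) : ZMod (4*k)) := Or.inr (by rw [hb]; push_cast; ring))] <;>
      (simp only [fd]; exact Fuv_lip1 (md_adj1 hk (a-p) (b-p) he))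
  · have hb := adj_lr.mp h; subst hb
    simp only [fd]; first | exact Fuv_Fvv _ | exact Fvv_Fuv _
  · have hb := adj_rl.mp h; subst hb
    simp only [fd]; first | exact Fuv_Fvv _ | exact Fvv_Fuv _
  · obtain ⟨hne, hb | hb⟩ := adj_rr.mp h <;>
      [ (have he : b - p = (a - p) + ((2:ℕ) : ZMod (4*k)) ∨
            a - p = (b - p) + ((2:ℕ) : ZMod (4*k)) := Or.inl (by rw [hb]; ring));
        (have he : b - p = (a - p) + ((2:ℕ) : ZMod (4*k)) ∨
            a - p = (b - p) + ((2:ℕ) : ZMod (4*k)) := Or.inr (by rw [hb]; ring))] <;>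
      (simp only [fd]; exact Fvv_lip2 (md_adj2 hk (a-p) (b-p) he))

lemma Fuv_lt_F1 {m : ℕ} (h : 4 ≤ m) : Fuv m < F1 m := by simp only [F1, Fuv]; omega
lemma F1_down {m m' : ℕ} (h : m' + 1 = m) (h2 : m ≤ 4) : F1 m' < F1 m := by
  simp only [F1]; omega
lemma F1_lt_Fuv {m : ℕ} (h : m ≤ 1) : F1 m < Fuv m := by simp only [F1, Fuv]; omega
lemma Fuv_down2 {m m' : ℕ} (h : m' + 2 = m) : Fuv m' < Fuv m := by simp only [Fuv]; omega
lemma Fvv_lt_Fuv {m : ℕ} (h : m % 2 = 0) : Fvv m < Fuv m := by simp only [Fuv, Fvv]; omega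
lemma Fuv_down1 {m m' : ℕ} (h : m' + 1 = m) (h2 : m % 2 = 1) : Fuv m' < Fuv m := by
  simp only [Fuv]; omega
lemma Fuv_lt_Fvv {m : ℕ} (h : m % 2 = 1) : Fuv m < Fvv m := by simp only [Fuv, Fvv]; omega
lemma Fvv_down2 {m m' : ℕ} (h : m' + 2 = m) : Fvv m' < Fvv m := by simp only [Fvv]; omega

lemma md_pos_iff (hk : 5 ≤ k) (d : ZMod (4*k)) : 0 < md (4*k) d ↔ d ≠ 0 := by
  haveI : NeZero (4*k) := ⟨by omega⟩
  have h1 := ZMod.val_lt d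
  have h2 : d = 0 ↔ d.val = 0 := by
    constructor
    · rintro rfl; exact ZMod.val_zero
    · intro h; have := ZMod.val_cast_of_lt (show 0 < 4*k by omega)
      exact (ZMod.val_eq_zero d).mp h
  simp only [md, ne_eq, h2]
  omega

lemma md_parity (hk : 5 ≤ k) (d : ZMod (4*k)) : md (4*k) d % 2 = d.val % 2 := by
  haveI : NeZero (4*k) := ⟨by omega⟩
  have h1 := ZMod.val_lt d
  simp only [md]
  omega

/-- a step decreasing the circular distance by 1 -/
lemma toward1 (hk : 5 ≤ k) (d : ZMod (4*k)) (h : d ≠ 0) :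
    ∃ e : ZMod (4*k), (e = d - ((1:ℕ) : ZMod (4*k)) ∨ e = d + ((1:ℕ) : ZMod (4*k))) ∧
      md (4*k) e + 1 = md (4*k) d := by
  haveI : NeZero (4*k) := ⟨by omega⟩
  have h1 := ZMod.val_lt d
  have h0 : d.val ≠ 0 := fun hc => h ((ZMod.val_eq_zero d).mp hc)
  rcases Nat.lt_or_ge d.val (2*k+1) with hc | hc
  · refine ⟨d - ((1:ℕ) : ZMod (4*k)), Or.inl rfl, ?_⟩
    obtain ⟨hv, hlt⟩ := valSub hk d 1 (by omega)
    simp only [md]; omega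
  · refine ⟨d + ((1:ℕ) : ZMod (4*k)), Or.inr rfl, ?_⟩
    obtain ⟨hv, hlt⟩ := valAdd hk d 1 (by omega)
    simp only [md]; omega

/-- a step decreasing the circular distance by 2 -/
lemma toward2 (hk : 5 ≤ k) (d : ZMod (4*k)) (h : 2 ≤ md (4*k) d) :
    ∃ e : ZMod (4*k), (e = d - ((2:ℕ) : ZMod (4*k)) ∨ e = d + ((2:ℕ) : ZMod (4*k))) ∧
      md (4*k) e + 2 = md (4*k) d := by
  haveI : NeZero (4*k) := ⟨by omega⟩
  have h1 := ZMod.val_lt d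
  have hm : md (4*k) d = min d.val (4*k - d.val) := rfl
  rcases Nat.lt_or_ge d.val (2*k+1) with hc | hc
  · refine ⟨d - ((2:ℕ) : ZMod (4*k)), Or.inl rfl, ?_⟩
    obtain ⟨hv, hlt⟩ := valSub hk d 2 (by omega)
    simp only [md]; omega
  · refine ⟨d + ((2:ℕ) : ZMod (4*k)), Or.inr rfl, ?_⟩
    obtain ⟨hv, hlt⟩ := valAdd hk d 2 (by omega)
    simp only [md]; omega

lemma one_ne_zero'_s13 (hk : 5 ≤ k) : (1 : ZMod (4*k)) ≠ 0 := by
  haveI : Fact (1 < 4*k) := ⟨by omega⟩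
  intro h
  have := ZMod.val_one (4*k)
  rw [h, ZMod.val_zero] at this
  omega

lemma adj_symm' {x y : ZMod (4*k) ⊕ ZMod (4*k)} (h : (GP (4*k) 2).Adj x y) :
    (GP (4*k) 2).Adj y x := h.symm

lemma fd_decr (hk : 5 ≤ k) (x y : ZMod (4*k) ⊕ ZMod (4*k)) (hne : x ≠ y) :
    ∃ z, (GP (4*k) 2).Adj y z ∧ fd (4*k) x z < fd (4*k) x y := by
  haveI : NeZero (4*k) := ⟨by omega⟩
  obtain (p | p) := x <;> obtain (a | a) := y
  · -- outer/outer
    have hd : a - p ≠ 0 := fun hc => hne (by rw [sub_eq_zero] at hc; rw [hc])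
    rcases Nat.lt_or_ge (md (4*k) (a - p)) 5 with hm | hm
    · -- outer step toward
      obtain ⟨e, he, hmd⟩ := toward1 hk (a - p) hd
      rcases he with he | he
      · refine ⟨.inl (a - ((1:ℕ) : ZMod (4*k))), ⟨?_, Or.inr (by push_cast; ring)⟩, ?_⟩
        · intro hc
          have : a - ((1:ℕ) : ZMod (4*k)) = a := hc.symm
          have h1 : (1 : ZMod (4*k)) = 0 := by
            have := sub_eq_self.mp this
            push_cast at this ⊢; exact this
          exact one_ne_zero'_s13 hk h1
        · have hrw : a - ((1:ℕ) : ZMod (4*k)) - p = e := by rw [he]; ring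
          simp only [fd, hrw]
          exact F1_down hmd (by omega)
      · refine ⟨.inl (a + ((1:ℕ) : ZMod (4*k))), ⟨?_, Or.inl (by push_cast; ring)⟩, ?_⟩
        · intro hc
          have h1 : (1 : ZMod (4*k)) = 0 := by
            have := left_eq_add.mp hc
            push_cast at this ⊢; exact this
          exact one_ne_zero'_s13 hk h1
        · have hrw : a + ((1:ℕ) : ZMod (4*k)) - p = e := by rw [he]; ring
          simp only [fd, hrw]
          exact F1_down hmd (by omega)
    · -- spoke
      exact ⟨.inr a, adj_lr.mpr rfl, by simp only [fd]; exact Fuv_lt_F1 (by omega)⟩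
  · -- outer/inner : x = inl p, y = inr a
    rcases Nat.lt_or_ge (md (4*k) (a - p)) 2 with hm | hm
    · -- spoke
      refine ⟨.inl a, adj_rl.mpr rfl, ?_⟩
      simp only [fd]
      exact F1_lt_Fuv (by omega)
    · -- inner step toward
      obtain ⟨e, he, hmd⟩ := toward2 hk (a - p) hm
      rcases he with he | he
      · refine ⟨.inr (a - ((2:ℕ) : ZMod (4*k))), adj_rr.mpr ⟨?_, Or.inr (by ring)⟩, ?_⟩
        · intro hc
          have h2 : ((2:ℕ) : ZMod (4*k)) = 0 := by
            have := sub_eq_self.mp hc.symm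
            exact this
          have hv : ((2:ℕ) : ZMod (4*k)).val = 0 := by rw [h2, ZMod.val_zero]
          rw [ZMod.val_natCast, Nat.mod_eq_of_lt (by omega)] at hv
          omega
        · have hrw : a - ((2:ℕ) : ZMod (4*k)) - p = e := by rw [he]; ring
          simp only [fd, hrw]
          exact Fuv_down2 hmd
      · refine ⟨.inr (a + ((2:ℕ) : ZMod (4*k))), adj_rr.mpr ⟨?_, Or.inl rfl⟩, ?_⟩
        · intro hc
          have h2 : ((2:ℕ) : ZMod (4*k)) = 0 := left_eq_add.mp hc
          have hv : ((2:ℕ) : ZMod (4*k)).val = 0 := by rw [h2, ZMod.val_zero]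
          rw [ZMod.val_natCast, Nat.mod_eq_of_lt (by omega)] at hv
          omega
        · have hrw : a + ((2:ℕ) : ZMod (4*k)) - p = e := by rw [he]; ring
          simp only [fd, hrw]
          exact Fuv_down2 hmd
  · -- inner/outer : x = inr p, y = inl a
    rcases eq_or_ne (md (4*k) (a - p) % 2) 0 with hm | hm
    · -- spoke
      refine ⟨.inr a, adj_lr.mpr rfl, ?_⟩
      simp only [fd]
      exact Fvv_lt_Fuv hm
    · -- outer step toward
      have hd : a - p ≠ 0 := by
        intro hc
        rw [hc] at hm
        simp [md, ZMod.val_zero] at hm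
      obtain ⟨e, he, hmd⟩ := toward1 hk (a - p) hd
      rcases he with he | he
      · refine ⟨.inl (a - ((1:ℕ) : ZMod (4*k))), ⟨?_, Or.inr (by push_cast; ring)⟩, ?_⟩
        · intro hc
          have h1 : (1 : ZMod (4*k)) = 0 := by
            have := sub_eq_self.mp hc.symm
            push_cast at this ⊢; exact this
          exact one_ne_zero'_s13 hk h1
        · have hrw : a - ((1:ℕ) : ZMod (4*k)) - p = e := by rw [he]; ring
          simp only [fd, hrw]
          exact Fuv_down1 hmd (by omega)
      · refine ⟨.inl (a + ((1:ℕ) : ZMod (4*k))), ⟨?_, Or.inl (by push_cast; ring)⟩, ?_⟩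
        · intro hc
          have h1 : (1 : ZMod (4*k)) = 0 := by
            have := left_eq_add.mp hc
            push_cast at this ⊢; exact this
          exact one_ne_zero'_s13 hk h1
        · have hrw : a + ((1:ℕ) : ZMod (4*k)) - p = e := by rw [he]; ring
          simp only [fd, hrw]
          exact Fuv_down1 hmd (by omega)
  · -- inner/inner
    have hd : a - p ≠ 0 := fun hc => hne (by rw [sub_eq_zero] at hc; rw [hc])
    rcases eq_or_ne (md (4*k) (a - p) % 2) 1 with hm | hm
    · -- spoke
      refine ⟨.inl a, adj_rl.mpr rfl, ?_⟩
      simp only [fd]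
      exact Fuv_lt_Fvv hm
    · have hm2 : 2 ≤ md (4*k) (a - p) := by
        have := (md_pos_iff hk (a - p)).mpr hd
        omega
      obtain ⟨e, he, hmd⟩ := toward2 hk (a - p) hm2
      rcases he with he | he
      · refine ⟨.inr (a - ((2:ℕ) : ZMod (4*k))), adj_rr.mpr ⟨?_, Or.inr (by ring)⟩, ?_⟩
        · intro hc
          have h2 : ((2:ℕ) : ZMod (4*k)) = 0 := sub_eq_self.mp hc.symm
          have hv : ((2:ℕ) : ZMod (4*k)).val = 0 := by rw [h2, ZMod.val_zero]
          rw [ZMod.val_natCast, Nat.mod_eq_of_lt (by omega)] at hv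
          omega
        · have hrw : a - ((2:ℕ) : ZMod (4*k)) - p = e := by rw [he]; ring
          simp only [fd, hrw]
          exact Fvv_down2 hmd
      · refine ⟨.inr (a + ((2:ℕ) : ZMod (4*k))), adj_rr.mpr ⟨?_, Or.inl rfl⟩, ?_⟩
        · intro hc
          have h2 : ((2:ℕ) : ZMod (4*k)) = 0 := left_eq_add.mp hc
          have hv : ((2:ℕ) : ZMod (4*k)).val = 0 := by rw [h2, ZMod.val_zero]
          rw [ZMod.val_natCast, Nat.mod_eq_of_lt (by omega)] at hv
          omega
        · have hrw : a + ((2:ℕ) : ZMod (4*k)) - p = e := by rw [he]; ring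
          simp only [fd, hrw]
          exact Fvv_down2 hmd

lemma fd_self (hk : 5 ≤ k) (x : ZMod (4*k) ⊕ ZMod (4*k)) : fd (4*k) x x = 0 := by
  haveI : NeZero (4*k) := ⟨by omega⟩
  obtain (p | p) := x <;>
    simp [fd, md, F1, Fvv, sub_self, ZMod.val_zero, Nat.zero_div]

lemma exists_walk_le (hk : 5 ≤ k) (x y : ZMod (4*k) ⊕ ZMod (4*k)) :
    ∃ p : (GP (4*k) 2).Walk x y, p.length ≤ fd (4*k) x y := by
  generalize hN : fd (4*k) x y = N
  induction N using Nat.strong_induction_on generalizing y with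
  | _ N ih =>
    by_cases hxy : x = y
    · subst hxy; exact ⟨.nil, by simp⟩
    · obtain ⟨z, hadj, hlt⟩ := fd_decr hk x y hxy
      rw [hN] at hlt
      obtain ⟨p, hp⟩ := ih (fd (4*k) x z) hlt z rfl
      exact ⟨p.append ((adj_symm' hadj).toWalk), by
        rw [SimpleGraph.Walk.length_append]
        simp only [SimpleGraph.Walk.length_cons, SimpleGraph.Walk.length_nil]
        omega⟩

lemma gp_connected_s13 (hk : 5 ≤ k) : (GP (4*k) 2).Connected := by
  haveI : NeZero (4*k) := ⟨by omega⟩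
  refine SimpleGraph.Connected.mk ?_
  intro x y
  obtain ⟨p, _⟩ := exists_walk_le hk x y
  exact ⟨p⟩

lemma md_neg (hk : 5 ≤ k) (d : ZMod (4*k)) : md (4*k) (-d) = md (4*k) d := by
  haveI : NeZero (4*k) := ⟨by omega⟩
  have h1 := ZMod.val_lt d
  have h2 := ZMod.neg_val d
  have h3 : d = 0 → d.val = 0 := fun hc => by rw [hc]; exact ZMod.val_zero
  simp only [md]
  by_cases hc : d = 0
  · subst hc; simp
  · simp only [hc, if_false] at h2
    have h4 : d.val ≠ 0 := fun hz => hc ((ZMod.val_eq_zero d).mp hz)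
    omega

lemma fd_symm (hk : 5 ≤ k) (x y : ZMod (4*k) ⊕ ZMod (4*k)) :
    fd (4*k) x y = fd (4*k) y x := by
  obtain (p | p) := x <;> obtain (a | a) := y <;>
    (simp only [fd]; rw [← md_neg hk, neg_sub])

lemma fd_le_walk (hk : 5 ≤ k) (x y : ZMod (4*k) ⊕ ZMod (4*k)) (p : (GP (4*k) 2).Walk x y) :
    fd (4*k) x y ≤ p.length := by
  induction p with
  | nil => simp [fd_self hk]
  | @cons u v w h' q ih =>
    calc fd (4*k) u w = fd (4*k) w u := fd_symm hk u w
    _ ≤ fd (4*k) w v + 1 := fd_lip hk w u v h'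
    _ = fd (4*k) v w + 1 := by rw [fd_symm hk]
    _ ≤ _ := by simp only [SimpleGraph.Walk.length_cons]; omega

theorem dist_eq_fd (hk : 5 ≤ k) (x y : ZMod (4*k) ⊕ ZMod (4*k)) :
    (GP (4*k) 2).dist x y = fd (4*k) x y := by
  refine le_antisymm ?_ ?_
  · obtain ⟨p, hp⟩ := exists_walk_le hk x y
    exact (SimpleGraph.dist_le p).trans hp
  · obtain ⟨p, hp⟩ := ((gp_connected_s13 hk) x y).exists_walk_length_eq_dist
    rw [← hp]
    exact fd_le_walk hk x y p

end GPAux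

namespace GPAux

open SimpleGraph

section General

variable {V : Type*} {G : SimpleGraph V}

lemma exists_adj_dist_pred (hconn : G.Connected) {x y : V} (hne : x ≠ y) :
    ∃ z, G.Adj y z ∧ G.dist x z + 1 = G.dist x y := by
  have hd : G.dist x y ≠ 0 := (hconn.pos_dist_of_ne hne).ne'
  obtain ⟨p, hp⟩ := SimpleGraph.exists_walk_of_dist_ne_zero hd
  have hlen : p.reverse.length = G.dist x y := by rw [SimpleGraph.Walk.length_reverse, hp]
  cases hq : p.reverse with
  | nil => exact absurd rfl hne.symm
  | @cons _ z _ h' q' =>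
    refine ⟨z, h', ?_⟩
    rw [hq] at hlen
    simp only [SimpleGraph.Walk.length_cons] at hlen
    have h1 : G.dist x z ≤ q'.length := by
      rw [SimpleGraph.dist_comm]; exact SimpleGraph.dist_le q'
    have h2 : G.dist x y ≤ G.dist x z + G.dist z y := hconn.dist_triangle
    have h3 : G.dist z y ≤ 1 := by
      have := SimpleGraph.dist_le (h'.symm.toWalk)
      simpa using this
    omega

lemma mmd_necessary (hconn : G.Connected) {S : Set V} (hS : IsStrongResolvingSet G S)
    {u v : V} (h : MutuallyMaximallyDistant G u v) : u ∈ S ∨ v ∈ S := by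
  obtain ⟨hne, h1, h2⟩ := h
  obtain ⟨w, hwS, hres⟩ := hS u v hne
  by_cases hwu : w = u
  · subst hwu; exact Or.inl hwS
  by_cases hwv : w = v
  · subst hwv; exact Or.inr hwS
  exfalso
  rcases hres with hr | hr
  · obtain ⟨z, hadj, hz⟩ := exists_adj_dist_pred hconn hwv
    have ha : G.dist u z ≤ G.dist u v := h2 z hadj
    have ht : G.dist w u ≤ G.dist w z + G.dist z u := hconn.dist_triangle
    have hc1 : G.dist z u = G.dist u z := SimpleGraph.dist_comm
    have hc2 : G.dist v u = G.dist u v := SimpleGraph.dist_comm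
    omega
  · obtain ⟨z, hadj, hz⟩ := exists_adj_dist_pred hconn hwu
    have ha : G.dist z v ≤ G.dist u v := h1 z hadj
    have ht : G.dist w v ≤ G.dist w z + G.dist z v := hconn.dist_triangle
    omega

lemma mmd_sufficient [Fintype V] (hconn : G.Connected) {S : Set V}
    (hcov : ∀ u v, MutuallyMaximallyDistant G u v → u ∈ S ∨ v ∈ S) :
    IsStrongResolvingSet G S := by
  intro u v hne
  classical
  set P1 : Finset V := Finset.univ.filter (fun x => G.dist x v = G.dist x u + G.dist u v)
    with hP1
  have huP1 : u ∈ P1 := by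
    simp [hP1, SimpleGraph.dist_self]
  obtain ⟨us, husP, hmax1⟩ := P1.exists_max_image (fun x => G.dist x v) ⟨u, huP1⟩
  have hus : G.dist us v = G.dist us u + G.dist u v := by
    simpa [hP1] using husP
  have MD1 : ∀ w, G.Adj us w → G.dist w v ≤ G.dist us v := by
    intro w hadj
    by_contra hgt
    push_neg at hgt
    have htri : G.dist w v ≤ G.dist w us + G.dist us v := hconn.dist_triangle
    have hadj1 : G.dist w us ≤ 1 := by
      have := SimpleGraph.dist_le (hadj.symm.toWalk); simpa using this
    have heq : G.dist w v = G.dist us v + 1 := by omega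
    have hwP1 : w ∈ P1 := by
      simp only [hP1, Finset.mem_filter, Finset.mem_univ, true_and]
      have htr2 : G.dist w v ≤ G.dist w u + G.dist u v := hconn.dist_triangle
      have htr3 : G.dist w u ≤ G.dist w us + G.dist us u := hconn.dist_triangle
      omega
    have := hmax1 w hwP1
    omega
  set P2 : Finset V := Finset.univ.filter (fun y => G.dist us y = G.dist us v + G.dist v y)
    with hP2
  have hvP2 : v ∈ P2 := by simp [hP2, SimpleGraph.dist_self]
  obtain ⟨vs, hvsP, hmax2⟩ := P2.exists_max_image (fun y => G.dist us y) ⟨v, hvP2⟩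
  have hvs : G.dist us vs = G.dist us v + G.dist v vs := by simpa [hP2] using hvsP
  have MD2 : ∀ w, G.Adj vs w → G.dist us w ≤ G.dist us vs := by
    intro w hadj
    by_contra hgt
    push_neg at hgt
    have htri : G.dist us w ≤ G.dist us vs + G.dist vs w := hconn.dist_triangle
    have hadj1 : G.dist vs w ≤ 1 := by
      have := SimpleGraph.dist_le (hadj.toWalk); simpa using this
    have heq : G.dist us w = G.dist us vs + 1 := by omega
    have hwP2 : w ∈ P2 := by
      simp only [hP2, Finset.mem_filter, Finset.mem_univ, true_and]
      have htr2 : G.dist us w ≤ G.dist us v + G.dist v w := hconn.dist_triangle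
      have htr3 : G.dist v w ≤ G.dist v vs + G.dist vs w := hconn.dist_triangle
      omega
    have := hmax2 w hwP2
    omega
  have MD3 : ∀ w, G.Adj us w → G.dist w vs ≤ G.dist us vs := by
    intro w hadj
    have htri : G.dist w vs ≤ G.dist w v + G.dist v vs := hconn.dist_triangle
    have h1 := MD1 w hadj
    omega
  have hposuv : 0 < G.dist u v := hconn.pos_dist_of_ne hne
  have hne2 : us ≠ vs := by
    intro hc
    rw [hc] at hvs hus
    rw [SimpleGraph.dist_self] at hvs
    omega
  have hmmd : MutuallyMaximallyDistant G us vs := ⟨hne2, MD3, MD2⟩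
  rcases hcov us vs hmmd with hmem | hmem
  · exact ⟨us, hmem, Or.inr hus⟩
  · refine ⟨vs, hmem, Or.inl ?_⟩
    have htr1 : G.dist vs u ≤ G.dist vs v + G.dist v u := hconn.dist_triangle
    have htr2 : G.dist us vs ≤ G.dist us u + G.dist u vs := hconn.dist_triangle
    have hc1 : G.dist vs u = G.dist u vs := SimpleGraph.dist_comm
    have hc2 : G.dist vs v = G.dist v vs := SimpleGraph.dist_comm
    have hc3 : G.dist v u = G.dist u v := SimpleGraph.dist_comm
    omega

end General

lemma mmd_symm {V : Type*} {G : SimpleGraph V} {u v : V}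
    (h : MutuallyMaximallyDistant G u v) : MutuallyMaximallyDistant G v u := by
  obtain ⟨hne, h1, h2⟩ := h
  refine ⟨hne.symm, fun w hw => ?_, fun w hw => ?_⟩
  · have e2 : G.dist v u = G.dist u v := SimpleGraph.dist_comm
    have e4 : G.dist w u = G.dist u w := SimpleGraph.dist_comm
    have := h2 w hw
    omega
  · have e2 : G.dist v u = G.dist u v := SimpleGraph.dist_comm
    have e3 : G.dist w v = G.dist v w := SimpleGraph.dist_comm
    have e4 : G.dist w u = G.dist u w := SimpleGraph.dist_comm
    have := h1 w hw
    omega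

variable {k : ℕ}

lemma md_le (hk : 5 ≤ k) (d : ZMod (4*k)) : md (4*k) d ≤ 2*k := by
  haveI : NeZero (4*k) := ⟨by omega⟩
  have h1 := ZMod.val_lt d
  simp only [md]; omega

/-- step increasing the circular distance by 1 -/
lemma away1 (hk : 5 ≤ k) (d : ZMod (4*k)) (h : md (4*k) d ≤ 2*k - 1) :
    ∃ e : ZMod (4*k), (e = d - ((1:ℕ) : ZMod (4*k)) ∨ e = d + ((1:ℕ) : ZMod (4*k))) ∧
      md (4*k) e = md (4*k) d + 1 := by
  haveI : NeZero (4*k) := ⟨by omega⟩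
  have h1 := ZMod.val_lt d
  have hmd : md (4*k) d = min d.val (4*k - d.val) := rfl
  rcases Nat.lt_or_ge d.val (2*k) with hc | hc
  · refine ⟨d + ((1:ℕ) : ZMod (4*k)), Or.inr rfl, ?_⟩
    obtain ⟨hv, hlt⟩ := valAdd hk d 1 (by omega)
    simp only [md]; omega
  · refine ⟨d - ((1:ℕ) : ZMod (4*k)), Or.inl rfl, ?_⟩
    have hc' : 2*k + 1 ≤ d.val := by simp only [md] at h; omega
    obtain ⟨hv, hlt⟩ := valSub hk d 1 (by omega)
    simp only [md]; omega

/-- step increasing the circular distance by 2 -/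
lemma away2 (hk : 5 ≤ k) (d : ZMod (4*k)) (h : md (4*k) d ≤ 2*k - 2) :
    ∃ e : ZMod (4*k), (e = d - ((2:ℕ) : ZMod (4*k)) ∨ e = d + ((2:ℕ) : ZMod (4*k))) ∧
      md (4*k) e = md (4*k) d + 2 := by
  haveI : NeZero (4*k) := ⟨by omega⟩
  have h1 := ZMod.val_lt d
  have hmd : md (4*k) d = min d.val (4*k - d.val) := rfl
  rcases Nat.lt_or_ge d.val (2*k) with hc | hc
  · refine ⟨d + ((2:ℕ) : ZMod (4*k)), Or.inr rfl, ?_⟩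
    obtain ⟨hv, hlt⟩ := valAdd hk d 2 (by omega)
    simp only [md]; omega
  · refine ⟨d - ((2:ℕ) : ZMod (4*k)), Or.inl rfl, ?_⟩
    have hc' : 2*k + 2 ≤ d.val := by simp only [md] at h; omega
    obtain ⟨hv, hlt⟩ := valSub hk d 2 (by omega)
    simp only [md]; omega

lemma F1_bound {m m' : ℕ} (hk : 5 ≤ k) (h : m = 5 ∨ m = 2*k - 5 ∨ m = 2*k)
    (hrel : m = m' + 1 ∨ m' = m + 1) (hle : m' ≤ 2*k) : F1 m' ≤ F1 m := by
  simp only [F1]; omega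

lemma Fuv_le_F1_at {m : ℕ} (hk : 5 ≤ k) (h : m = 5 ∨ m = 2*k - 5 ∨ m = 2*k) :
    Fuv m ≤ F1 m := by
  simp only [F1, Fuv]; omega

lemma Fvv_bound {m m' : ℕ} (hk : 5 ≤ k) (h : m = 2*k - 1)
    (hrel : m = m' + 2 ∨ m' = m + 2 ∨ m' = m) (hle : m' ≤ 2*k) : Fvv m' ≤ Fvv m := by
  simp only [Fvv]; omega

lemma Fuv_le_Fvv_at {m : ℕ} (hk : 5 ≤ k) (h : m = 2*k - 1) : Fuv m ≤ Fvv m := by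
  simp only [Fuv, Fvv]; omega

/-- the positive MMD lemma for outer pairs -/
lemma mmd_uu (hk : 5 ≤ k) (i j : ZMod (4*k))
    (h : md (4*k) (j - i) = 5 ∨ md (4*k) (j - i) = 2*k - 5 ∨ md (4*k) (j - i) = 2*k) :
    MutuallyMaximallyDistant (GP (4*k) 2) (Sum.inl i) (Sum.inl j) := by
  haveI : NeZero (4*k) := ⟨by omega⟩
  have hne : (Sum.inl i : ZMod (4*k) ⊕ ZMod (4*k)) ≠ Sum.inl j := by
    intro hc
    have : i = j := by injection hc
    subst this
    simp [md, sub_self, ZMod.val_zero] at h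
    omega
  refine ⟨hne, ?_, ?_⟩
  · -- neighbors of inl i
    intro w hw
    rw [dist_eq_fd hk, dist_eq_fd hk]
    obtain (b | b) := w
    · obtain ⟨hne', hb | hb⟩ := adj_ll.mp hw
      · subst hb
        have h5 : j - (i + 1) = (j - i) - ((1:ℕ) : ZMod (4*k)) := by push_cast; ring
        simp only [fd, h5]
        refine F1_bound hk h ?_ (md_le hk _)
        have := md_adj1 hk ((j - i) - ((1:ℕ) : ZMod (4*k))) (j - i)
          (Or.inl (by rw [sub_add_cancel]))
        tauto
      · subst hb
        have h5 : j - b = (j - (b+1)) + ((1:ℕ) : ZMod (4*k)) := by push_cast; ring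
        simp only [fd, h5]
        refine F1_bound hk h ?_ (md_le hk _)
        have := md_adj1 hk (j - (b+1)) ((j - (b+1)) + ((1:ℕ) : ZMod (4*k))) (Or.inl rfl)
        tauto
    · have hb := adj_lr.mp hw; subst hb
      simp only [fd]
      exact Fuv_le_F1_at hk h
  · -- neighbors of inl j
    intro w hw
    rw [dist_eq_fd hk, dist_eq_fd hk]
    obtain (b | b) := w
    · obtain ⟨hne', hb | hb⟩ := adj_ll.mp hw
      · subst hb
        have h5 : (j + 1) - i = (j - i) + ((1:ℕ) : ZMod (4*k)) := by push_cast; ring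
        simp only [fd, h5]
        refine F1_bound hk h ?_ (md_le hk _)
        have := md_adj1 hk (j - i) ((j - i) + ((1:ℕ) : ZMod (4*k))) (Or.inl rfl)
        tauto
      · -- j = b + 1, so b = j - 1
        have hb' : b = j - 1 := by rw [hb]; ring
        subst hb'
        have h5 : (j - 1) - i = (j - i) - ((1:ℕ) : ZMod (4*k)) := by push_cast; ring
        simp only [fd, h5]
        refine F1_bound hk h ?_ (md_le hk _)
        have := md_adj1 hk ((j - i) - ((1:ℕ) : ZMod (4*k))) (j - i)
          (Or.inl (by rw [sub_add_cancel]))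
        tauto
    · have hb := adj_lr.mp hw; subst hb
      simp only [fd]
      exact Fuv_le_F1_at hk h

/-- the positive MMD lemma for inner pairs -/
lemma mmd_vv (hk : 5 ≤ k) (i j : ZMod (4*k)) (h : md (4*k) (j - i) = 2*k - 1) :
    MutuallyMaximallyDistant (GP (4*k) 2) (Sum.inr i) (Sum.inr j) := by
  haveI : NeZero (4*k) := ⟨by omega⟩
  have hne : (Sum.inr i : ZMod (4*k) ⊕ ZMod (4*k)) ≠ Sum.inr j := by
    intro hc
    have : i = j := by injection hc
    subst this
    simp [md, sub_self, ZMod.val_zero] at h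
    omega
  refine ⟨hne, ?_, ?_⟩
  · intro w hw
    rw [dist_eq_fd hk, dist_eq_fd hk]
    obtain (b | b) := w
    · have hb := adj_rl.mp hw; subst hb
      simp only [fd]
      exact Fuv_le_Fvv_at hk h
    · obtain ⟨hne', hb | hb⟩ := adj_rr.mp hw
      · subst hb
        have h5 : j - (i + ((2:ℕ) : ZMod (4*k))) = (j - i) - ((2:ℕ) : ZMod (4*k)) := by ring
        simp only [fd, h5]
        refine Fvv_bound hk h ?_ (md_le hk _)
        have := md_adj2 hk ((j - i) - ((2:ℕ) : ZMod (4*k))) (j - i)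
          (Or.inl (by rw [sub_add_cancel]))
        tauto
      · subst hb
        have h5 : j - b = (j - (b + ((2:ℕ) : ZMod (4*k)))) + ((2:ℕ) : ZMod (4*k)) := by ring
        simp only [fd, h5]
        refine Fvv_bound hk h ?_ (md_le hk _)
        have := md_adj2 hk (j - (b + ((2:ℕ) : ZMod (4*k))))
          ((j - (b + ((2:ℕ) : ZMod (4*k)))) + ((2:ℕ) : ZMod (4*k))) (Or.inl rfl)
        tauto
  · intro w hw
    rw [dist_eq_fd hk, dist_eq_fd hk]
    obtain (b | b) := w
    · have hb := adj_rl.mp hw; subst hb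
      simp only [fd]
      exact Fuv_le_Fvv_at hk h
    · obtain ⟨hne', hb | hb⟩ := adj_rr.mp hw
      · subst hb
        have h5 : (j + ((2:ℕ) : ZMod (4*k))) - i = (j - i) + ((2:ℕ) : ZMod (4*k)) := by ring
        simp only [fd, h5]
        refine Fvv_bound hk h ?_ (md_le hk _)
        have := md_adj2 hk (j - i) ((j - i) + ((2:ℕ) : ZMod (4*k))) (Or.inl rfl)
        tauto
      · have hb' : b = j - ((2:ℕ) : ZMod (4*k)) := by rw [hb]; ring
        subst hb'
        have h5 : (j - ((2:ℕ) : ZMod (4*k))) - i = (j - i) - ((2:ℕ) : ZMod (4*k)) := by ring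
        simp only [fd, h5]
        refine Fvv_bound hk h ?_ (md_le hk _)
        have := md_adj2 hk ((j - i) - ((2:ℕ) : ZMod (4*k))) (j - i)
          (Or.inl (by rw [sub_add_cancel]))
        tauto

lemma ne_add_one (hk : 5 ≤ k) (i : ZMod (4*k)) : i ≠ i + 1 := by
  intro hc
  exact one_ne_zero'_s13 hk (left_eq_add.mp hc)

lemma ne_sub_one (hk : 5 ≤ k) (i : ZMod (4*k)) : i ≠ i - 1 := by
  intro hc
  have : (1 : ZMod (4*k)) = 0 := by
    have := sub_eq_self.mp hc.symm
    exact this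
  exact one_ne_zero'_s13 hk this

lemma two_ne_zero'' (hk : 5 ≤ k) : ((2:ℕ) : ZMod (4*k)) ≠ 0 := by
  haveI : NeZero (4*k) := ⟨by omega⟩
  intro hc
  have hv : ((2:ℕ) : ZMod (4*k)).val = 0 := by rw [hc, ZMod.val_zero]
  rw [ZMod.val_natCast, Nat.mod_eq_of_lt (by omega)] at hv
  omega

lemma ne_add_two (hk : 5 ≤ k) (i : ZMod (4*k)) : i ≠ i + ((2:ℕ) : ZMod (4*k)) := by
  intro hc
  exact two_ne_zero'' hk (left_eq_add.mp hc)

lemma ne_sub_two (hk : 5 ≤ k) (i : ZMod (4*k)) : i ≠ i - ((2:ℕ) : ZMod (4*k)) := by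
  intro hc
  exact two_ne_zero'' hk (sub_eq_self.mp hc.symm)

lemma not_mmd_uu (hk : 5 ≤ k) (i j : ZMod (4*k)) (heven : md (4*k) (j - i) % 2 = 0)
    (hle : md (4*k) (j - i) ≤ 2*k - 2) :
    ¬ MutuallyMaximallyDistant (GP (4*k) 2) (Sum.inl i) (Sum.inl j) := by
  haveI : NeZero (4*k) := ⟨by omega⟩
  rintro ⟨hne, c1, c2⟩
  obtain ⟨e, he, hme⟩ := away1 hk (j - i) (by omega)
  rcases he with he | he
  · -- e = d - 1, neighbor i+1
    have hadj : (GP (4*k) 2).Adj (Sum.inl i) (Sum.inl (i+1)) :=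
      adj_ll.mpr ⟨ne_add_one hk i, Or.inl rfl⟩
    have hc := c1 (Sum.inl (i+1)) hadj
    rw [dist_eq_fd hk, dist_eq_fd hk] at hc
    have h5 : j - (i + 1) = e := by rw [he]; push_cast; ring
    simp only [fd, h5] at hc
    simp only [F1] at hc
    omega
  · -- e = d + 1, neighbor i-1
    have hadj : (GP (4*k) 2).Adj (Sum.inl i) (Sum.inl (i-1)) :=
      adj_ll.mpr ⟨ne_sub_one hk i, Or.inr (by rw [sub_add_cancel])⟩
    have hc := c1 (Sum.inl (i-1)) hadj
    rw [dist_eq_fd hk, dist_eq_fd hk] at hc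
    have h5 : j - (i - 1) = e := by rw [he]; push_cast; ring
    simp only [fd, h5] at hc
    simp only [F1] at hc
    omega

lemma not_mmd_uv (hk : 5 ≤ k) (i j : ZMod (4*k)) (heven : md (4*k) (j - i) % 2 = 0) :
    ¬ MutuallyMaximallyDistant (GP (4*k) 2) (Sum.inl i) (Sum.inr j) := by
  haveI : NeZero (4*k) := ⟨by omega⟩
  rintro ⟨hne, c1, c2⟩
  have hle := md_le hk (j - i)
  rcases Nat.lt_or_ge (md (4*k) (j - i)) (2*k - 1) with hm | hm
  · obtain ⟨e, he, hme⟩ := away2 hk (j - i) (by omega)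
    rcases he with he | he
    · have hadj : (GP (4*k) 2).Adj (Sum.inr j) (Sum.inr (j - ((2:ℕ) : ZMod (4*k)))) :=
        adj_rr.mpr ⟨ne_sub_two hk j, Or.inr (by rw [sub_add_cancel])⟩
      have hc := c2 _ hadj
      rw [dist_eq_fd hk, dist_eq_fd hk] at hc
      have h5 : j - ((2:ℕ) : ZMod (4*k)) - i = e := by rw [he]; ring
      simp only [fd, h5] at hc
      simp only [Fuv] at hc
      omega
    · have hadj : (GP (4*k) 2).Adj (Sum.inr j) (Sum.inr (j + ((2:ℕ) : ZMod (4*k)))) :=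
        adj_rr.mpr ⟨ne_add_two hk j, Or.inl rfl⟩
      have hc := c2 _ hadj
      rw [dist_eq_fd hk, dist_eq_fd hk] at hc
      have h5 : j + ((2:ℕ) : ZMod (4*k)) - i = e := by rw [he]; ring
      simp only [fd, h5] at hc
      simp only [Fuv] at hc
      omega
  · -- md = 2k (even), use spoke
    have hmd : md (4*k) (j - i) = 2*k := by omega
    have hadj : (GP (4*k) 2).Adj (Sum.inr j) (Sum.inl j) := adj_rl.mpr rfl
    have hc := c2 _ hadj
    rw [dist_eq_fd hk, dist_eq_fd hk] at hc
    simp only [fd, hmd] at hc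
    simp only [F1, Fuv] at hc
    omega

lemma not_mmd_vv (hk : 5 ≤ k) (i j : ZMod (4*k)) (heven : md (4*k) (j - i) % 2 = 0)
    (hpos : 1 ≤ md (4*k) (j - i)) :
    ¬ MutuallyMaximallyDistant (GP (4*k) 2) (Sum.inr i) (Sum.inr j) := by
  haveI : NeZero (4*k) := ⟨by omega⟩
  rintro ⟨hne, c1, c2⟩
  have hle := md_le hk (j - i)
  rcases Nat.lt_or_ge (md (4*k) (j - i)) (2*k - 1) with hm | hm
  · obtain ⟨e, he, hme⟩ := away2 hk (j - i) (by omega)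
    rcases he with he | he
    · have hadj : (GP (4*k) 2).Adj (Sum.inr j) (Sum.inr (j - ((2:ℕ) : ZMod (4*k)))) :=
        adj_rr.mpr ⟨ne_sub_two hk j, Or.inr (by rw [sub_add_cancel])⟩
      have hc := c2 _ hadj
      rw [dist_eq_fd hk, dist_eq_fd hk] at hc
      have h5 : j - ((2:ℕ) : ZMod (4*k)) - i = e := by rw [he]; ring
      simp only [fd, h5] at hc
      simp only [Fvv] at hc
      omega
    · have hadj : (GP (4*k) 2).Adj (Sum.inr j) (Sum.inr (j + ((2:ℕ) : ZMod (4*k)))) :=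
        adj_rr.mpr ⟨ne_add_two hk j, Or.inl rfl⟩
      have hc := c2 _ hadj
      rw [dist_eq_fd hk, dist_eq_fd hk] at hc
      have h5 : j + ((2:ℕ) : ZMod (4*k)) - i = e := by rw [he]; ring
      simp only [fd, h5] at hc
      simp only [Fvv] at hc
      omega
  · have hmd : md (4*k) (j - i) = 2*k := by omega
    have hadj : (GP (4*k) 2).Adj (Sum.inr j) (Sum.inl j) := adj_rl.mpr rfl
    have hc := c2 _ hadj
    rw [dist_eq_fd hk, dist_eq_fd hk] at hc
    simp only [fd, hmd] at hc
    simp only [Fuv, Fvv] at hc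
    omega

/-- the independent set: outer even vertices below `2k`, all even inner vertices -/
def IFin (k : ℕ) : Finset (ZMod (4*k) ⊕ ZMod (4*k)) :=
  ((Finset.range k).image fun t => Sum.inl ((2*t : ℕ) : ZMod (4*k))) ∪
  ((Finset.range (2*k)).image fun t => Sum.inr ((2*t : ℕ) : ZMod (4*k)))

lemma card_IFin (hk : 5 ≤ k) : (IFin k).card = 3*k := by
  haveI : NeZero (4*k) := ⟨by omega⟩
  rw [IFin, Finset.card_union_of_disjoint, Finset.card_image_of_injOn,
    Finset.card_image_of_injOn, Finset.card_range, Finset.card_range]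
  · omega
  · intro s hs t ht hst
    simp only [Finset.mem_coe, Finset.mem_range] at hs ht
    have h1 : ((2*s : ℕ) : ZMod (4*k)).val = 2*s := by
      rw [ZMod.val_natCast, Nat.mod_eq_of_lt (by omega)]
    have h2 : ((2*t : ℕ) : ZMod (4*k)).val = 2*t := by
      rw [ZMod.val_natCast, Nat.mod_eq_of_lt (by omega)]
    have : ((2*s : ℕ) : ZMod (4*k)) = ((2*t : ℕ) : ZMod (4*k)) := by injection hst
    rw [this] at h1; omega
  · intro s hs t ht hst
    simp only [Finset.mem_coe, Finset.mem_range] at hs ht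
    have h1 : ((2*s : ℕ) : ZMod (4*k)).val = 2*s := by
      rw [ZMod.val_natCast, Nat.mod_eq_of_lt (by omega)]
    have h2 : ((2*t : ℕ) : ZMod (4*k)).val = 2*t := by
      rw [ZMod.val_natCast, Nat.mod_eq_of_lt (by omega)]
    have : ((2*s : ℕ) : ZMod (4*k)) = ((2*t : ℕ) : ZMod (4*k)) := by injection hst
    rw [this] at h1; omega
  · simp only [Finset.disjoint_left, Finset.mem_image, Finset.mem_range]
    rintro x ⟨s, hs, rfl⟩ ⟨t, ht, hc⟩
    exact absurd hc (by simp)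

lemma mem_IFin_iff (hk : 5 ≤ k) (x : ZMod (4*k) ⊕ ZMod (4*k)) :
    x ∈ IFin k ↔ (∃ i, x = Sum.inl i ∧ i.val % 2 = 0 ∧ i.val < 2*k) ∨
      (∃ i, x = Sum.inr i ∧ i.val % 2 = 0) := by
  haveI : NeZero (4*k) := ⟨by omega⟩
  constructor
  · intro hx
    simp only [IFin, Finset.mem_union, Finset.mem_image, Finset.mem_range] at hx
    rcases hx with ⟨t, ht, rfl⟩ | ⟨t, ht, rfl⟩
    · left
      have hval : ((2*t : ℕ) : ZMod (4*k)).val = 2*t := by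
        rw [ZMod.val_natCast, Nat.mod_eq_of_lt (by omega)]
      exact ⟨_, rfl, by rw [hval]; omega, by rw [hval]; omega⟩
    · right
      have hval : ((2*t : ℕ) : ZMod (4*k)).val = 2*t := by
        rw [ZMod.val_natCast, Nat.mod_eq_of_lt (by omega)]
      exact ⟨_, rfl, by rw [hval]; omega⟩
  · intro hx
    simp only [IFin, Finset.mem_union, Finset.mem_image, Finset.mem_range]
    have hcast : ∀ i : ZMod (4*k), ((i.val : ℕ) : ZMod (4*k)) = i :=
      fun i => ZMod.natCast_rightInverse i
    rcases hx with ⟨i, rfl, hpar, hlt⟩ | ⟨i, rfl, hpar⟩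
    · left
      refine ⟨i.val / 2, by omega, ?_⟩
      rw [show 2 * (i.val / 2) = i.val by omega, hcast]
    · right
      have hv := ZMod.val_lt i
      refine ⟨i.val / 2, by omega, ?_⟩
      rw [show 2 * (i.val / 2) = i.val by omega, hcast]

lemma val_sub_rel (hk : 5 ≤ k) (i j : ZMod (4*k)) :
    (j - i).val + i.val = j.val ∨ (j - i).val + i.val = j.val + 4*k := by
  haveI : NeZero (4*k) := ⟨by omega⟩
  have h1 := ZMod.val_lt i
  have h2 := ZMod.val_lt j
  have h3 := ZMod.val_lt (j - i)
  have h4 : i + (j - i) = j := by ring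
  have h5 : (i + (j - i)).val = (i.val + (j - i).val) % (4*k) := ZMod.val_add _ _
  rw [h4] at h5
  rcases Nat.lt_or_ge (i.val + (j - i).val) (4*k) with h | h
  · rw [Nat.mod_eq_of_lt h] at h5; omega
  · rw [Nat.mod_eq_sub_mod h, Nat.mod_eq_of_lt (by omega)] at h5; omega

lemma md_from_vals (hk : 5 ≤ k) (i j : ZMod (4*k)) :
    md (4*k) (j - i) % 2 = (i.val + j.val) % 2 ∧
    (i.val < 2*k → j.val < 2*k → i ≠ j → (1 ≤ md (4*k) (j - i) ∧ md (4*k) (j - i) ≤ 2*k - 1)) := by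
  haveI : NeZero (4*k) := ⟨by omega⟩
  have h1 := ZMod.val_lt i
  have h2 := ZMod.val_lt j
  have h3 := ZMod.val_lt (j - i)
  have h4 := val_sub_rel hk i j
  have h5 : i ≠ j → (j - i).val ≠ 0 := by
    intro hne hc
    have hz : j - i = 0 := (ZMod.val_eq_zero (j-i)).mp hc
    rw [sub_eq_zero] at hz
    exact hne hz.symm
  constructor
  · simp only [md]; omega
  · intro hi hj hne
    have := h5 hne
    simp only [md]; omega

lemma upper_srs (hk : 5 ≤ k) :
    IsStrongResolvingSet (GP (4*k) 2) ((↑(IFin k) : Set (ZMod (4*k) ⊕ ZMod (4*k)))ᶜ) := by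
  haveI : NeZero (4*k) := ⟨by omega⟩
  apply mmd_sufficient (gp_connected_s13 hk)
  intro u v hmmd
  by_contra hcon
  push_neg at hcon
  obtain ⟨hu, hv⟩ := hcon
  rw [Set.notMem_compl_iff] at hu hv
  rw [Finset.mem_coe, mem_IFin_iff hk] at hu hv
  rcases hu with ⟨i, rfl, hip, hib⟩ | ⟨i, rfl, hip⟩ <;>
    rcases hv with ⟨j, rfl, hjp, hjb⟩ | ⟨j, rfl, hjp⟩
  · -- outer/outer
    have hne : i ≠ j := fun hc => hmmd.1 (by rw [hc])
    obtain ⟨hpar, hbnd⟩ := md_from_vals hk i j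
    have hb := hbnd hib hjb hne
    exact not_mmd_uu hk i j (by omega) (by omega) hmmd
  · -- outer/inner
    obtain ⟨hpar, _⟩ := md_from_vals hk i j
    exact not_mmd_uv hk i j (by omega) hmmd
  · -- inner/outer
    obtain ⟨hpar, _⟩ := md_from_vals hk j i
    exact not_mmd_uv hk j i (by omega) (mmd_symm hmmd)
  · -- inner/inner
    have hne : i ≠ j := fun hc => hmmd.1 (by rw [hc])
    obtain ⟨hpar, _⟩ := md_from_vals hk i j
    have hpos : 0 < md (4*k) (j - i) :=
      (md_pos_iff hk _).mpr (sub_ne_zero.mpr (Ne.symm hne))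
    exact not_mmd_vv hk i j (by omega) (by omega) hmmd

lemma card_V (hk : 5 ≤ k) : Nat.card (ZMod (4*k) ⊕ ZMod (4*k)) = 8*k := by
  haveI : NeZero (4*k) := ⟨by omega⟩
  rw [Nat.card_sum, Nat.card_zmod]
  omega

lemma ncard_compl_IFin (hk : 5 ≤ k) :
    ((↑(IFin k) : Set (ZMod (4*k) ⊕ ZMod (4*k)))ᶜ).ncard = 5*k := by
  haveI : NeZero (4*k) := ⟨by omega⟩
  have htot := Set.ncard_add_ncard_compl (↑(IFin k) : Set (ZMod (4*k) ⊕ ZMod (4*k)))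
  rw [Set.ncard_coe_finset, card_IFin hk, card_V hk] at htot
  omega

/-- canonical representative of the clique of an outer index -/
def repOut (k a : ℕ) : ℕ :=
  if (if a < 2*k then a else a - 2*k) % 2 = 0 then (if a < 2*k then a else a - 2*k)
  else (if (if a < 2*k then a else a - 2*k) < 5 then (if a < 2*k then a else a - 2*k) + 2*k - 5
        else (if a < 2*k then a else a - 2*k) - 5)

/-- canonical representative of the clique of an inner index -/
def repIn (k a : ℕ) : ℕ :=
  if a % 2 = 0 then a else (if a + 2*k + 1 < 4*k then a + 2*k + 1 else a + 2*k + 1 - 4*k)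

def rep (k : ℕ) : ZMod (4*k) ⊕ ZMod (4*k) → ZMod (4*k) ⊕ ZMod (4*k)
  | .inl i => .inl ((repOut k i.val : ℕ) : ZMod (4*k))
  | .inr i => .inr ((repIn k i.val : ℕ) : ZMod (4*k))

lemma repOut_lt (hk : 5 ≤ k) {a : ℕ} (ha : a < 4*k) :
    repOut k a % 2 = 0 ∧ repOut k a < 2*k := by
  simp only [repOut]; split_ifs <;> omega

lemma repIn_lt (hk : 5 ≤ k) {a : ℕ} (ha : a < 4*k) :
    repIn k a % 2 = 0 ∧ repIn k a < 4*k := by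
  simp only [repIn]; split_ifs <;> omega

lemma rep_mem (hk : 5 ≤ k) (x : ZMod (4*k) ⊕ ZMod (4*k)) : rep k x ∈ IFin k := by
  haveI : NeZero (4*k) := ⟨by omega⟩
  rw [mem_IFin_iff hk]
  obtain (i | i) := x
  · left
    have hlt := ZMod.val_lt i
    obtain ⟨hp, hb⟩ := repOut_lt hk hlt
    have hval : ((repOut k i.val : ℕ) : ZMod (4*k)).val = repOut k i.val := by
      rw [ZMod.val_natCast, Nat.mod_eq_of_lt (by omega)]
    exact ⟨_, rfl, by rw [hval]; omega, by rw [hval]; omega⟩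
  · right
    have hlt := ZMod.val_lt i
    obtain ⟨hp, hb⟩ := repIn_lt hk hlt
    have hval : ((repIn k i.val : ℕ) : ZMod (4*k)).val = repIn k i.val := by
      rw [ZMod.val_natCast, Nat.mod_eq_of_lt (by omega)]
    exact ⟨_, rfl, by rw [hval]; omega⟩

set_option maxHeartbeats 4000000 in
lemma rep_mmd (hk : 5 ≤ k) (x y : ZMod (4*k) ⊕ ZMod (4*k)) (hne : x ≠ y)
    (heq : rep k x = rep k y) : MutuallyMaximallyDistant (GP (4*k) 2) x y := by
  haveI : NeZero (4*k) := ⟨by omega⟩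
  obtain (i | i) := x <;> obtain (j | j) := y
  · have hij : i ≠ j := fun hc => hne (by rw [hc])
    have hvne : i.val ≠ j.val := fun hc => hij (by
      rw [← ZMod.natCast_rightInverse i, ← ZMod.natCast_rightInverse j, hc])
    have h1 := ZMod.val_lt i
    have h2 := ZMod.val_lt j
    have hro : repOut k i.val = repOut k j.val := by
      have hcast : ((repOut k i.val : ℕ) : ZMod (4*k)) = ((repOut k j.val : ℕ) : ZMod (4*k)) := by
        simpa [rep] using heq
      have hv1 : ((repOut k i.val : ℕ) : ZMod (4*k)).val = repOut k i.val := by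
        rw [ZMod.val_natCast, Nat.mod_eq_of_lt (by have := (repOut_lt hk h1).2; omega)]
      have hv2 : ((repOut k j.val : ℕ) : ZMod (4*k)).val = repOut k j.val := by
        rw [ZMod.val_natCast, Nat.mod_eq_of_lt (by have := (repOut_lt hk h2).2; omega)]
      rw [← hv1, ← hv2, hcast]
    apply mmd_uu hk
    have h3 := ZMod.val_lt (j - i)
    have h4 := val_sub_rel hk i j
    simp only [md]
    simp only [repOut] at hro
    split_ifs at hro <;> omega
  · exact absurd heq (by simp [rep])
  · exact absurd heq (by simp [rep])
  · have hij : i ≠ j := fun hc => hne (by rw [hc])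
    have hvne : i.val ≠ j.val := fun hc => hij (by
      rw [← ZMod.natCast_rightInverse i, ← ZMod.natCast_rightInverse j, hc])
    have h1 := ZMod.val_lt i
    have h2 := ZMod.val_lt j
    have hro : repIn k i.val = repIn k j.val := by
      have hcast : ((repIn k i.val : ℕ) : ZMod (4*k)) = ((repIn k j.val : ℕ) : ZMod (4*k)) := by
        simpa [rep] using heq
      have hv1 : ((repIn k i.val : ℕ) : ZMod (4*k)).val = repIn k i.val := by
        rw [ZMod.val_natCast, Nat.mod_eq_of_lt (by have := (repIn_lt hk h1).2; omega)]
      have hv2 : ((repIn k j.val : ℕ) : ZMod (4*k)).val = repIn k j.val := by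
        rw [ZMod.val_natCast, Nat.mod_eq_of_lt (by have := (repIn_lt hk h2).2; omega)]
      rw [← hv1, ← hv2, hcast]
    apply mmd_vv hk
    have h3 := ZMod.val_lt (j - i)
    have h4 := val_sub_rel hk i j
    simp only [md]
    simp only [repIn] at hro
    split_ifs at hro <;> omega

lemma lower_bound (hk : 5 ≤ k) (S : Set (ZMod (4*k) ⊕ ZMod (4*k)))
    (hS : IsStrongResolvingSet (GP (4*k) 2) S) : 5*k ≤ S.ncard := by
  haveI : NeZero (4*k) := ⟨by omega⟩
  have hinj : Set.InjOn (rep k) Sᶜ := by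
    intro x hx y hy heq
    by_contra hne
    rcases mmd_necessary (gp_connected_s13 hk) hS (rep_mmd hk x y hne heq) with h | h
    · exact hx h
    · exact hy h
  have h1 : (rep k '' Sᶜ).ncard = Sᶜ.ncard := Set.ncard_image_of_injOn hinj
  have h2 : (rep k '' Sᶜ) ⊆ (↑(IFin k) : Set (ZMod (4*k) ⊕ ZMod (4*k))) := by
    rintro _ ⟨x, _, rfl⟩
    exact Finset.mem_coe.mpr (rep_mem hk x)
  have h3 : (rep k '' Sᶜ).ncard ≤ (↑(IFin k) : Set (ZMod (4*k) ⊕ ZMod (4*k))).ncard :=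
    Set.ncard_le_ncard h2 (Set.toFinite _)
  rw [Set.ncard_coe_finset, card_IFin hk] at h3
  have h5 := Set.ncard_add_ncard_compl S
  rw [card_V hk] at h5
  omega

end GPAux

/-- For `k ≥ 5`, `sdim (GP (4k) 2) = 5k`. -/

theorem stmt_13 (k : ℕ) (hk : 5 ≤ k) : sdim (GP (4*k) 2) = 5*k := by
  have hmem : 5*k ∈ {m : ℕ | ∃ S : Set (ZMod (4*k) ⊕ ZMod (4*k)),
      IsStrongResolvingSet (GP (4*k) 2) S ∧ S.ncard = m} :=
    ⟨_, GPAux.upper_srs hk, GPAux.ncard_compl_IFin hk⟩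
  refine le_antisymm (Nat.sInf_le hmem) (le_csInf ⟨_, hmem⟩ ?_)
  rintro m ⟨S, hS, rfl⟩
  exact GPAux.lower_bound hk S hS
end

section
/- For every k ≥ 3, the set S = {u_{2i+1} : 0 ≤ i ≤ k−1} ∪ {u_{2k+i} : 0 ≤ i ≤ 2k} ∪ {v_i : 0 ≤ i ≤ 2k+3} is a strong resolving set of the generalized Petersen graph GP(4k+1, 2). -/
namespace GPaux

open SimpleGraph Sum

instance (k : ℕ) : NeZero (4*k+1) := ⟨by omega⟩

variable {k : ℕ}

def fuu (l : ℕ) : ℕ := min l (l/2 + 2 + l % 2)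
def fuv (l : ℕ) : ℕ := l/2 + 1 + l % 2
def fvv (k l : ℕ) : ℕ := if l % 2 = 0 then l/2 else min (l/2 + 3) (2*k - l/2)

def cyc (k : ℕ) (d : ZMod (4*k+1)) : ℕ := min d.val (4*k+1 - d.val)

def potU (k : ℕ) (c : ZMod (4*k+1)) : ZMod (4*k+1) ⊕ ZMod (4*k+1) → ℕ
  | Sum.inl i => fuu (cyc k (i - c))
  | Sum.inr i => fuv (cyc k (i - c))

def potV (k : ℕ) (c : ZMod (4*k+1)) : ZMod (4*k+1) ⊕ ZMod (4*k+1) → ℕ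
  | Sum.inl i => fuv (cyc k (i - c))
  | Sum.inr i => fvv k (cyc k (i - c))

lemma adj_ll {i j : ZMod (4*k+1)} :
    (GP (4*k+1) 2).Adj (inl i) (inl j) ↔ (i ≠ j ∧ (j = i + 1 ∨ i = j + 1)) := Iff.rfl

lemma adj_lr {i j : ZMod (4*k+1)} : (GP (4*k+1) 2).Adj (inl i) (inr j) ↔ i = j := Iff.rfl

lemma adj_rl {i j : ZMod (4*k+1)} : (GP (4*k+1) 2).Adj (inr i) (inl j) ↔ i = j := Iff.rfl

lemma adj_rr {i j : ZMod (4*k+1)} :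
    (GP (4*k+1) 2).Adj (inr i) (inr j) ↔
      (i ≠ j ∧ (j = i + ((2:ℕ) : ZMod (4*k+1)) ∨ i = j + ((2:ℕ) : ZMod (4*k+1)))) := Iff.rfl

lemma self_ne_add (i : ZMod (4*k+1)) (s : ℕ) (h1 : 0 < s) (h2 : s < 4*k+1) :
    i ≠ i + (s : ZMod (4*k+1)) := by
  intro h
  nth_rewrite 1 [← add_zero i] at h
  have h3 := add_left_cancel h
  have h4 := congrArg ZMod.val h3
  rw [ZMod.val_zero, ZMod.val_cast_of_lt h2] at h4
  omega

lemma adjO (hk : 3 ≤ k) (i : ZMod (4*k+1)) :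
    (GP (4*k+1) 2).Adj (inl i) (inl (i + 1)) := by
  refine adj_ll.mpr ⟨?_, Or.inl rfl⟩
  have := self_ne_add i 1 (by omega) (by omega)
  rwa [Nat.cast_one] at this

lemma adjI (hk : 3 ≤ k) (i : ZMod (4*k+1)) :
    (GP (4*k+1) 2).Adj (inr i) (inr (i + ((2:ℕ) : ZMod (4*k+1)))) :=
  adj_rr.mpr ⟨self_ne_add i 2 (by omega) (by omega), Or.inl rfl⟩

lemma adjS (i : ZMod (4*k+1)) : (GP (4*k+1) 2).Adj (inl i) (inr i) := adj_lr.mpr rfl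

lemma reach_outer (hk : 3 ≤ k) (i : ZMod (4*k+1)) (m : ℕ) :
    (GP (4*k+1) 2).Reachable (inl i) (inl (i + (m : ZMod (4*k+1)))) := by
  induction m with
  | zero => rw [Nat.cast_zero, add_zero]
  | succ m ih =>
      have e : i + ((m+1 : ℕ) : ZMod (4*k+1)) = (i + (m : ZMod (4*k+1))) + 1 := by
        push_cast; ring
      rw [e]
      exact ih.trans (adjO hk _).reachable

lemma reach0l (hk : 3 ≤ k) (i : ZMod (4*k+1)) :
    (GP (4*k+1) 2).Reachable (inl 0) (inl i) := by
  have h := reach_outer hk 0 i.val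
  rwa [zero_add, ZMod.natCast_zmod_val] at h

lemma preconn (hk : 3 ≤ k) : (GP (4*k+1) 2).Preconnected := by
  have key : ∀ x, (GP (4*k+1) 2).Reachable (inl 0) x := by
    intro x
    cases x with
    | inl i => exact reach0l hk i
    | inr i => exact (reach0l hk i).trans (adjS i).reachable
  intro x y
  exact (key x).symm.trans (key y)

lemma conn (hk : 3 ≤ k) : (GP (4*k+1) 2).Connected :=
  have : Nonempty (ZMod (4*k+1) ⊕ ZMod (4*k+1)) := ⟨inl 0⟩
  ⟨preconn hk⟩

lemma dist_spoke (hk : 3 ≤ k) (i : ZMod (4*k+1)) :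
    (GP (4*k+1) 2).dist (inl i) (inr i) ≤ 1 :=
  (SimpleGraph.dist_eq_one_iff_adj.mpr (adjS i)).le

lemma dist_outer (hk : 3 ≤ k) (i : ZMod (4*k+1)) (m : ℕ) :
    (GP (4*k+1) 2).dist (inl i) (inl (i + (m : ZMod (4*k+1)))) ≤ m := by
  induction m with
  | zero => rw [Nat.cast_zero, add_zero, SimpleGraph.dist_self]
  | succ m ih =>
      have e : i + ((m+1 : ℕ) : ZMod (4*k+1)) = (i + (m : ZMod (4*k+1))) + 1 := by
        push_cast; ring
      have h1 : (GP (4*k+1) 2).dist (inl (i + (m : ZMod (4*k+1))))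
          (inl (i + ((m+1:ℕ) : ZMod (4*k+1)))) = 1 := by
        rw [e]; exact SimpleGraph.dist_eq_one_iff_adj.mpr (adjO hk _)
      have tri := (conn hk).dist_triangle (u := inl i) (v := inl (i + (m : ZMod (4*k+1))))
        (w := inl (i + ((m+1:ℕ) : ZMod (4*k+1))))
      omega

lemma dist_inner (hk : 3 ≤ k) (i : ZMod (4*k+1)) (m : ℕ) :
    (GP (4*k+1) 2).dist (inr i) (inr (i + ((2*m : ℕ) : ZMod (4*k+1)))) ≤ m := by
  induction m with
  | zero => rw [Nat.mul_zero, Nat.cast_zero, add_zero, SimpleGraph.dist_self]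
  | succ m ih =>
      have e : i + ((2*(m+1) : ℕ) : ZMod (4*k+1))
          = (i + ((2*m : ℕ) : ZMod (4*k+1))) + ((2:ℕ) : ZMod (4*k+1)) := by
        push_cast; ring
      have h1 : (GP (4*k+1) 2).dist (inr (i + ((2*m:ℕ) : ZMod (4*k+1))))
          (inr (i + ((2*(m+1):ℕ) : ZMod (4*k+1)))) = 1 := by
        rw [e]; exact SimpleGraph.dist_eq_one_iff_adj.mpr (adjI hk _)
      have tri := (conn hk).dist_triangle (u := inr i) (v := inr (i + ((2*m:ℕ) : ZMod (4*k+1))))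
        (w := inr (i + ((2*(m+1):ℕ) : ZMod (4*k+1))))
      omega


lemma val_step (hk : 3 ≤ k) (e : ZMod (4*k+1)) (s : ℕ) (hs2 : s < 4*k+1) :
    (e + (s : ZMod (4*k+1))).val = e.val + s ∨
      (e + (s : ZMod (4*k+1))).val + (4*k+1) = e.val + s := by
  rw [ZMod.val_add, ZMod.val_cast_of_lt hs2]
  have h := ZMod.val_lt e
  rcases Nat.lt_or_ge (e.val + s) (4*k+1) with h2 | h2
  · left; exact Nat.mod_eq_of_lt h2
  · right
    rw [Nat.mod_eq_sub_mod h2, Nat.mod_eq_of_lt (by omega)]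
    omega

lemma stepU1 (a b : ℕ) (ha : a < 4*k+1) (hb : b < 4*k+1)
    (hab : (b = a + 1 ∨ b + (4*k+1) = a + 1) ∨ (a = b + 1 ∨ a + (4*k+1) = b + 1)) :
    fuu (min b (4*k+1-b)) ≤ fuu (min a (4*k+1-a)) + 1 := by
  simp only [fuu]; omega

lemma stepU2 (a b : ℕ) (ha : a < 4*k+1) (hb : b < 4*k+1)
    (hab : (b = a + 2 ∨ b + (4*k+1) = a + 2) ∨ (a = b + 2 ∨ a + (4*k+1) = b + 2)) :
    fuv (min b (4*k+1-b)) ≤ fuv (min a (4*k+1-a)) + 1 := by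
  simp only [fuv]; omega

lemma stepV2 (hk : 3 ≤ k) (a b : ℕ) (ha : a < 4*k+1) (hb : b < 4*k+1)
    (hab : (b = a + 2 ∨ b + (4*k+1) = a + 2) ∨ (a = b + 2 ∨ a + (4*k+1) = b + 2)) :
    fvv k (min b (4*k+1-b)) ≤ fvv k (min a (4*k+1-a)) + 1 := by
  simp only [fvv]; split_ifs <;> omega

lemma lipU (hk : 3 ≤ k) (c : ZMod (4*k+1)) :
    ∀ x y, (GP (4*k+1) 2).Adj x y → potU k c x ≤ potU k c y + 1 := by
  have hval : ∀ d : ZMod (4*k+1), d.val < 4*k+1 := fun d => ZMod.val_lt d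
  rintro (i|i) (j|j) h
  · obtain ⟨-, h1 | h1⟩ := adj_ll.mp h
    · have e : j - c = (i - c) + ((1:ℕ) : ZMod (4*k+1)) := by
        rw [h1]; push_cast; ring
      have hv := val_step hk (i - c) 1 (by omega)
      rw [← e] at hv
      exact stepU1 ((j-c).val) ((i-c).val) (hval _) (hval _) (Or.inr (by omega))
    · have e : i - c = (j - c) + ((1:ℕ) : ZMod (4*k+1)) := by
        rw [h1]; push_cast; ring
      have hv := val_step hk (j - c) 1 (by omega)
      rw [← e] at hv
      exact stepU1 ((j-c).val) ((i-c).val) (hval _) (hval _) (Or.inl (by omega))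
  · cases adj_lr.mp h
    simp only [potU, fuu, fuv]; omega
  · cases adj_rl.mp h
    simp only [potU, fuu, fuv]; omega
  · obtain ⟨-, h1 | h1⟩ := adj_rr.mp h
    · have e : j - c = (i - c) + ((2:ℕ) : ZMod (4*k+1)) := by
        rw [h1]; push_cast; ring
      have hv := val_step hk (i - c) 2 (by omega)
      rw [← e] at hv
      exact stepU2 ((j-c).val) ((i-c).val) (hval _) (hval _) (Or.inr (by omega))
    · have e : i - c = (j - c) + ((2:ℕ) : ZMod (4*k+1)) := by
        rw [h1]; push_cast; ring
      have hv := val_step hk (j - c) 2 (by omega)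
      rw [← e] at hv
      exact stepU2 ((j-c).val) ((i-c).val) (hval _) (hval _) (Or.inl (by omega))

lemma lipV (hk : 3 ≤ k) (c : ZMod (4*k+1)) :
    ∀ x y, (GP (4*k+1) 2).Adj x y → potV k c x ≤ potV k c y + 1 := by
  have hval : ∀ d : ZMod (4*k+1), d.val < 4*k+1 := fun d => ZMod.val_lt d
  rintro (i|i) (j|j) h
  · obtain ⟨-, h1 | h1⟩ := adj_ll.mp h
    · have e : j - c = (i - c) + ((1:ℕ) : ZMod (4*k+1)) := by
        rw [h1]; push_cast; ring
      have hv := val_step hk (i - c) 1 (by omega)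
      rw [← e] at hv
      have ha := hval (i - c); have hb := hval (j - c)
      simp only [potV, cyc, fuv]; omega
    · have e : i - c = (j - c) + ((1:ℕ) : ZMod (4*k+1)) := by
        rw [h1]; push_cast; ring
      have hv := val_step hk (j - c) 1 (by omega)
      rw [← e] at hv
      have ha := hval (i - c); have hb := hval (j - c)
      simp only [potV, cyc, fuv]; omega
  · cases adj_lr.mp h
    have hv := hval (i - c)
    simp only [potV, fuv, fvv]
    have hm : cyc k (i - c) ≤ 2 * k := by simp only [cyc]; omega
    split_ifs <;> omega
  · cases adj_rl.mp h
    have hv := hval (i - c)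
    simp only [potV, fuv, fvv]
    have hm : cyc k (i - c) ≤ 2 * k := by simp only [cyc]; omega
    split_ifs <;> omega
  · obtain ⟨-, h1 | h1⟩ := adj_rr.mp h
    · have e : j - c = (i - c) + ((2:ℕ) : ZMod (4*k+1)) := by
        rw [h1]; push_cast; ring
      have hv := val_step hk (i - c) 2 (by omega)
      rw [← e] at hv
      simp only [potV, cyc]
      exact stepV2 hk ((j-c).val) ((i-c).val) (hval _) (hval _) (Or.inr (by omega))
    · have e : i - c = (j - c) + ((2:ℕ) : ZMod (4*k+1)) := by
        rw [h1]; push_cast; ring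
      have hv := val_step hk (j - c) 2 (by omega)
      rw [← e] at hv
      simp only [potV, cyc]
      exact stepV2 hk ((j-c).val) ((i-c).val) (hval _) (hval _) (Or.inl (by omega))

lemma pot_walk {V : Type*} {G : SimpleGraph V} {pot : V → ℕ}
    (hlip : ∀ x y, G.Adj x y → pot x ≤ pot y + 1) {x y : V} (p : G.Walk x y) :
    pot x ≤ pot y + p.length := by
  induction p with
  | nil => simp
  | cons h q ih =>
      have := hlip _ _ h
      rw [SimpleGraph.Walk.length_cons]
      omega

lemma pot_dist {V : Type*} {G : SimpleGraph V} {pot : V → ℕ}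
    (hlip : ∀ x y, G.Adj x y → pot x ≤ pot y + 1) {x y : V} (hr : G.Reachable x y) :
    pot x ≤ pot y + G.dist x y := by
  obtain ⟨p, hp⟩ := hr.exists_walk_length_eq_dist
  rw [← hp]
  exact pot_walk hlip p

lemma lowerU (hk : 3 ≤ k) (c : ℕ) (x : ZMod (4*k+1) ⊕ ZMod (4*k+1)) :
    potU k ((c:ℕ) : ZMod (4*k+1)) x ≤ (GP (4*k+1) 2).dist (inl ((c:ℕ) : ZMod (4*k+1))) x := by
  have h := pot_dist (lipU hk ((c:ℕ) : ZMod (4*k+1)))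
    (preconn hk x (inl ((c:ℕ) : ZMod (4*k+1))))
  have h0 : potU k ((c:ℕ) : ZMod (4*k+1)) (inl ((c:ℕ) : ZMod (4*k+1))) = 0 := by
    simp [potU, cyc, fuu, sub_self, ZMod.val_zero]
  rw [h0] at h
  rw [SimpleGraph.dist_comm]
  omega

lemma lowerV (hk : 3 ≤ k) (c : ℕ) (x : ZMod (4*k+1) ⊕ ZMod (4*k+1)) :
    potV k ((c:ℕ) : ZMod (4*k+1)) x ≤ (GP (4*k+1) 2).dist (inr ((c:ℕ) : ZMod (4*k+1))) x := by
  have h := pot_dist (lipV hk ((c:ℕ) : ZMod (4*k+1)))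
    (preconn hk x (inr ((c:ℕ) : ZMod (4*k+1))))
  have h0 : potV k ((c:ℕ) : ZMod (4*k+1)) (inr ((c:ℕ) : ZMod (4*k+1))) = 0 := by
    simp [potV, cyc, fvv, sub_self, ZMod.val_zero]
  rw [h0] at h
  rw [SimpleGraph.dist_comm]
  omega

def Sset (k : ℕ) : Set (ZMod (4*k+1) ⊕ ZMod (4*k+1)) :=
  {x | ∃ i : ℕ, i ≤ k - 1 ∧ x = Sum.inl ((2*i + 1 : ℕ) : ZMod (4*k+1))} ∪
  {x | ∃ i : ℕ, i ≤ 2*k ∧ x = Sum.inl ((2*k + i : ℕ) : ZMod (4*k+1))} ∪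
  {x | ∃ i : ℕ, i ≤ 2*k + 3 ∧ x = Sum.inr ((i : ℕ) : ZMod (4*k+1))}

lemma memO (hk : 3 ≤ k) (m : ℕ) (hm : (m % 2 = 1 ∧ m ≤ 2*k-1) ∨ (2*k ≤ m ∧ m ≤ 4*k)) :
    (inl ((m : ℕ) : ZMod (4*k+1)) : ZMod (4*k+1) ⊕ ZMod (4*k+1)) ∈ Sset k := by
  rcases hm with ⟨h1, h2⟩ | ⟨h1, h2⟩
  · exact Or.inl (Or.inl ⟨(m-1)/2, by omega, by rw [show 2*((m-1)/2) + 1 = m by omega]⟩)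
  · exact Or.inl (Or.inr ⟨m - 2*k, by omega, by rw [show 2*k + (m - 2*k) = m by omega]⟩)

lemma memI (m : ℕ) (hm : m ≤ 2*k+3) :
    (inr ((m:ℕ) : ZMod (4*k+1)) : ZMod (4*k+1) ⊕ ZMod (4*k+1)) ∈ Sset k :=
  Or.inr ⟨m, hm, rfl⟩

lemma ccast (a b : ℕ) (h : a = b ∨ a = b + (4*k+1)) :
    ((a:ℕ) : ZMod (4*k+1)) = ((b:ℕ) : ZMod (4*k+1)) := by
  rcases h with h | h <;> subst h
  · rfl
  · rw [Nat.cast_add, ZMod.natCast_self, add_zero]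

lemma zsub (p q : ℕ) (hq : q ≤ 4*k+1) :
    ((p:ℕ) : ZMod (4*k+1)) - ((q:ℕ) : ZMod (4*k+1)) = ((p + (4*k+1) - q : ℕ) : ZMod (4*k+1)) := by
  rw [sub_eq_iff_eq_add, ← Nat.cast_add, show p + (4*k+1) - q + q = p + (4*k+1) by omega,
    Nat.cast_add, ZMod.natCast_self, add_zero]

lemma cyc_sub (c p D : ℕ) (hc : c ≤ 4*k+1) (hD : D < 4*k+1)
    (hrel : p + (4*k+1) - c = D ∨ p + (4*k+1) - c = D + (4*k+1)) :
    cyc k (((p:ℕ) : ZMod (4*k+1)) - ((c:ℕ) : ZMod (4*k+1))) = min D (4*k+1 - D) := by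
  rw [zsub p c hc, ccast _ D hrel, cyc, ZMod.val_cast_of_lt hD]

lemma combine (hk : 3 ≤ k) {w x y : ZMod (4*k+1) ⊕ ZMod (4*k+1)} {A B : ℕ}
    (h1 : (GP (4*k+1) 2).dist w y ≤ A) (h2 : (GP (4*k+1) 2).dist y x ≤ B)
    (h4 : A + B ≤ (GP (4*k+1) 2).dist w x) :
    (GP (4*k+1) 2).dist w x = (GP (4*k+1) 2).dist w y + (GP (4*k+1) 2).dist y x := by
  have tri := (conn hk).dist_triangle (u := w) (v := y) (w := x)
  omega

lemma distO (hk : 3 ≤ k) (a m : ℕ) :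
    (GP (4*k+1) 2).dist (inl ((a:ℕ) : ZMod (4*k+1))) (inl ((a+m : ℕ) : ZMod (4*k+1))) ≤ m := by
  have e : ((a+m:ℕ) : ZMod (4*k+1)) = ((a:ℕ) : ZMod (4*k+1)) + ((m:ℕ) : ZMod (4*k+1)) := by
    push_cast; ring
  rw [e]; exact dist_outer hk _ m

lemma distI (hk : 3 ≤ k) (a m : ℕ) :
    (GP (4*k+1) 2).dist (inr ((a:ℕ) : ZMod (4*k+1))) (inr ((a+2*m : ℕ) : ZMod (4*k+1))) ≤ m := by
  have e : ((a+2*m:ℕ) : ZMod (4*k+1)) = ((a:ℕ) : ZMod (4*k+1)) + ((2*m:ℕ) : ZMod (4*k+1)) := by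
    push_cast; ring
  rw [e]; exact dist_inner hk _ m

lemma distS' (hk : 3 ≤ k) (a : ℕ) :
    (GP (4*k+1) 2).dist (inl ((a:ℕ) : ZMod (4*k+1))) (inr ((a:ℕ) : ZMod (4*k+1))) ≤ 1 :=
  dist_spoke hk _

lemma caseUU (hk : 3 ≤ k) (p q : ℕ) (hp2 : p % 2 = 0) (hq2 : q % 2 = 0)
    (hpb : p ≤ 2*k - 2) (hqb : q ≤ 2*k - 2) (hlt : p < q) :
    ∃ w ∈ Sset k, StronglyResolves (GP (4*k+1) 2) w
      (inl ((p:ℕ) : ZMod (4*k+1))) (inl ((q:ℕ) : ZMod (4*k+1))) := by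
  obtain ⟨t, ht, ht1, ht2⟩ : ∃ t, q = p + 2*t ∧ 1 ≤ t ∧ t ≤ k-1 :=
    ⟨(q-p)/2, by omega, by omega, by omega⟩
  refine ⟨inl ((q+1 : ℕ) : ZMod (4*k+1)), memO hk (q+1) (by omega), Or.inl ?_⟩
  have h1 : (GP (4*k+1) 2).dist (inl ((q+1:ℕ) : ZMod (4*k+1))) (inl ((q:ℕ) : ZMod (4*k+1))) ≤ 1 := by
    rw [SimpleGraph.dist_comm]; exact distO hk q 1
  have h2 : (GP (4*k+1) 2).dist (inl ((q:ℕ) : ZMod (4*k+1))) (inl ((p:ℕ) : ZMod (4*k+1)))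
      ≤ min (2*t) (t+2) := by
    rcases le_or_gt t 2 with h | h
    · have hO := distO hk p (2*t)
      rw [show p + 2*t = q from ht.symm, SimpleGraph.dist_comm] at hO
      omega
    · have d1 := distS' hk q
      have d2 := distI hk p t
      rw [show p + 2*t = q from ht.symm, SimpleGraph.dist_comm] at d2
      have d3 := distS' hk p
      rw [SimpleGraph.dist_comm] at d3
      have tri1 := (conn hk).dist_triangle (u := inl ((q:ℕ) : ZMod (4*k+1)))
        (v := inr ((q:ℕ) : ZMod (4*k+1))) (w := inl ((p:ℕ) : ZMod (4*k+1)))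
      have tri2 := (conn hk).dist_triangle (u := inr ((q:ℕ) : ZMod (4*k+1)))
        (v := inr ((p:ℕ) : ZMod (4*k+1))) (w := inl ((p:ℕ) : ZMod (4*k+1)))
      omega
  have h4 := lowerU hk (q+1) (inl ((p:ℕ) : ZMod (4*k+1)))
  simp only [potU] at h4
  rw [cyc_sub (q+1) p (4*k - 2*t) (by omega) (by omega) (Or.inl (by omega))] at h4
  exact combine hk h1 h2 (le_trans (by simp only [fuu]; omega) h4)

lemma caseUV (hk : 3 ≤ k) (p q : ℕ) (hp2 : p % 2 = 0) (hpb : p ≤ 2*k - 2)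
    (hq1 : 2*k+4 ≤ q) (hqb : q ≤ 4*k) :
    ∃ w ∈ Sset k, StronglyResolves (GP (4*k+1) 2) w
      (inl ((p:ℕ) : ZMod (4*k+1))) (inr ((q:ℕ) : ZMod (4*k+1))) := by
  rcases le_or_gt (q-p) (2*k) with hd | hd
  · -- ℓ = q-p ∈ [6,2k], w = u_q
    refine ⟨inl ((q:ℕ) : ZMod (4*k+1)), memO hk q (by omega), Or.inl ?_⟩
    have h1 := distS' hk q
    have h2 : (GP (4*k+1) 2).dist (inr ((q:ℕ) : ZMod (4*k+1))) (inl ((p:ℕ) : ZMod (4*k+1)))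
        ≤ (q-p)/2 + 1 + (q-p) % 2 := by
      rcases Nat.even_or_odd (q-p) with ⟨t, ht⟩ | ⟨t, ht⟩
      · have d2 := distI hk p t
        rw [show p + 2*t = q by omega, SimpleGraph.dist_comm] at d2
        have d3 := distS' hk p
        rw [SimpleGraph.dist_comm] at d3
        have tri1 := (conn hk).dist_triangle (u := inr ((q:ℕ) : ZMod (4*k+1)))
          (v := inr ((p:ℕ) : ZMod (4*k+1))) (w := inl ((p:ℕ) : ZMod (4*k+1)))
        omega
      · have d2 := distI hk (p+1) t
        rw [show p + 1 + 2*t = q by omega, SimpleGraph.dist_comm] at d2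
        have d3 := distS' hk (p+1)
        rw [SimpleGraph.dist_comm] at d3
        have d4 := distO hk p 1
        rw [SimpleGraph.dist_comm] at d4
        have tri1 := (conn hk).dist_triangle (u := inr ((q:ℕ) : ZMod (4*k+1)))
          (v := inr ((p+1:ℕ) : ZMod (4*k+1))) (w := inl ((p:ℕ) : ZMod (4*k+1)))
        have tri2 := (conn hk).dist_triangle (u := inr ((p+1:ℕ) : ZMod (4*k+1)))
          (v := inl ((p+1:ℕ) : ZMod (4*k+1))) (w := inl ((p:ℕ) : ZMod (4*k+1)))
        omega
    have h4 := lowerU hk q (inl ((p:ℕ) : ZMod (4*k+1)))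
    simp only [potU] at h4
    rw [cyc_sub q p (4*k+1 - (q-p)) (by omega) (by omega) (Or.inl (by omega))] at h4
    exact combine hk h1 h2 (le_trans (by simp only [fuu]; omega) h4)
  · by_cases hl4 : 4 ≤ 4*k+1 - (q-p)
    · -- ℓ = 4k+1-(q-p) ∈ [4,2k], w = u_q
      refine ⟨inl ((q:ℕ) : ZMod (4*k+1)), memO hk q (by omega), Or.inl ?_⟩
      have h1 := distS' hk q
      have h2 : (GP (4*k+1) 2).dist (inr ((q:ℕ) : ZMod (4*k+1))) (inl ((p:ℕ) : ZMod (4*k+1)))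
          ≤ (4*k+1-(q-p))/2 + 1 + (4*k+1-(q-p)) % 2 := by
        rcases Nat.even_or_odd (4*k+1-(q-p)) with ⟨t, ht⟩ | ⟨t, ht⟩
        · have d2 := distI hk q t
          rw [ccast (q+2*t) p (Or.inr (by omega))] at d2
          have d3 := distS' hk p
          rw [SimpleGraph.dist_comm] at d3
          have tri1 := (conn hk).dist_triangle (u := inr ((q:ℕ) : ZMod (4*k+1)))
            (v := inr ((p:ℕ) : ZMod (4*k+1))) (w := inl ((p:ℕ) : ZMod (4*k+1)))
          omega
        · have d2 := distI hk q t
          have d3 := distS' hk (q+2*t)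
          rw [SimpleGraph.dist_comm] at d3
          have d4 := distO hk (q+2*t) 1
          rw [ccast (q+2*t+1) p (Or.inr (by omega))] at d4
          have tri1 := (conn hk).dist_triangle (u := inr ((q:ℕ) : ZMod (4*k+1)))
            (v := inr ((q+2*t:ℕ) : ZMod (4*k+1))) (w := inl ((p:ℕ) : ZMod (4*k+1)))
          have tri2 := (conn hk).dist_triangle (u := inr ((q+2*t:ℕ) : ZMod (4*k+1)))
            (v := inl ((q+2*t:ℕ) : ZMod (4*k+1))) (w := inl ((p:ℕ) : ZMod (4*k+1)))
          omega
      have h4 := lowerU hk q (inl ((p:ℕ) : ZMod (4*k+1)))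
      simp only [potU] at h4
      rw [cyc_sub q p (4*k+1 - (q-p)) (by omega) (by omega) (Or.inl (by omega))] at h4
      exact combine hk h1 h2 (le_trans (by simp only [fuu]; omega) h4)
    · by_cases hl2 : 4*k+1 - (q-p) = 2
      · -- w = u_{p+1}, x between
        refine ⟨inl ((p+1:ℕ) : ZMod (4*k+1)), memO hk (p+1) (by omega), Or.inr ?_⟩
        have h1 : (GP (4*k+1) 2).dist (inl ((p+1:ℕ) : ZMod (4*k+1)))
            (inl ((p:ℕ) : ZMod (4*k+1))) ≤ 1 := by
          rw [SimpleGraph.dist_comm]; exact distO hk p 1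
        have h2 : (GP (4*k+1) 2).dist (inl ((p:ℕ) : ZMod (4*k+1)))
            (inr ((q:ℕ) : ZMod (4*k+1))) ≤ 2 := by
          have d1 := distS' hk p
          have d2 := distI hk q 1
          rw [ccast (q+2*1) p (Or.inr (by omega)), SimpleGraph.dist_comm] at d2
          have tri1 := (conn hk).dist_triangle (u := inl ((p:ℕ) : ZMod (4*k+1)))
            (v := inr ((p:ℕ) : ZMod (4*k+1))) (w := inr ((q:ℕ) : ZMod (4*k+1)))
          omega
        have h4 := lowerU hk (p+1) (inr ((q:ℕ) : ZMod (4*k+1)))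
        simp only [potU] at h4
        rw [cyc_sub (p+1) q (4*k-2) (by omega) (by omega) (Or.inr (by omega))] at h4
        exact combine hk h1 h2 (le_trans (by simp only [fuv]; omega) h4)
      · -- ℓ = 1 or 3, w = v_p, x between
        refine ⟨inr ((p:ℕ) : ZMod (4*k+1)), memI p (by omega), Or.inr ?_⟩
        have h1 : (GP (4*k+1) 2).dist (inr ((p:ℕ) : ZMod (4*k+1)))
            (inl ((p:ℕ) : ZMod (4*k+1))) ≤ 1 := by
          rw [SimpleGraph.dist_comm]; exact distS' hk p
        have h4 := lowerV hk p (inr ((q:ℕ) : ZMod (4*k+1)))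
        simp only [potV] at h4
        rw [cyc_sub p q (q-p) (by omega) (by omega) (Or.inr (by omega))] at h4
        by_cases hl1 : 4*k+1 - (q-p) = 1
        · have h2 : (GP (4*k+1) 2).dist (inl ((p:ℕ) : ZMod (4*k+1)))
              (inr ((q:ℕ) : ZMod (4*k+1))) ≤ 2 := by
            have d1 := distO hk q 1
            rw [ccast (q+1) p (Or.inr (by omega)), SimpleGraph.dist_comm] at d1
            have d2 := distS' hk q
            have tri1 := (conn hk).dist_triangle (u := inl ((p:ℕ) : ZMod (4*k+1)))
              (v := inl ((q:ℕ) : ZMod (4*k+1))) (w := inr ((q:ℕ) : ZMod (4*k+1)))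
            omega
          exact combine hk h1 h2 (le_trans (by simp only [fvv]; split_ifs <;> omega) h4)
        · -- ℓ = 3
          have h2 : (GP (4*k+1) 2).dist (inl ((p:ℕ) : ZMod (4*k+1)))
              (inr ((q:ℕ) : ZMod (4*k+1))) ≤ 3 := by
            have d1 := distO hk (q+2) 1
            rw [ccast (q+2+1) p (Or.inr (by omega)), SimpleGraph.dist_comm] at d1
            have d2 := distS' hk (q+2)
            have d3 := distI hk q 1
            rw [show q+2*1 = q+2 by omega, SimpleGraph.dist_comm] at d3
            have tri1 := (conn hk).dist_triangle (u := inl ((p:ℕ) : ZMod (4*k+1)))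
              (v := inl ((q+2:ℕ) : ZMod (4*k+1))) (w := inr ((q:ℕ) : ZMod (4*k+1)))
            have tri2 := (conn hk).dist_triangle (u := inl ((q+2:ℕ) : ZMod (4*k+1)))
              (v := inr ((q+2:ℕ) : ZMod (4*k+1))) (w := inr ((q:ℕ) : ZMod (4*k+1)))
            omega
          exact combine hk h1 h2 (le_trans (by simp only [fvv]; split_ifs <;> omega) h4)

lemma caseVV (hk : 3 ≤ k) (p q : ℕ) (hp1 : 2*k+4 ≤ p) (hpb : p ≤ 4*k)
    (hq1 : 2*k+4 ≤ q) (hqb : q ≤ 4*k) (hlt : p < q) :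
    ∃ w ∈ Sset k, StronglyResolves (GP (4*k+1) 2) w
      (inr ((p:ℕ) : ZMod (4*k+1))) (inr ((q:ℕ) : ZMod (4*k+1))) := by
  rcases Nat.even_or_odd (q-p) with ⟨t, ht⟩ | ⟨t, ht⟩
  · -- even distance, w = u_q
    refine ⟨inl ((q:ℕ) : ZMod (4*k+1)), memO hk q (by omega), Or.inl ?_⟩
    have h1 := distS' hk q
    have h2 : (GP (4*k+1) 2).dist (inr ((q:ℕ) : ZMod (4*k+1)))
        (inr ((p:ℕ) : ZMod (4*k+1))) ≤ t := by
      have d2 := distI hk p t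
      rw [show p + 2*t = q by omega, SimpleGraph.dist_comm] at d2
      exact d2
    have h4 := lowerU hk q (inr ((p:ℕ) : ZMod (4*k+1)))
    simp only [potU] at h4
    rw [cyc_sub q p (4*k+1 - 2*t) (by omega) (by omega) (Or.inl (by omega))] at h4
    exact combine hk h1 h2 (le_trans (by simp only [fuv]; omega) h4)
  · -- odd distance, w = v_r with r ∈ {0,1}
    obtain ⟨r, m, hr, hqm⟩ : ∃ r m, r ≤ 1 ∧ q + 2*m = 4*k+1 + r :=
      ⟨(4*k+1-q) % 2, ((4*k+1) + (4*k+1-q) % 2 - q)/2, by omega, by omega⟩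
    refine ⟨inr ((r:ℕ) : ZMod (4*k+1)), memI r (by omega), Or.inl ?_⟩
    have h1 : (GP (4*k+1) 2).dist (inr ((r:ℕ) : ZMod (4*k+1)))
        (inr ((q:ℕ) : ZMod (4*k+1))) ≤ m := by
      have d := distI hk q m
      rw [ccast (q+2*m) r (Or.inr (by omega)), SimpleGraph.dist_comm] at d
      exact d
    have h2 : (GP (4*k+1) 2).dist (inr ((q:ℕ) : ZMod (4*k+1)))
        (inr ((p:ℕ) : ZMod (4*k+1))) ≤ t + 3 := by
      have d1 := distS' hk p
      have d2 := distO hk p 1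
      rw [SimpleGraph.dist_comm] at d2
      have d3 := distS' hk (p+1)
      rw [SimpleGraph.dist_comm] at d3
      have d4 := distI hk (p+1) t
      rw [show p + 1 + 2*t = q by omega, SimpleGraph.dist_comm] at d4
      have tri1 := (conn hk).dist_triangle (u := inr ((q:ℕ) : ZMod (4*k+1)))
        (v := inr ((p+1:ℕ) : ZMod (4*k+1))) (w := inr ((p:ℕ) : ZMod (4*k+1)))
      have tri2 := (conn hk).dist_triangle (u := inr ((p+1:ℕ) : ZMod (4*k+1)))
        (v := inl ((p+1:ℕ) : ZMod (4*k+1))) (w := inr ((p:ℕ) : ZMod (4*k+1)))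
      have tri3 := (conn hk).dist_triangle (u := inl ((p+1:ℕ) : ZMod (4*k+1)))
        (v := inl ((p:ℕ) : ZMod (4*k+1))) (w := inr ((p:ℕ) : ZMod (4*k+1)))
      omega
    have h4 := lowerV hk r (inr ((p:ℕ) : ZMod (4*k+1)))
    simp only [potV] at h4
    rw [cyc_sub r p (p - r) (by omega) (by omega) (Or.inr (by omega))] at h4
    exact combine hk h1 h2 (le_trans (by simp only [fvv]; split_ifs <;> omega) h4)

lemma sr_symm {V : Type*} {G : SimpleGraph V} {w u v : V}
    (h : StronglyResolves G w u v) : StronglyResolves G w v u := Or.symm h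

lemma notmem_inl (hk : 3 ≤ k) {i : ZMod (4*k+1)}
    (h : (inl i : ZMod (4*k+1) ⊕ ZMod (4*k+1)) ∉ Sset k) :
    i.val % 2 = 0 ∧ i.val ≤ 2*k - 2 := by
  have hv := ZMod.val_lt i
  by_contra hc
  apply h
  have e : (inl i : ZMod (4*k+1) ⊕ ZMod (4*k+1)) = inl ((i.val : ℕ) : ZMod (4*k+1)) := by
    rw [ZMod.natCast_zmod_val]
  rw [e]
  exact memO hk i.val (by omega)

lemma notmem_inr {i : ZMod (4*k+1)}
    (h : (inr i : ZMod (4*k+1) ⊕ ZMod (4*k+1)) ∉ Sset k) :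
    2*k+4 ≤ i.val := by
  have hv := ZMod.val_lt i
  by_contra hc
  apply h
  have e : (inr i : ZMod (4*k+1) ⊕ ZMod (4*k+1)) = inr ((i.val : ℕ) : ZMod (4*k+1)) := by
    rw [ZMod.natCast_zmod_val]
  rw [e]
  exact memI i.val (by omega)

end GPaux

/-- For `k ≥ 3`, `S = {u_{2i+1} : 0 ≤ i ≤ k−1} ∪ {u_{2k+i} : 0 ≤ i ≤ 2k} ∪
{vᵢ : 0 ≤ i ≤ 2k+3}` is a strong resolving set of `GP (4k+1) 2`. -/
theorem stmt_14 (k : ℕ) (hk : 3 ≤ k) :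
    IsStrongResolvingSet (GP (4*k+1) 2)
      ({x | ∃ i : ℕ, i ≤ k - 1 ∧ x = Sum.inl ((2*i + 1 : ℕ) : ZMod (4*k+1))} ∪
       {x | ∃ i : ℕ, i ≤ 2*k ∧ x = Sum.inl ((2*k + i : ℕ) : ZMod (4*k+1))} ∪
       {x | ∃ i : ℕ, i ≤ 2*k + 3 ∧ x = Sum.inr ((i : ℕ) : ZMod (4*k+1))}) := by
  intro x y hxy
  by_cases hx : x ∈ GPaux.Sset k
  · exact ⟨x, hx, Or.inr (by rw [SimpleGraph.dist_self]; omega)⟩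
  by_cases hy : y ∈ GPaux.Sset k
  · exact ⟨y, hy, Or.inl (by rw [SimpleGraph.dist_self]; omega)⟩
  rcases x with i | i <;> rcases y with j | j
  · obtain ⟨hi1, hi2⟩ := GPaux.notmem_inl hk hx
    obtain ⟨hj1, hj2⟩ := GPaux.notmem_inl hk hy
    have hvne : i.val ≠ j.val := fun hv => hxy (by
      rw [← ZMod.natCast_zmod_val i, ← ZMod.natCast_zmod_val j, hv])
    have ei : (Sum.inl i : ZMod (4*k+1) ⊕ ZMod (4*k+1))
        = Sum.inl ((i.val : ℕ) : ZMod (4*k+1)) := by rw [ZMod.natCast_zmod_val]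
    have ej : (Sum.inl j : ZMod (4*k+1) ⊕ ZMod (4*k+1))
        = Sum.inl ((j.val : ℕ) : ZMod (4*k+1)) := by rw [ZMod.natCast_zmod_val]
    rcases Nat.lt_or_ge i.val j.val with hlt | hge
    · obtain ⟨w, hw, hs⟩ := GPaux.caseUU hk i.val j.val hi1 hj1 hi2 hj2 hlt
      exact ⟨w, hw, by rw [ei, ej]; exact hs⟩
    · obtain ⟨w, hw, hs⟩ := GPaux.caseUU hk j.val i.val hj1 hi1 hj2 hi2 (by omega)
      exact ⟨w, hw, by rw [ei, ej]; exact GPaux.sr_symm hs⟩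
  · obtain ⟨hi1, hi2⟩ := GPaux.notmem_inl hk hx
    have hj1 := GPaux.notmem_inr hy
    have hjv := ZMod.val_lt j
    have ei : (Sum.inl i : ZMod (4*k+1) ⊕ ZMod (4*k+1))
        = Sum.inl ((i.val : ℕ) : ZMod (4*k+1)) := by rw [ZMod.natCast_zmod_val]
    have ej : (Sum.inr j : ZMod (4*k+1) ⊕ ZMod (4*k+1))
        = Sum.inr ((j.val : ℕ) : ZMod (4*k+1)) := by rw [ZMod.natCast_zmod_val]
    obtain ⟨w, hw, hs⟩ := GPaux.caseUV hk i.val j.val hi1 hi2 hj1 (by omega)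
    exact ⟨w, hw, by rw [ei, ej]; exact hs⟩
  · have hi1 := GPaux.notmem_inr hx
    obtain ⟨hj1, hj2⟩ := GPaux.notmem_inl hk hy
    have hiv := ZMod.val_lt i
    have ei : (Sum.inr i : ZMod (4*k+1) ⊕ ZMod (4*k+1))
        = Sum.inr ((i.val : ℕ) : ZMod (4*k+1)) := by rw [ZMod.natCast_zmod_val]
    have ej : (Sum.inl j : ZMod (4*k+1) ⊕ ZMod (4*k+1))
        = Sum.inl ((j.val : ℕ) : ZMod (4*k+1)) := by rw [ZMod.natCast_zmod_val]
    obtain ⟨w, hw, hs⟩ := GPaux.caseUV hk j.val i.val hj1 hj2 hi1 (by omega)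
    exact ⟨w, hw, by rw [ei, ej]; exact GPaux.sr_symm hs⟩
  · have hi1 := GPaux.notmem_inr hx
    have hj1 := GPaux.notmem_inr hy
    have hiv := ZMod.val_lt i
    have hjv := ZMod.val_lt j
    have hvne : i.val ≠ j.val := fun hv => hxy (by
      rw [← ZMod.natCast_zmod_val i, ← ZMod.natCast_zmod_val j, hv])
    have ei : (Sum.inr i : ZMod (4*k+1) ⊕ ZMod (4*k+1))
        = Sum.inr ((i.val : ℕ) : ZMod (4*k+1)) := by rw [ZMod.natCast_zmod_val]
    have ej : (Sum.inr j : ZMod (4*k+1) ⊕ ZMod (4*k+1))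
        = Sum.inr ((j.val : ℕ) : ZMod (4*k+1)) := by rw [ZMod.natCast_zmod_val]
    rcases Nat.lt_or_ge i.val j.val with hlt | hge
    · obtain ⟨w, hw, hs⟩ := GPaux.caseVV hk i.val j.val hi1 (by omega) hj1 (by omega) hlt
      exact ⟨w, hw, by rw [ei, ej]; exact hs⟩
    · obtain ⟨w, hw, hs⟩ := GPaux.caseVV hk j.val i.val hj1 (by omega) hi1 (by omega) (by omega)
      exact ⟨w, hw, by rw [ei, ej]; exact GPaux.sr_symm hs⟩
end
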